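/- arXiv:0801.1855 — 8 statements merged into one kernel-verified Lean document; each statement's English description precedes it below -/
import Mathlib

section
/- Let h : [0,∞) → [0,∞) be continuous, increasing, with h(0)=0, and define h̃(r) = r^d · inf_{0<t≤r} h(t)/t^d. Then for every set G ⊆ ℝ^d one has M_{h̃}(G) ≤ M_h(G) ≤ C_d · M_{h̃}(G), where M_g denotes the Hausdorff content with gauge g (infimum of Σ g(r_j) over countable coverings of G by balls of radii r_j) and C_d depends only on d. -/
open MeasureTheory Set

/-- Hausdorff content with gauge `g`: infimum of `∑ g(r_j)` over countable
coverings of `G` by balls of radii `r_j`. -/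
noncomputable def hContent (d : ℕ) (g : ℝ → ℝ) (G : Set (EuclideanSpace ℝ (Fin d))) : ENNReal :=
  ⨅ (c : ℕ → EuclideanSpace ℝ (Fin d)) (r : ℕ → ℝ)
    (_ : G ⊆ ⋃ n, Metric.ball (c n) (r n)), ∑' n, ENNReal.ofReal (g (r n))

/-- `h̃(r) = r^d · inf_{0 < t ≤ r} h(t)/t^d`. -/
noncomputable def htilde (d : ℕ) (h : ℝ → ℝ) (r : ℝ) : ℝ :=
  r ^ d * sInf {v : ℝ | ∃ t : ℝ, 0 < t ∧ t ≤ r ∧ v = h t / t ^ d}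

open scoped NNReal ENNReal

attribute [local instance] Classical.propDecidable

section Aux

variable {d : ℕ}

private lemma grid_cover (d : ℕ) (hd : 0 < d) :
    ∃ C : ℝ, 0 < C ∧ ∀ t r : ℝ, 0 < t → t ≤ r →
      ∀ x : EuclideanSpace ℝ (Fin d), ∃ s : Finset (EuclideanSpace ℝ (Fin d)),
        (Metric.ball x r ⊆ ⋃ y ∈ s, Metric.ball y t) ∧ (s.card : ℝ) ≤ C * (r / t) ^ d := by
  have hsd : (1:ℝ) ≤ Real.sqrt d := by
    rw [show (1:ℝ) = Real.sqrt 1 by simp]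
    exact Real.sqrt_le_sqrt (by exact_mod_cast hd)
  have hsd0 : (0:ℝ) < Real.sqrt d := by linarith
  refine ⟨(7 * Real.sqrt d) ^ d, by positivity, fun t r ht htr x => ?_⟩
  have hr : 0 < r := lt_of_lt_of_le ht htr
  set a : ℝ := t / (2 * Real.sqrt d) with ha
  have ha0 : 0 < a := by positivity
  set m : ℕ := ⌈r / a⌉₊ with hm
  have hram : r / a ≤ (m : ℝ) := Nat.le_ceil _
  refine ⟨(Fintype.piFinset fun _ : Fin d => Finset.Icc (-(m:ℤ)) (m:ℤ)).image
    (fun k => (WithLp.toLp 2 (fun i => x i + (k i : ℝ) * a) : EuclideanSpace ℝ (Fin d))), ?_, ?_⟩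
  · intro z hz
    rw [Metric.mem_ball] at hz
    have hcoord : ∀ i, |z i - x i| < r := by
      intro i
      have h2 : (z i - x i)^2 ≤ ∑ j, dist (z j) (x j) ^ 2 := by
        have := Finset.single_le_sum (f := fun j => dist (z j) (x j) ^ 2)
          (fun j _ => sq_nonneg _) (Finset.mem_univ i)
        simpa [Real.dist_eq, sq_abs] using this
      calc |z i - x i| = Real.sqrt ((z i - x i)^2) := (Real.sqrt_sq_eq_abs _).symm
        _ ≤ Real.sqrt (∑ j, dist (z j) (x j) ^ 2) := Real.sqrt_le_sqrt h2
        _ = dist z x := (EuclideanSpace.dist_eq z x).symm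
        _ < r := hz
    set k : Fin d → ℤ := fun i => round ((z i - x i) / a) with hk
    have hround : ∀ i, |(z i - x i)/a - (k i : ℝ)| ≤ 1/2 := by
      intro i
      simpa [hk] using abs_sub_round ((z i - x i)/a)
    have hkmem : k ∈ Fintype.piFinset fun _ : Fin d => Finset.Icc (-(m:ℤ)) (m:ℤ) := by
      rw [Fintype.mem_piFinset]
      intro i
      rw [Finset.mem_Icc, ← abs_le]
      have h2 : |(z i - x i)/a| < r / a := by
        rw [abs_div, abs_of_pos ha0]
        gcongr
        exact hcoord i
      have h3 : |(k i : ℝ)| ≤ |(z i - x i)/a| + 1/2 := by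
        have h := hround i
        have habs : |(k i:ℝ)| - |(z i - x i)/a| ≤ |(z i - x i)/a - (k i:ℝ)| := by
          rw [abs_sub_comm]; exact abs_sub_abs_le_abs_sub _ _
        linarith
      have h1 : |(k i : ℝ)| < (m : ℝ) + 1 := by linarith
      have : |k i| < (m : ℤ) + 1 := by exact_mod_cast
        (by push_cast; exact h1 : (|k i| : ℝ) < ((m : ℤ) : ℝ) + 1)
      omega
    rw [Set.mem_iUnion₂]
    refine ⟨_, Finset.mem_image_of_mem _ hkmem, ?_⟩
    rw [Metric.mem_ball, EuclideanSpace.dist_eq]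
    have hbd : ∀ i, dist (z i) (x i + (k i : ℝ) * a) ^ 2 ≤ (a/2)^2 := by
      intro i
      have h4 : z i - (x i + (k i : ℝ) * a) = a * ((z i - x i)/a - (k i : ℝ)) := by
        field_simp
        ring
      have h5 : |z i - (x i + (k i : ℝ) * a)| ≤ a/2 := by
        rw [h4, abs_mul, abs_of_pos ha0]
        calc a * |(z i - x i)/a - (k i : ℝ)| ≤ a * (1/2) :=
              mul_le_mul_of_nonneg_left (hround i) ha0.le
          _ = a/2 := by ring
      rw [Real.dist_eq]
      exact pow_le_pow_left₀ (abs_nonneg _) h5 2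
    calc Real.sqrt (∑ i, dist (z i) ((WithLp.toLp 2 (fun i => x i + (k i:ℝ)*a) : EuclideanSpace ℝ (Fin d)) i) ^ 2)
        ≤ Real.sqrt (∑ _i : Fin d, (a/2)^2) := by
          apply Real.sqrt_le_sqrt
          exact Finset.sum_le_sum fun i _ => hbd i
      _ = Real.sqrt (d * (a/2)^2) := by rw [Finset.sum_const, Finset.card_univ,
            Fintype.card_fin, nsmul_eq_mul]
      _ = Real.sqrt d * (a/2) := by
          rw [Real.sqrt_mul (by positivity), Real.sqrt_sq (by positivity)]
      _ = t / 4 := by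
          rw [ha]; field_simp; ring
      _ < t := by linarith
  · have hcard : (Finset.Icc (-(m:ℤ)) (m:ℤ)).card = 2*m+1 := by
      rw [Int.card_Icc]; omega
    calc ((Finset.image _ _).card : ℝ)
        ≤ ((Fintype.piFinset fun _ : Fin d => Finset.Icc (-(m:ℤ)) (m:ℤ)).card : ℝ) := by
          exact_mod_cast Finset.card_image_le
      _ = ((2*m+1 : ℕ) : ℝ)^d := by
          rw [Fintype.card_piFinset]
          simp only [hcard, Finset.prod_const, Finset.card_univ, Fintype.card_fin]
          push_cast; ring
      _ ≤ (7 * Real.sqrt d * (r/t))^d := by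
          apply pow_le_pow_left₀ (by positivity)
          have h1 : (m:ℝ) ≤ r/a + 1 := by
            have := Nat.ceil_lt_add_one (le_of_lt (by positivity : (0:ℝ) < r/a))
            linarith [this]
          have h2 : r / a = 2 * Real.sqrt d * (r / t) := by
            rw [ha]; field_simp
          have h3 : (1:ℝ) ≤ r/t := (one_le_div ht).mpr htr
          have h4 : (1:ℝ) ≤ Real.sqrt d * (r/t) := by nlinarith
          push_cast
          nlinarith [h1, h2, h4]
      _ = (7 * Real.sqrt d)^d * (r/t)^d := by rw [mul_pow]

private lemma h_nonneg {h : ℝ → ℝ} (hmono : MonotoneOn h (Set.Ici 0)) (h0 : h 0 = 0)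
    {t : ℝ} (ht : 0 ≤ t) : 0 ≤ h t := by
  have := hmono (Set.self_mem_Ici) (Set.mem_Ici.mpr ht) ht
  rwa [h0] at this

private lemma htilde_set_bddBelow {h : ℝ → ℝ} (hmono : MonotoneOn h (Set.Ici 0)) (h0 : h 0 = 0)
    (r : ℝ) : BddBelow {v : ℝ | ∃ t : ℝ, 0 < t ∧ t ≤ r ∧ v = h t / t ^ d} := by
  refine ⟨0, fun v hv => ?_⟩
  obtain ⟨t, ht, _, rfl⟩ := hv
  exact div_nonneg (h_nonneg hmono h0 ht.le) (pow_nonneg ht.le d)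

private lemma htilde_sInf_nonneg {h : ℝ → ℝ} (hmono : MonotoneOn h (Set.Ici 0)) (h0 : h 0 = 0)
    (r : ℝ) : 0 ≤ sInf {v : ℝ | ∃ t : ℝ, 0 < t ∧ t ≤ r ∧ v = h t / t ^ d} := by
  rcases eq_empty_or_nonempty {v : ℝ | ∃ t : ℝ, 0 < t ∧ t ≤ r ∧ v = h t / t ^ d} with he | hne
  · rw [he, Real.sInf_empty]
  · exact le_csInf hne fun v hv => by
      obtain ⟨t, ht, _, rfl⟩ := hv
      exact div_nonneg (h_nonneg hmono h0 ht.le) (pow_nonneg ht.le d)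

private lemma ofReal_htilde_le {h : ℝ → ℝ} (hmono : MonotoneOn h (Set.Ici 0)) (h0 : h 0 = 0)
    (u : ℝ) : ENNReal.ofReal (htilde d h u) ≤ ENNReal.ofReal (h u) := by
  rcases le_or_gt u 0 with hu | hu
  · have : {v : ℝ | ∃ t : ℝ, 0 < t ∧ t ≤ u ∧ v = h t / t ^ d} = ∅ := by
      ext v; simp only [mem_setOf_eq, mem_empty_iff_false, iff_false]
      rintro ⟨t, ht, htu, _⟩; linarith
    rw [htilde, this, Real.sInf_empty, mul_zero, ENNReal.ofReal_zero]
    exact zero_le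
  · apply ENNReal.ofReal_le_ofReal
    rw [htilde]
    have hmem : h u / u ^ d ∈ {v : ℝ | ∃ t : ℝ, 0 < t ∧ t ≤ u ∧ v = h t / t ^ d} :=
      ⟨u, hu, le_rfl, rfl⟩
    have h1 : sInf {v : ℝ | ∃ t : ℝ, 0 < t ∧ t ≤ u ∧ v = h t / t ^ d} ≤ h u / u ^ d :=
      csInf_le (htilde_set_bddBelow hmono h0 u) hmem
    calc u ^ d * sInf {v : ℝ | ∃ t : ℝ, 0 < t ∧ t ≤ u ∧ v = h t / t ^ d}
        ≤ u ^ d * (h u / u ^ d) := mul_le_mul_of_nonneg_left h1 (pow_nonneg hu.le d)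
      _ = h u := by field_simp

private lemma perBall (d : ℕ) (C : ℝ) (hC : 0 < C)
    (hcov : ∀ t r : ℝ, 0 < t → t ≤ r →
      ∀ x : EuclideanSpace ℝ (Fin d), ∃ s : Finset (EuclideanSpace ℝ (Fin d)),
        (Metric.ball x r ⊆ ⋃ y ∈ s, Metric.ball y t) ∧ (s.card : ℝ) ≤ C * (r / t) ^ d)
    {h : ℝ → ℝ} (hmono : MonotoneOn h (Set.Ici 0)) (h0 : h 0 = 0)
    (x : EuclideanSpace ℝ (Fin d)) (r : ℝ) (ε : ℝ≥0) (hε : 0 < ε) :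
    ∃ (t : ℝ) (s : Finset (EuclideanSpace ℝ (Fin d))),
      (Metric.ball x r ⊆ ⋃ y ∈ s, Metric.ball y t) ∧
      (s.card : ENNReal) * ENNReal.ofReal (h t) ≤
        ENNReal.ofReal C * ENNReal.ofReal (htilde d h r) + ε := by
  rcases le_or_gt r 0 with hr | hr
  · refine ⟨0, ∅, ?_, ?_⟩
    · simp [Metric.ball_eq_empty.mpr hr]
    · simp
  · set S := {v : ℝ | ∃ t : ℝ, 0 < t ∧ t ≤ r ∧ v = h t / t ^ d} with hS
    have hne : S.Nonempty := ⟨h r / r ^ d, r, hr, le_rfl, rfl⟩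
    have hbdd : BddBelow S := htilde_set_bddBelow hmono h0 r
    set M := sInf S with hM
    have hM0 : 0 ≤ M := htilde_sInf_nonneg hmono h0 r
    set η : ℝ := ε / (C * r ^ d) with hη
    have hη0 : 0 < η := div_pos (by exact_mod_cast hε) (by positivity)
    obtain ⟨v, hvS, hv⟩ := (csInf_lt_iff hbdd hne).mp (lt_add_of_pos_right M hη0)
    obtain ⟨t, ht0, htr, rfl⟩ := hvS
    obtain ⟨s, hsub, hcard⟩ := hcov t r ht0 htr x
    refine ⟨t, s, hsub, ?_⟩
    have hht : 0 ≤ h t := h_nonneg hmono h0 ht0.le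
    have key : (s.card : ℝ) * h t ≤ C * r ^ d * M + C * r ^ d * η := by
      have h1 : (s.card : ℝ) * h t ≤ C * (r/t)^d * h t :=
        mul_le_mul_of_nonneg_right hcard hht
      have h2 : C * (r/t)^d * h t = C * r ^ d * (h t / t ^ d) := by
        rw [div_pow]; field_simp
      have h3 : C * r ^ d * (h t / t ^ d) ≤ C * r ^ d * (M + η) :=
        mul_le_mul_of_nonneg_left hv.le (by positivity)
      calc (s.card : ℝ) * h t ≤ C * (r/t)^d * h t := h1
        _ = C * r ^ d * (h t / t ^ d) := h2
        _ ≤ C * r ^ d * (M + η) := h3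
        _ = C * r ^ d * M + C * r ^ d * η := by ring
    have heq : C * r ^ d * η = (ε : ℝ) := by
      rw [hη]; field_simp
    calc (s.card : ENNReal) * ENNReal.ofReal (h t)
        = ENNReal.ofReal ((s.card : ℝ) * h t) := by
          rw [ENNReal.ofReal_mul (by positivity), ENNReal.ofReal_natCast]
      _ ≤ ENNReal.ofReal (C * r ^ d * M + C * r ^ d * η) := ENNReal.ofReal_le_ofReal key
      _ = ENNReal.ofReal (C * r ^ d * M) + ENNReal.ofReal (C * r ^ d * η) := by
          rw [ENNReal.ofReal_add (by positivity) (by positivity)]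
      _ = ENNReal.ofReal C * ENNReal.ofReal (htilde d h r) + ε := by
          rw [heq, ENNReal.ofReal_coe_nnreal, htilde, ← hS, ← hM,
            show C * r ^ d * M = C * (r ^ d * M) by ring,
            ENNReal.ofReal_mul hC.le]

end Aux

/-- For any continuous increasing `h` with `h(0) = 0`, the Hausdorff contents with
gauges `h` and `h̃` are comparable: `M_{h̃}(G) ≤ M_h(G) ≤ C_d · M_{h̃}(G)`. -/
theorem stmt0 (d : ℕ) (hd : 0 < d) :
    ∃ C : ℝ, 0 < C ∧ ∀ h : ℝ → ℝ,
      ContinuousOn h (Set.Ici 0) → MonotoneOn h (Set.Ici 0) → h 0 = 0 →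
      ∀ G : Set (EuclideanSpace ℝ (Fin d)),
        hContent d (htilde d h) G ≤ hContent d h G ∧
        hContent d h G ≤ ENNReal.ofReal C * hContent d (htilde d h) G := by
  obtain ⟨C, hC, hcov⟩ := grid_cover d hd
  refine ⟨C, hC, fun h _hcont hmono h0 G => ⟨?_, ?_⟩⟩
  · -- easy direction
    simp only [hContent]
    refine le_iInf fun c => le_iInf fun r => le_iInf fun hG => ?_
    refine le_trans (iInf_le_of_le c (iInf_le_of_le r (iInf_le _ hG))) ?_
    exact ENNReal.tsum_le_tsum fun n => ofReal_htilde_le hmono h0 (r n)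
  · -- hard direction
    have key : ∀ (c : ℕ → EuclideanSpace ℝ (Fin d)) (r : ℕ → ℝ),
        G ⊆ ⋃ n, Metric.ball (c n) (r n) →
        hContent d h G ≤ ENNReal.ofReal C * ∑' n, ENNReal.ofReal (htilde d h (r n)) := by
      intro c r hG
      refine ENNReal.le_of_forall_pos_le_add fun δ hδ _hfin => ?_
      obtain ⟨ε', hε'pos, hε'sum⟩ := ENNReal.exists_pos_sum_of_countable
        (by exact_mod_cast hδ.ne' : (δ : ℝ≥0∞) ≠ 0) ℕ
      choose t s hsub hcost using fun n =>
        perBall d C hC hcov hmono h0 (c n) (r n) (ε' n) (hε'pos n)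
      let cc : ℕ → EuclideanSpace ℝ (Fin d) := fun j =>
        (s (Nat.pairEquiv.symm j).1).toList.getD (Nat.pairEquiv.symm j).2 (c 0)
      let rr : ℕ → ℝ := fun j =>
        if (Nat.pairEquiv.symm j).2 < (s (Nat.pairEquiv.symm j).1).card
        then t (Nat.pairEquiv.symm j).1 else 0
      have hcover : G ⊆ ⋃ j, Metric.ball (cc j) (rr j) := by
        intro z hz
        obtain ⟨n, hn⟩ := Set.mem_iUnion.mp (hG hz)
        have hmem := hsub n hn
        rw [Set.mem_iUnion₂] at hmem
        obtain ⟨y, hy, hzy⟩ := hmem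
        rw [← Finset.mem_toList] at hy
        obtain ⟨kk, hkk, hyk⟩ := List.mem_iff_getElem.mp hy
        refine Set.mem_iUnion.mpr ⟨Nat.pairEquiv (n, kk), ?_⟩
        have hsymm : Nat.pairEquiv.symm (Nat.pairEquiv (n, kk)) = (n, kk) :=
          Equiv.symm_apply_apply _ _
        have hlen : kk < (s n).card := by rwa [Finset.length_toList] at hkk
        show z ∈ Metric.ball (cc (Nat.pairEquiv (n, kk))) (rr (Nat.pairEquiv (n, kk)))
        have hcc' : cc (Nat.pairEquiv (n, kk)) = y := by
          simp only [cc, hsymm]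
          rw [List.getD_eq_getElem _ _ hkk, hyk]
        have hrr' : rr (Nat.pairEquiv (n, kk)) = t n := by
          simp only [rr, hsymm]
          rw [if_pos hlen]
        rw [hcc', hrr']
        exact hzy
      have hsum : ∑' j, ENNReal.ofReal (h (rr j))
          = ∑' n, ((s n).card : ENNReal) * ENNReal.ofReal (h (t n)) := by
        have h1 : ∑' j, ENNReal.ofReal (h (rr j))
            = ∑' p : ℕ × ℕ, ENNReal.ofReal
                (h (if p.2 < (s p.1).card then t p.1 else 0)) :=
          Equiv.tsum_eq Nat.pairEquiv.symm
            (fun p => ENNReal.ofReal (h (if p.2 < (s p.1).card then t p.1 else 0)))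
        rw [h1, ENNReal.tsum_prod']
        refine tsum_congr fun n => ?_
        have h2 : ∀ k ∉ Finset.range (s n).card,
            ENNReal.ofReal (h (if k < (s n).card then t n else 0)) = 0 := by
          intro k hk
          rw [if_neg (by simpa using hk), h0, ENNReal.ofReal_zero]
        rw [tsum_eq_sum h2,
          Finset.sum_congr rfl (fun k hk => by rw [if_pos (Finset.mem_range.mp hk)]),
          Finset.sum_const, Finset.card_range, nsmul_eq_mul]
      have hle : hContent d h G ≤ ∑' j, ENNReal.ofReal (h (rr j)) := by
        simp only [hContent]
        exact iInf_le_of_le cc (iInf_le_of_le rr (iInf_le _ hcover))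
      calc hContent d h G ≤ ∑' j, ENNReal.ofReal (h (rr j)) := hle
        _ = ∑' n, ((s n).card : ENNReal) * ENNReal.ofReal (h (t n)) := hsum
        _ ≤ ∑' n, (ENNReal.ofReal C * ENNReal.ofReal (htilde d h (r n)) + (ε' n : ℝ≥0∞)) :=
            ENNReal.tsum_le_tsum hcost
        _ = ENNReal.ofReal C * ∑' n, ENNReal.ofReal (htilde d h (r n))
              + ∑' n, (ε' n : ℝ≥0∞) := by
            rw [ENNReal.tsum_add, ENNReal.tsum_mul_left]
        _ ≤ ENNReal.ofReal C * ∑' n, ENNReal.ofReal (htilde d h (r n)) + δ :=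
            add_le_add_right hε'sum.le _
    have h1 : ENNReal.ofReal C ≠ 0 := (ENNReal.ofReal_pos.mpr hC).ne'
    have h2 : ENNReal.ofReal C ≠ ⊤ := ENNReal.ofReal_ne_top
    conv_rhs => rw [hContent]
    rw [ENNReal.mul_iInf_of_ne h1 h2]
    refine le_iInf fun c => ?_
    rw [ENNReal.mul_iInf_of_ne h1 h2]
    refine le_iInf fun r => ?_
    rw [ENNReal.mul_iInf_of_ne h1 h2]
    refine le_iInf fun hG => ?_
    exact key c r hG
end

section
/- Let x, y, z be three distinct points in ℝ^d with |z−x| ≤ |z−y| ≤ |y−x|, and let s > 0. Then the symmetrized quantity q_s(x,y,z) = ⟨(x−z)/|x−z|^{s+1}, (y−z)/|y−z|^{s+1}⟩ + ⟨(y−x)/|y−x|^{s+1}, (z−x)/|z−x|^{s+1}⟩ satisfies q_s(x,y,z) ≤ 2^{s+1} / (|y−x|^{s+1} · |z−x|^{s−1}). -/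
/-- Symmetrization inequality for the vector-valued Riesz kernel: if
`|z−x| ≤ |z−y| ≤ |y−x|` and `s > 0`, then
`q_s(x,y,z) ≤ 2^(s+1) / (|y−x|^(s+1) · |z−x|^(s−1))`. -/
theorem stmt1 {d : ℕ} (s : ℝ) (hs : 0 < s) (x y z : EuclideanSpace ℝ (Fin d))
    (hxz : x ≠ z) (hyz : y ≠ z) (hxy : x ≠ y)
    (h1 : ‖z - x‖ ≤ ‖z - y‖) (h2 : ‖z - y‖ ≤ ‖y - x‖) :
    (inner ℝ ((‖x - z‖ ^ (s + 1))⁻¹ • (x - z)) ((‖y - z‖ ^ (s + 1))⁻¹ • (y - z)) : ℝ) +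
      (inner ℝ ((‖y - x‖ ^ (s + 1))⁻¹ • (y - x)) ((‖z - x‖ ^ (s + 1))⁻¹ • (z - x)) : ℝ) ≤
      2 ^ (s + 1) / (‖y - x‖ ^ (s + 1) * ‖z - x‖ ^ (s - 1)) := by
  have hzy : ‖z - y‖ = ‖y - z‖ := norm_sub_rev z y
  have hzx : ‖z - x‖ = ‖x - z‖ := norm_sub_rev z x
  have hxy' : ‖x - y‖ = ‖y - x‖ := norm_sub_rev x y
  set a := ‖y - x‖ with ha
  set b := ‖y - z‖ with hb
  set c := ‖x - z‖ with hc
  have hapos : 0 < a := norm_sub_pos_iff.mpr (Ne.symm hxy)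
  have hbpos : 0 < b := norm_sub_pos_iff.mpr hyz
  have hcpos : 0 < c := norm_sub_pos_iff.mpr hxz
  rw [hzx] at h1 ⊢
  rw [hzy] at h1 h2
  -- inner products
  have e1 : (inner ℝ (x - z) (y - z) : ℝ) = (c * c + b * b - a * a) / 2 := by
    rw [real_inner_eq_norm_mul_self_add_norm_mul_self_sub_norm_sub_mul_self_div_two]
    have : x - z - (y - z) = x - y := by abel
    rw [this, hxy', ← hb, ← hc]
  have e2 : (inner ℝ (y - x) (z - x) : ℝ) = (a * a + c * c - b * b) / 2 := by
    rw [real_inner_eq_norm_mul_self_add_norm_mul_self_sub_norm_sub_mul_self_div_two]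
    have : y - x - (z - x) = y - z := by abel
    rw [this, hzx, ← ha, ← hb]
  rw [real_inner_smul_left, real_inner_smul_right, real_inner_smul_left,
    real_inner_smul_right, e1, e2]
  -- pure real arithmetic
  have hA : (0:ℝ) < a ^ (s + 1) := Real.rpow_pos_of_pos hapos _
  have hB : (0:ℝ) < b ^ (s + 1) := Real.rpow_pos_of_pos hbpos _
  have hC : (0:ℝ) < c ^ (s + 1) := Real.rpow_pos_of_pos hcpos _
  have hD : (0:ℝ) < c ^ (s - 1) := Real.rpow_pos_of_pos hcpos _
  have hCD : c ^ (s + 1) = c ^ (s - 1) * (c * c) := by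
    rw [show s + 1 = (s - 1) + 2 by ring, Real.rpow_add hcpos, Real.rpow_two, pow_two]
  have hBA : b ^ (s + 1) ≤ a ^ (s + 1) := Real.rpow_le_rpow hbpos.le h2 (by linarith)
  have ha2b : a ≤ 2 * b := by
    have htri : a = ‖(y - z) + (z - x)‖ := by rw [ha]; congr 1; abel
    have := norm_add_le (y - z) (z - x)
    rw [← htri, hzx] at this
    linarith [h1, this]
  have hA2B : a ^ (s + 1) ≤ 2 ^ (s + 1) * b ^ (s + 1) := by
    calc a ^ (s + 1) ≤ (2 * b) ^ (s + 1) := Real.rpow_le_rpow hapos.le ha2b (by linarith)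
    _ = 2 ^ (s + 1) * b ^ (s + 1) := Real.mul_rpow (by norm_num) hbpos.le
  have h2s : (1:ℝ) ≤ 2 ^ (s + 1) := Real.one_le_rpow (by norm_num) (by linarith)
  have key : a ^ (s + 1) * (c * c + b * b - a * a) + b ^ (s + 1) * (a * a + c * c - b * b)
      ≤ 2 * 2 ^ (s + 1) * (c * c) * b ^ (s + 1) := by
    nlinarith [mul_le_mul_of_nonpos_right hBA (show b * b - a * a ≤ 0 by nlinarith),
      mul_le_mul_of_nonneg_right hA2B (mul_pos hcpos hcpos).le,
      mul_le_mul_of_nonneg_right h2s (mul_pos (mul_pos hcpos hcpos) hB).le]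
  have lhs_eq : (c ^ (s + 1))⁻¹ * ((b ^ (s + 1))⁻¹ * ((c * c + b * b - a * a) / 2)) +
      (a ^ (s + 1))⁻¹ * ((c ^ (s + 1))⁻¹ * ((a * a + c * c - b * b) / 2)) =
      (a ^ (s + 1) * (c * c + b * b - a * a) + b ^ (s + 1) * (a * a + c * c - b * b)) /
        (2 * (a ^ (s + 1) * b ^ (s + 1) * c ^ (s + 1))) := by
    field_simp
  have rhs_eq : 2 ^ (s + 1) / (a ^ (s + 1) * c ^ (s - 1)) =
      (2 * 2 ^ (s + 1) * (c * c) * b ^ (s + 1)) /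
        (2 * (a ^ (s + 1) * b ^ (s + 1) * c ^ (s + 1))) := by
    rw [hCD]
    field_simp
  rw [lhs_eq, rhs_eq]
  exact div_le_div_of_nonneg_right key (by positivity) |>.trans_eq rfl
end

section
/- Let η be a finite measure on a set X, let f be a measurable function, and let τ, K ∈ (0,∞) be such that for every measurable set F one has ∫_F |f|² dη ≤ τ + K·η(F). Then f can be written as f = f₁ + f₂ where ‖f₂‖_∞ ≤ 2K^{1/2} and ∫ |f₁|² dη ≤ (4/3)τ. -/
open MeasureTheory

/-- If `∫_F |f|² dη ≤ τ + K·η(F)` for every measurable `F`, then `f = f₁ + f₂`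
with `‖f₂‖_∞ ≤ 2√K` and `∫ |f₁|² dη ≤ (4/3)τ`. -/
theorem stmt2 {X : Type*} [MeasurableSpace X] (η : Measure X) [IsFiniteMeasure η]
    (f : X → ℝ) (hf : Measurable f) (τ K : ℝ) (hτ : 0 < τ) (hK : 0 < K)
    (hyp : ∀ F : Set X, MeasurableSet F → ∫ x in F, (f x) ^ 2 ∂η ≤ τ + K * (η F).toReal) :
    ∃ f₁ f₂ : X → ℝ, f = f₁ + f₂ ∧ (∀ x, |f₂ x| ≤ 2 * Real.sqrt K) ∧
      ∫ x, (f₁ x) ^ 2 ∂η ≤ (4 / 3) * τ := by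
  set F : Set X := {x | 2 * Real.sqrt K < |f x|} with hF
  have hFm : MeasurableSet F := measurableSet_lt measurable_const hf.abs
  have hsqrt : (0:ℝ) ≤ 2 * Real.sqrt K := by positivity
  refine ⟨F.indicator f, Fᶜ.indicator f, ?_, ?_, ?_⟩
  · funext x
    by_cases hx : x ∈ F <;>
      simp [Set.indicator_apply, hx]
  · intro x
    by_cases hx : x ∈ F
    · simp [Set.indicator_apply, hx, hsqrt]
    · simpa [Set.indicator_apply, hx] using le_of_not_gt hx
  · have hind : ∀ x, (F.indicator f x) ^ 2 = F.indicator (fun x => f x ^ 2) x := by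
      intro x; by_cases hx : x ∈ F <;> simp [Set.indicator_apply, hx]
    rw [show (fun x => (F.indicator f x) ^ 2) = F.indicator (fun x => f x ^ 2) from funext hind]
    rw [integral_indicator hFm]
    by_cases hint : IntegrableOn (fun x => f x ^ 2) F η
    · have hlow : ∀ x ∈ F, (4 : ℝ) * K ≤ f x ^ 2 := by
        intro x hx
        have h1 : 2 * Real.sqrt K ≤ |f x| := le_of_lt hx
        have h2 : (2 * Real.sqrt K) ^ 2 ≤ |f x| ^ 2 := by
          exact pow_le_pow_left₀ hsqrt h1 2
        have h3 : (2 * Real.sqrt K) ^ 2 = 4 * K := by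
          rw [mul_pow]; rw [Real.sq_sqrt hK.le]; ring
        rw [h3] at h2
        simpa [sq_abs] using h2
      have hge : (4 * K) * (η F).toReal ≤ ∫ x in F, f x ^ 2 ∂η := by
        have := MeasureTheory.setIntegral_ge_of_const_le hFm (measure_ne_top η F) hlow hint
        simp at this; simp only [Measure.real] at this; linarith
      have hup := hyp F hFm
      have ht : (0:ℝ) ≤ (η F).toReal := ENNReal.toReal_nonneg
      nlinarith [hge, hup]
    · rw [integral_undef hint]
      positivity
end

section
/- Fix s ∈ (0,d), a measuring function h, κ > 0, and for N ≥ 2 let 𝔐_h(κ,N) be the unique M > 0 solving κ² ∫_{1/N}^1 [t / h^{−1}(Mt)^s]² dt/t = 1. Then 𝔐_h(2κ, 2N) ≤ C(s,d) · 𝔐_h(κ, N) for a constant C(s,d) depending only on s and d. -/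
open MeasureTheory Set

/-- A measuring (gauge) function: continuous, strictly increasing, vanishing at 0,
tending to infinity, with `h(r)/r^d` non-increasing on `(0,∞)`. -/
structure Measuring (d : ℕ) (h : ℝ → ℝ) : Prop where
  cont : ContinuousOn h (Set.Ici 0)
  mono : StrictMonoOn h (Set.Ici 0)
  zero : h 0 = 0
  tendsto : Filter.Tendsto h Filter.atTop Filter.atTop
  ratio : ∀ r₁ r₂ : ℝ, 0 < r₁ → r₁ ≤ r₂ → h r₂ / r₂ ^ (d : ℝ) ≤ h r₁ / r₁ ^ (d : ℝ)

section Aux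

variable {d : ℕ} {h hinv : ℝ → ℝ}

lemma aux_inv_pos (hm : Measuring d h)
    (hi : ∀ y : ℝ, 0 ≤ y → 0 ≤ hinv y ∧ h (hinv y) = y) {y : ℝ} (hy : 0 < y) :
    0 < hinv y := by
  obtain ⟨h0, h1⟩ := hi y hy.le
  rcases h0.lt_or_eq with h2 | h2
  · exact h2
  · exfalso; rw [← h2] at h1; rw [hm.zero] at h1; linarith

lemma aux_inv_mono (hm : Measuring d h)
    (hi : ∀ y : ℝ, 0 ≤ y → 0 ≤ hinv y ∧ h (hinv y) = y) {a b : ℝ} (ha : 0 ≤ a) (hab : a ≤ b) :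
    hinv a ≤ hinv b := by
  by_contra hc
  push_neg at hc
  have h1 := (hi a ha).2
  have h2 := (hi b (ha.trans hab)).2
  have := hm.mono (hi b (ha.trans hab)).1 (hi a ha).1 hc
  rw [h1, h2] at this
  linarith

/-- Scaling: `hinv (K*y) ≥ K^(1/d) * hinv y` for `K ≥ 1`, `y > 0`. -/
lemma aux_inv_scale (hm : Measuring d h)
    (hi : ∀ y : ℝ, 0 ≤ y → 0 ≤ hinv y ∧ h (hinv y) = y) (hd : 0 < d)
    {K y : ℝ} (hK : 1 ≤ K) (hy : 0 < y) :
    K ^ ((d : ℝ)⁻¹) * hinv y ≤ hinv (K * y) := by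
  set r := hinv y with hr
  have hrpos : 0 < r := aux_inv_pos hm hi hy
  have hK0 : (0:ℝ) < K := lt_of_lt_of_le one_pos hK
  have hc1 : (1:ℝ) ≤ K ^ ((d : ℝ)⁻¹) := Real.one_le_rpow hK (by positivity)
  set r₂ := K ^ ((d : ℝ)⁻¹) * r with hr₂
  have hr₂pos : 0 < r₂ := by positivity
  have hle : r ≤ r₂ := le_mul_of_one_le_left hrpos.le hc1
  have hrat := hm.ratio r r₂ hrpos hle
  have hpow : r₂ ^ (d : ℝ) = K * r ^ (d : ℝ) := by
    rw [hr₂, Real.mul_rpow (by positivity) hrpos.le, ← Real.rpow_mul hK0.le]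
    rw [inv_mul_cancel₀ (by exact_mod_cast hd.ne' : (d:ℝ) ≠ 0), Real.rpow_one]
  -- h r₂ ≤ K * h r = K * y
  have hhr : h r = y := (hi y hy.le).2
  have hhr₂ : h r₂ ≤ K * y := by
    have hden : (0:ℝ) < r ^ (d : ℝ) := by positivity
    have hden₂ : (0:ℝ) < r₂ ^ (d : ℝ) := by positivity
    rw [div_le_div_iff₀ hden₂ hden] at hrat
    rw [hpow] at hrat
    have := hrat
    nlinarith [hden]
  -- conclude r₂ ≤ hinv (K*y)
  by_contra hc
  push_neg at hc
  have hKy : 0 < K * y := by positivity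
  have h1 := (hi (K * y) hKy.le).2
  have h2 := hm.mono (hi (K * y) hKy.le).1 (by positivity : (0:ℝ) ≤ r₂) hc
  rw [h1] at h2
  linarith

end Aux

set_option maxHeartbeats 1000000 in
/-- Doubling property of `𝔐_h`: if `M₁ = 𝔐_h(κ,N)` and `M₂ = 𝔐_h(2κ,2N)` (i.e. they
solve the defining equations), then `M₂ ≤ C(s,d)·M₁`. -/
theorem stmt6 (d : ℕ) (s : ℝ) (hs : 0 < s) (hsd : s < d) :
    ∃ C : ℝ, 0 < C ∧ ∀ h hinv : ℝ → ℝ, Measuring d h →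
      (∀ y : ℝ, 0 ≤ y → 0 ≤ hinv y ∧ h (hinv y) = y) →
      ∀ κ N M₁ M₂ : ℝ, 0 < κ → 2 ≤ N → 0 < M₁ → 0 < M₂ →
        κ ^ 2 * ∫ t in Set.Ioc (1 / N) 1, (t / (hinv (M₁ * t)) ^ s) ^ 2 / t = 1 →
        (2 * κ) ^ 2 * ∫ t in Set.Ioc (1 / (2 * N)) 1, (t / (hinv (M₂ * t)) ^ s) ^ 2 / t = 1 →
        M₂ ≤ C * M₁ := by
  have hd : 0 < d := by
    rcases Nat.eq_zero_or_pos d with h0 | h0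
    · exfalso; rw [h0] at hsd; simp at hsd; linarith
    · exact h0
  set C' : ℝ := (8:ℝ) ^ ((d : ℝ) / (2 * s)) with hC'
  have hC'1 : (1:ℝ) ≤ C' := Real.one_le_rpow (by norm_num) (by positivity)
  refine ⟨2 * C', by positivity, ?_⟩
  intro h hinv hm hi κ N M₁ M₂ hκ hN hM₁ hM₂ e₁ e₂
  set C : ℝ := 2 * C' with hCdef
  -- the key "factor 8" estimate
  have h8 : ∀ y : ℝ, 0 < y → 8 * (hinv y ^ s) ^ 2 ≤ (hinv (C' * y) ^ s) ^ 2 := by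
    intro y hy
    have hx : 0 < hinv y := aux_inv_pos hm hi hy
    have hscale := aux_inv_scale hm hi hd hC'1 hy
    set c : ℝ := C' ^ ((d : ℝ)⁻¹) with hc
    have hc0 : 0 < c := by positivity
    have h1 : c ^ s * hinv y ^ s ≤ hinv (C' * y) ^ s := by
      rw [← Real.mul_rpow hc0.le hx.le]
      exact Real.rpow_le_rpow (by positivity) hscale hs.le
    have h2 : (c ^ s * hinv y ^ s) ^ 2 ≤ (hinv (C' * y) ^ s) ^ 2 := by
      apply pow_le_pow_left₀ (by positivity) h1
    have hC'0 : (0:ℝ) < C' := by positivity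
    have h3 : (c ^ s) ^ 2 = 8 := by
      have e1 : c ^ s = C' ^ ((d:ℝ)⁻¹ * s) := by
        rw [hc, ← Real.rpow_mul hC'0.le]
      have e2 : (c ^ s) ^ 2 = C' ^ ((d:ℝ)⁻¹ * s * 2) := by
        rw [e1, ← Real.rpow_natCast (C' ^ ((d:ℝ)⁻¹ * s)) 2, ← Real.rpow_mul hC'0.le]
        norm_num
      rw [e2, hC', ← Real.rpow_mul (by norm_num : (0:ℝ) ≤ 8)]
      have hds : (d:ℝ) / (2 * s) * ((d:ℝ)⁻¹ * s * 2) = 1 := by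
        have hd0 : (d:ℝ) ≠ 0 := by exact_mod_cast hd.ne'
        field_simp
      rw [hds, Real.rpow_one]
    calc 8 * (hinv y ^ s) ^ 2 = (c ^ s) ^ 2 * (hinv y ^ s) ^ 2 := by rw [h3]
      _ = (c ^ s * hinv y ^ s) ^ 2 := by ring
      _ ≤ _ := h2
  -- abbreviations
  set g₁ : ℝ → ℝ := fun t => (t / (hinv (M₁ * t)) ^ s) ^ 2 / t with hg₁
  set g₂ : ℝ → ℝ := fun t => (t / (hinv (M₂ * t)) ^ s) ^ 2 / t with hg₂
  have hN0 : (0:ℝ) < N := by linarith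
  set a : ℝ := 1 / (2 * N) with ha
  set b : ℝ := 1 / N with hb
  have ha0 : 0 < a := by positivity
  have hab : a < b := by
    rw [ha, hb]
    apply div_lt_div_of_pos_left one_pos hN0
    linarith
  have hb1 : b ≤ 1 := by
    rw [hb]; rw [div_le_one hN0]; linarith
  have h2b : 2 * b ≤ 1 := by
    rw [hb]; rw [mul_one_div, div_le_one hN0]; exact hN
  -- simplification of the integrand
  have gform : ∀ (M : ℝ) (t : ℝ), 0 < t → 0 < M →
      (t / (hinv (M * t)) ^ s) ^ 2 / t = t / ((hinv (M * t)) ^ s) ^ 2 := by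
    intro M t ht hM
    have hx : 0 < hinv (M * t) := aux_inv_pos hm hi (by positivity)
    have hxs : (0:ℝ) < hinv (M * t) ^ s := Real.rpow_pos_of_pos hx s
    field_simp
  -- integrability
  have int₁ : IntegrableOn g₁ (Set.Ioc b 1) := by
    by_contra hc
    rw [MeasureTheory.integral_undef hc] at e₁
    simp at e₁
  have int₂ : IntegrableOn g₂ (Set.Ioc a 1) := by
    by_contra hc
    rw [MeasureTheory.integral_undef hc] at e₂
    simp at e₂
  by_contra hcon
  push_neg at hcon
  -- pointwise bounds
  have claimA : ∀ t ∈ Set.Ioc b 1, g₂ t ≤ (1/8) * g₁ t := by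
    intro t ht
    have ht0 : 0 < t := lt_trans (by positivity) ht.1
    have hM₁t : 0 < M₁ * t := by positivity
    have hmono : hinv (C' * (M₁ * t)) ≤ hinv (M₂ * t) := by
      apply aux_inv_mono hm hi (by positivity)
      nlinarith [hcon, hC'1]
    have h8' := h8 (M₁ * t) hM₁t
    have hx2 : 0 < hinv (M₂ * t) := aux_inv_pos hm hi (by positivity)
    have hx1 : 0 < hinv (M₁ * t) := aux_inv_pos hm hi hM₁t
    have hxc : 0 < hinv (C' * (M₁ * t)) := aux_inv_pos hm hi (by positivity)
    have key : 8 * (hinv (M₁ * t) ^ s) ^ 2 ≤ (hinv (M₂ * t) ^ s) ^ 2 := by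
      refine le_trans h8' ?_
      apply pow_le_pow_left₀ (by positivity)
      exact Real.rpow_le_rpow hxc.le hmono hs.le
    rw [hg₁, hg₂]
    simp only
    rw [gform M₂ t ht0 hM₂, gform M₁ t ht0 hM₁]
    calc t / (hinv (M₂ * t) ^ s) ^ 2
        ≤ t / (8 * (hinv (M₁ * t) ^ s) ^ 2) :=
          div_le_div_of_nonneg_left ht0.le (by positivity) key
      _ = 1 / 8 * (t / (hinv (M₁ * t) ^ s) ^ 2) := by ring
  have claimB : ∀ t ∈ Set.Ioc a b, g₂ t ≤ (1/16) * g₁ (2 * t) := by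
    intro t ht
    have ht0 : 0 < t := lt_trans (by positivity) ht.1
    have hM₁2t : 0 < M₁ * (2 * t) := by positivity
    have hmono : hinv (C' * (M₁ * (2 * t))) ≤ hinv (M₂ * t) := by
      apply aux_inv_mono hm hi (by positivity)
      have : C' * (M₁ * (2 * t)) = C * M₁ * t := by rw [hCdef]; ring
      rw [this]
      nlinarith [hcon]
    have h8' := h8 (M₁ * (2 * t)) hM₁2t
    have hx1 : 0 < hinv (M₁ * (2 * t)) := aux_inv_pos hm hi hM₁2t
    have hx2 : 0 < hinv (M₂ * t) := aux_inv_pos hm hi (by positivity)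
    have hxc : 0 < hinv (C' * (M₁ * (2 * t))) := aux_inv_pos hm hi (by positivity)
    have key : 8 * (hinv (M₁ * (2 * t)) ^ s) ^ 2 ≤ (hinv (M₂ * t) ^ s) ^ 2 := by
      refine le_trans h8' ?_
      apply pow_le_pow_left₀ (by positivity)
      exact Real.rpow_le_rpow hxc.le hmono hs.le
    rw [hg₁, hg₂]
    simp only
    rw [gform M₂ t ht0 hM₂, gform M₁ (2*t) (by positivity) hM₁]
    calc t / (hinv (M₂ * t) ^ s) ^ 2
        ≤ t / (8 * (hinv (M₁ * (2 * t)) ^ s) ^ 2) :=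
          div_le_div_of_nonneg_left ht0.le (by positivity) key
      _ = 1 / 16 * (2 * t / (hinv (M₁ * (2 * t)) ^ s) ^ 2) := by ring
  -- nonnegativity of g₁
  have g₁nonneg : ∀ t : ℝ, 0 < t → 0 ≤ g₁ t := by
    intro t ht
    exact div_nonneg (sq_nonneg _) ht.le
  -- split the integral for g₂
  have hsplit : (∫ t in Set.Ioc a 1, g₂ t) =
      (∫ t in Set.Ioc a b, g₂ t) + ∫ t in Set.Ioc b 1, g₂ t := by
    rw [← Set.Ioc_union_Ioc_eq_Ioc hab.le hb1]
    exact MeasureTheory.setIntegral_union (Set.Ioc_disjoint_Ioc_of_le le_rfl) measurableSet_Ioc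
      (int₂.mono_set (Set.Ioc_subset_Ioc le_rfl hb1))
      (int₂.mono_set (Set.Ioc_subset_Ioc hab.le le_rfl))
  -- bound the second piece
  have boundB : (∫ t in Set.Ioc b 1, g₂ t) ≤ (1/8) * ∫ t in Set.Ioc b 1, g₁ t := by
    rw [← MeasureTheory.integral_const_mul]
    exact MeasureTheory.setIntegral_mono_on
      (int₂.mono_set (Set.Ioc_subset_Ioc hab.le le_rfl))
      (int₁.const_mul _) measurableSet_Ioc claimA
  -- change of variables for the first piece
  have int₁' : IntegrableOn g₁ (Set.Ioc b (2*b)) :=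
    int₁.mono_set (Set.Ioc_subset_Ioc le_rfl h2b)
  have hbb : b ≤ 2 * b := by linarith
  have intcomp : IntegrableOn (fun t => g₁ (2 * t)) (Set.Ioc a b) := by
    have hII : IntervalIntegrable g₁ volume b (2*b) :=
      (intervalIntegrable_iff_integrableOn_Ioc_of_le hbb).2 int₁'
    have := hII.comp_mul_left (c := 2)
    have hba : b / 2 = a := by rw [ha, hb]; ring
    have hbb2 : (2*b) / 2 = b := by ring
    rw [hba, hbb2] at this
    exact (intervalIntegrable_iff_integrableOn_Ioc_of_le hab.le).1 this
  have boundA : (∫ t in Set.Ioc a b, g₂ t) ≤ (1/16) * ∫ t in Set.Ioc a b, g₁ (2*t) := by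
    rw [← MeasureTheory.integral_const_mul]
    exact MeasureTheory.setIntegral_mono_on
      (int₂.mono_set (Set.Ioc_subset_Ioc le_rfl hb1))
      (intcomp.const_mul _) measurableSet_Ioc claimB
  have changevar : (∫ t in Set.Ioc a b, g₁ (2*t)) = (1/2) * ∫ t in Set.Ioc b (2*b), g₁ t := by
    rw [← intervalIntegral.integral_of_le hab.le, ← intervalIntegral.integral_of_le hbb]
    rw [intervalIntegral.integral_comp_mul_left g₁ (two_ne_zero)]
    have h2a : 2 * a = b := by rw [ha, hb]; ring
    rw [h2a]
    simp [smul_eq_mul]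
  have boundmid : (∫ t in Set.Ioc b (2*b), g₁ t) ≤ ∫ t in Set.Ioc b 1, g₁ t := by
    apply MeasureTheory.setIntegral_mono_set int₁
    · filter_upwards [MeasureTheory.ae_restrict_mem measurableSet_Ioc] with t ht
      exact g₁nonneg t (lt_trans (by positivity) ht.1)
    · exact Filter.Eventually.of_forall fun t ht => Set.Ioc_subset_Ioc le_rfl h2b ht
  -- put things together
  set I₁ : ℝ := ∫ t in Set.Ioc b 1, g₁ t with hI₁
  set I₂ : ℝ := ∫ t in Set.Ioc a 1, g₂ t with hI₂
  have hI₁pos : 0 < I₁ := by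
    rcases lt_trichotomy I₁ 0 with hlt | heq | hgt
    · nlinarith [e₁, sq_nonneg κ]
    · rw [heq] at e₁; simp at e₁
    · exact hgt
  have hI : 4 * I₂ = I₁ := by
    have h1 : κ^2 * I₁ = 1 := e₁
    have h2 : (2*κ)^2 * I₂ = 1 := e₂
    have hκ2 : (0:ℝ) < κ^2 := by positivity
    have h3 : κ^2 * (4 * I₂) = κ^2 * I₁ := by
      rw [h1]
      rw [← h2]; ring
    exact mul_left_cancel₀ (ne_of_gt hκ2) h3
  have final : I₂ ≤ (5/32) * I₁ := by
    rw [hsplit]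
    have := boundA.trans (by rw [changevar]; nlinarith [boundmid] : 
      (1/16) * ∫ t in Set.Ioc a b, g₁ (2*t) ≤ (1/32) * I₁)
    linarith [boundB, this]
  linarith
end

section
/- Let s ∈ (0,d), κ > 0, c, C > 0, N > 2C, and let h be a measuring function. If M > 0 satisfies M ≥ c·κ·[ ∫_{h^{−1}(CM/N)}^{h^{−1}(M)} (h(y)/y^s)² dy/y ]^{1/2}, then M ≥ c'(c,C,s,d) · 𝔐_h(κ, N). -/
open MeasureTheory Set

namespace Stmt8Aux

open intervalIntegral

lemma bern {x θ : ℝ} (hx0 : 0 ≤ x) (hx1 : x ≤ 1) (hθ : 0 < θ) :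
    min 1 θ * (1 - x) ≤ 1 - x ^ θ := by
  rcases le_or_gt 1 θ with h1 | h1
  · rw [min_eq_left h1]
    rcases hx0.lt_or_eq with hx | hx
    · have : x ^ θ ≤ x ^ (1:ℝ) := Real.rpow_le_rpow_of_exponent_ge hx hx1 h1
      rw [Real.rpow_one] at this
      linarith
    · rw [← hx, Real.zero_rpow hθ.ne']
      nlinarith [min_le_left 1 θ]
  · rw [min_eq_right h1.le]
    have hb : -1 ≤ x ^ θ - 1 := by
      have : (0:ℝ) ≤ x ^ θ := Real.rpow_nonneg hx0 _
      linarith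
    have hp : 1 ≤ θ⁻¹ := by
      rw [le_inv_comm₀ one_pos hθ]
      simpa using h1.le
    have hber := one_add_mul_self_le_rpow_one_add hb hp
    rw [add_sub_cancel, Real.rpow_rpow_inv hx0 hθ.ne'] at hber
    have h2 : θ * (1 + θ⁻¹ * (x ^ θ - 1)) ≤ θ * x :=
      mul_le_mul_of_nonneg_left hber hθ.le
    have h3 : θ * (θ⁻¹ * (x ^ θ - 1)) = x ^ θ - 1 := by
      field_simp
    nlinarith

lemma pointwise_t {t X : ℝ} (ht : 0 < t) (hX : 0 < X) {s : ℝ} :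
    (t / X ^ s) ^ 2 / t = t * X ^ (-(2 * s)) := by
  have hXs : (0:ℝ) < X ^ s := Real.rpow_pos_of_pos hX _
  have hX2 : (X ^ s) ^ 2 = X ^ (2 * s) := by
    rw [← Real.rpow_natCast (X ^ s) 2, ← Real.rpow_mul hX.le]
    norm_num [mul_comm s 2]
  rw [div_pow, hX2, Real.rpow_neg hX.le]
  have h2s : (0:ℝ) < X ^ (2*s) := Real.rpow_pos_of_pos hX _
  field_simp

lemma pointwise_y {y H : ℝ} (hy : 0 < y) {s : ℝ} :
    (H / y ^ s) ^ 2 / y = H ^ 2 * y ^ (-(2 * s + 1)) := by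
  have hys : (0:ℝ) < y ^ s := Real.rpow_pos_of_pos hy _
  have hy2 : (y ^ s) ^ 2 = y ^ (2 * s) := by
    rw [← Real.rpow_natCast (y ^ s) 2, ← Real.rpow_mul hy.le]
    norm_num [mul_comm s 2]
  rw [div_pow, hy2, Real.rpow_neg hy.le, Real.rpow_add hy, Real.rpow_one]
  have h2s : (0:ℝ) < y ^ (2*s) := Real.rpow_pos_of_pos hy _
  field_simp

section Helpers

variable {d : ℕ} {s : ℝ} {h hinv : ℝ → ℝ}
variable (hm : Measuring d h) (hiv : ∀ y : ℝ, 0 ≤ y → 0 ≤ hinv y ∧ h (hinv y) = y)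

include hm hiv

lemma hinv_mono {u v : ℝ} (hu : 0 ≤ u) (huv : u ≤ v) : hinv u ≤ hinv v := by
  by_contra hlt
  push_neg at hlt
  have h1 := hm.mono (hiv v (hu.trans huv)).1 (hiv u hu).1 hlt
  rw [(hiv v (hu.trans huv)).2, (hiv u hu).2] at h1
  linarith

lemma hinv_pos {u : ℝ} (hu : 0 < u) : 0 < hinv u := by
  rcases (hiv u hu.le).1.lt_or_eq with h1 | h1
  · exact h1
  · exfalso
    have := (hiv u hu.le).2
    rw [← h1, hm.zero] at this
    linarith

lemma hinv_scale (hd : 0 < (d : ℝ)) {u μ : ℝ} (hu : 0 < u) (hμ0 : 0 < μ) (hμ1 : μ ≤ 1) :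
    hinv (μ * u) ≤ μ ^ ((d : ℝ)⁻¹) * hinv u := by
  have hμu : 0 < μ * u := mul_pos hμ0 hu
  set r₁ := hinv (μ * u) with hr₁
  set r₂ := hinv u with hr₂
  have hr₁0 : 0 < r₁ := hinv_pos hm hiv hμu
  have hr₂0 : 0 < r₂ := hinv_pos hm hiv hu
  have hr12 : r₁ ≤ r₂ := hinv_mono hm hiv hμu.le (by nlinarith)
  have hrat := hm.ratio r₁ r₂ hr₁0 hr12
  rw [(hiv (μ * u) hμu.le).2, (hiv u hu.le).2] at hrat
  have hp₁ : (0:ℝ) < r₁ ^ (d:ℝ) := Real.rpow_pos_of_pos hr₁0 _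
  have hp₂ : (0:ℝ) < r₂ ^ (d:ℝ) := Real.rpow_pos_of_pos hr₂0 _
  have hkey : r₁ ^ (d:ℝ) ≤ μ * r₂ ^ (d:ℝ) := by
    rw [div_le_div_iff₀ hp₂ hp₁] at hrat
    nlinarith
  have h2 : (r₁ ^ (d:ℝ)) ^ ((d:ℝ)⁻¹) ≤ (μ * r₂ ^ (d:ℝ)) ^ ((d:ℝ)⁻¹) :=
    Real.rpow_le_rpow hp₁.le hkey (by positivity)
  rwa [Real.rpow_rpow_inv hr₁0.le hd.ne', Real.mul_rpow hμ0.le hp₂.le,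
    Real.rpow_rpow_inv hr₂0.le hd.ne'] at h2

lemma h_ge {A y : ℝ} (hA : 0 ≤ A) (hy : hinv A ≤ y) : A ≤ h y := by
  have h0 : (0:ℝ) ≤ hinv A := (hiv A hA).1
  have := hm.mono.monotoneOn h0 (h0.trans hy) hy
  rwa [(hiv A hA).2] at this

lemma h_le {B y : ℝ} (hB : 0 ≤ B) (hy0 : 0 ≤ y) (hy : y ≤ hinv B) : h y ≤ B := by
  have := hm.mono.monotoneOn hy0 (hiv B hB).1 hy
  rwa [(hiv B hB).2] at this

/-- integrability of the u-side integrand (with scaling) -/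
lemma integrable_u (hs : 0 < s) {μ A B : ℝ} (hμ : 0 < μ) (hA : 0 < A) (hAB : A ≤ B) :
    IntervalIntegrable (fun u => μ * u * hinv (μ * u) ^ (-(2 * s))) volume A B := by
  have huIcc : uIcc A B = Icc A B := uIcc_of_le hAB
  have hanti : AntitoneOn (fun u => hinv (μ * u) ^ (-(2 * s))) (uIcc A B) := by
    rw [huIcc]
    intro x hx y hy hxy
    have hx0 : 0 < μ * x := mul_pos hμ (hA.trans_le hx.1)
    have h1 : hinv (μ * x) ≤ hinv (μ * y) :=
      hinv_mono hm hiv hx0.le (by nlinarith [hx.1, hy.1])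
    exact Real.rpow_le_rpow_of_nonpos (hinv_pos hm hiv hx0) h1 (by linarith)
  have hint : IntervalIntegrable (fun u => hinv (μ * u) ^ (-(2 * s))) volume A B :=
    hanti.intervalIntegrable
  have hcont : ContinuousOn (fun u : ℝ => μ * u) (uIcc A B) :=
    (continuous_const.mul continuous_id).continuousOn
  simpa [mul_assoc] using hint.continuousOn_mul hcont

omit hm hiv

/-- integrability of the y-side integrand -/
lemma integrable_y (hm : Measuring d h) {Y₁ Y₂ : ℝ} (hY₁ : 0 < Y₁) (hY₂ : 0 < Y₂) :
    IntervalIntegrable (fun y => h y ^ 2 * y ^ (-(2 * s + 1))) volume Y₁ Y₂ := by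
  have hpos : ∀ y ∈ uIcc Y₁ Y₂, 0 < y := by
    intro y hy
    have h1 : min Y₁ Y₂ ≤ y := hy.1
    have h2 : (0:ℝ) < min Y₁ Y₂ := lt_min hY₁ hY₂
    linarith
  apply ContinuousOn.intervalIntegrable
  apply ContinuousOn.mul
  · exact ((hm.cont.mono (fun y hy => le_of_lt (hpos y hy))).pow 2)
  · exact continuousOn_id.rpow_const fun y hy => Or.inl (hpos y hy).ne'

end Helpers

section Block

variable {d : ℕ} {s : ℝ} {h hinv : ℝ → ℝ}
variable (hm : Measuring d h) (hiv : ∀ y : ℝ, 0 ≤ y → 0 ≤ hinv y ∧ h (hinv y) = y)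
variable (hs : 0 < s) (hsd : s < d)

include hm hiv hs hsd

set_option maxHeartbeats 1000000 in
lemma block {A B : ℝ} (hA : 0 < A) (hAB : A ≤ B) (hB2 : B ≤ 2 * A) :
    min 1 (2 * s / d) / (8 * s) * ∫ u in A..B, u * hinv u ^ (-(2 * s)) ≤
      ∫ y in hinv A..hinv B, h y ^ 2 * y ^ (-(2 * s + 1)) := by
  have hd : 0 < (d : ℝ) := hs.trans hsd
  have hBpos : 0 < B := hA.trans_le hAB
  set Y₁ := hinv A with hY₁def
  set Y₂ := hinv B with hY₂def
  have hY₁ : 0 < Y₁ := hinv_pos hm hiv hA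
  have hY12 : Y₁ ≤ Y₂ := hinv_mono hm hiv hA.le hAB
  have hY₂ : 0 < Y₂ := hY₁.trans_le hY12
  set θ := 2 * s / (d : ℝ) with hθdef
  have hθ : 0 < θ := by positivity
  set m := min 1 θ with hmdef
  have hm0 : 0 < m := lt_min one_pos hθ
  set X := Y₁ ^ (-(2 * s)) with hXdef
  have hX : 0 < X := Real.rpow_pos_of_pos hY₁ _
  -- lower bound for the y-integral
  have hR1 : ∫ y in Y₁..Y₂, A ^ 2 * y ^ (-(2 * s + 1)) ≤
      ∫ y in Y₁..Y₂, h y ^ 2 * y ^ (-(2 * s + 1)) := by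
    apply integral_mono_on hY12
    · apply ContinuousOn.intervalIntegrable
      apply ContinuousOn.mul continuousOn_const
      apply continuousOn_id.rpow_const
      intro y hy
      have h1 : min Y₁ Y₂ ≤ y := hy.1
      have h2 : (0:ℝ) < min Y₁ Y₂ := lt_min hY₁ hY₂
      exact Or.inl (show y ≠ 0 from (lt_of_lt_of_le h2 h1).ne')
    · exact integrable_y hm hY₁ hY₂
    · intro y hy
      have hy0 : 0 < y := hY₁.trans_le hy.1
      have hAy : A ≤ h y := h_ge hm hiv hA.le hy.1
      have : A ^ 2 ≤ h y ^ 2 := by nlinarith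
      exact mul_le_mul_of_nonneg_right this (Real.rpow_nonneg hy0.le _)
  have hR2 : ∫ y in Y₁..Y₂, A ^ 2 * y ^ (-(2 * s + 1)) =
      A ^ 2 * ((Y₁ ^ (-(2 * s)) - Y₂ ^ (-(2 * s))) / (2 * s)) := by
    rw [intervalIntegral.integral_const_mul, integral_rpow]
    · have he : -(2 * s + 1) + 1 = -(2 * s) := by ring
      rw [he]
      have : (0:ℝ) < 2 * s := by linarith
      field_simp
      ring
    · refine Or.inr ⟨fun hc => by have := neg_inj.mp hc; linarith, ?_⟩
      rw [uIcc_of_le hY12]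
      intro hc
      exact absurd hc.1 (by linarith)
  -- scaling bound : Y₂ ^ (-(2s)) ≤ (A/B)^θ * X
  have hABdiv : 0 < A / B := div_pos hA hBpos
  have hAB1 : A / B ≤ 1 := (div_le_one hBpos).mpr hAB
  have hscale : Y₁ ≤ (A / B) ^ ((d:ℝ)⁻¹) * Y₂ := by
    have := hinv_scale hm hiv hd hBpos hABdiv hAB1
    rwa [div_mul_cancel₀ _ hBpos.ne'] at this
  have hY2bound : Y₂ ^ (-(2 * s)) ≤ (A / B) ^ θ * X := by
    have h1 : ((A / B) ^ ((d:ℝ)⁻¹) * Y₂) ^ (-(2 * s)) ≤ Y₁ ^ (-(2 * s)) :=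
      Real.rpow_le_rpow_of_nonpos hY₁ hscale (by linarith)
    rw [Real.mul_rpow (by positivity) hY₂.le, ← Real.rpow_mul hABdiv.le] at h1
    have he : (d:ℝ)⁻¹ * -(2 * s) = -θ := by
      rw [hθdef]; field_simp
    rw [he] at h1
    have h2 : (A / B) ^ θ * ((A / B) ^ (-θ) * Y₂ ^ (-(2 * s))) ≤ (A / B) ^ θ * X :=
      mul_le_mul_of_nonneg_left h1 (Real.rpow_nonneg hABdiv.le _)
    rwa [← mul_assoc, ← Real.rpow_add hABdiv, add_neg_cancel, Real.rpow_zero, one_mul] at h2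
  -- Bernoulli
  have hbern : m * (1 - A / B) ≤ 1 - (A / B) ^ θ := bern hABdiv.le hAB1 hθ
  -- upper bound for the u-integral
  have hL1 : ∫ u in A..B, u * hinv u ^ (-(2 * s)) ≤ ∫ u in A..B, u * X := by
    apply integral_mono_on hAB
    · simpa using integrable_u hm hiv hs one_pos hA hAB
    · exact (continuousOn_id.mul continuousOn_const).intervalIntegrable
    · intro u hu
      have hu0 : 0 < u := hA.trans_le hu.1
      have h1 : Y₁ ≤ hinv u := hinv_mono hm hiv hA.le hu.1
      have h2 : hinv u ^ (-(2 * s)) ≤ X :=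
        Real.rpow_le_rpow_of_nonpos hY₁ h1 (by linarith)
      exact mul_le_mul_of_nonneg_left h2 hu0.le
  have hL2 : ∫ u in A..B, u * X = (B ^ 2 - A ^ 2) / 2 * X := by
    rw [intervalIntegral.integral_mul_const, integral_id]
  -- final arithmetic
  rw [hL2] at hL1
  rw [hR2] at hR1
  have hD : m * (1 - A / B) * X ≤ Y₁ ^ (-(2 * s)) - Y₂ ^ (-(2 * s)) := by
    have h1 : (1 - (A / B) ^ θ) * X ≤ X - Y₂ ^ (-(2 * s)) := by nlinarith
    nlinarith
  have hfrac : 1 - A / B = (B - A) / B := by field_simp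
  have hm1 : m ≤ 1 := min_le_left _ _
  have hstep : m / (8 * s) * ((B ^ 2 - A ^ 2) / 2 * X) ≤
      A ^ 2 * (m * (1 - A / B) * X / (2 * s)) := by
    have q : 0 ≤ 8 * A ^ 2 - A * B - B ^ 2 := by
      nlinarith [mul_nonneg (by linarith : (0:ℝ) ≤ 2 * A - B) (by linarith : (0:ℝ) ≤ B + 4 * A),
        mul_pos hA hBpos]
    have key : B * (B ^ 2 - A ^ 2) ≤ 8 * (A ^ 2 * (B - A)) := by
      nlinarith [mul_nonneg (sub_nonneg.mpr hAB) q]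
    have expand : A ^ 2 * (m * (1 - A / B) * X / (2 * s)) -
        m / (8 * s) * ((B ^ 2 - A ^ 2) / 2 * X)
        = m * X * (8 * (A ^ 2 * (B - A)) - B * (B ^ 2 - A ^ 2)) / (16 * s * B) := by
      field_simp
      ring
    have hnum : 0 ≤ m * X * (8 * (A ^ 2 * (B - A)) - B * (B ^ 2 - A ^ 2)) := by
      apply mul_nonneg (by positivity)
      linarith
    have h2 : 0 ≤ A ^ 2 * (m * (1 - A / B) * X / (2 * s)) -
        m / (8 * s) * ((B ^ 2 - A ^ 2) / 2 * X) := by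
      rw [expand]
      exact div_nonneg hnum (by positivity)
    linarith
  have hmain : min 1 θ / (8 * s) * ((B ^ 2 - A ^ 2) / 2 * X) ≤
      A ^ 2 * ((Y₁ ^ (-(2 * s)) - Y₂ ^ (-(2 * s))) / (2 * s)) := by
    refine hstep.trans ?_
    gcongr
  calc min 1 (2 * s / d) / (8 * s) * ∫ u in A..B, u * hinv u ^ (-(2 * s)) ≤
      min 1 θ / (8 * s) * ((B ^ 2 - A ^ 2) / 2 * X) := by
        apply mul_le_mul_of_nonneg_left hL1 (by positivity)
    _ ≤ A ^ 2 * ((Y₁ ^ (-(2 * s)) - Y₂ ^ (-(2 * s))) / (2 * s)) := hmain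
    _ ≤ ∫ y in Y₁..Y₂, h y ^ 2 * y ^ (-(2 * s + 1)) := hR1

lemma blocks (n : ℕ) : ∀ A B : ℝ, 0 < A → A ≤ B → B ≤ 2 ^ n * A →
    min 1 (2 * s / d) / (8 * s) * ∫ u in A..B, u * hinv u ^ (-(2 * s)) ≤
      ∫ y in hinv A..hinv B, h y ^ 2 * y ^ (-(2 * s + 1)) := by
  induction n with
  | zero =>
    intro A B hA hAB hBn
    rw [pow_zero, one_mul] at hBn
    exact block hm hiv hs hsd hA hAB (by linarith)
  | succ n ih =>
    intro A B hA hAB hBn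
    by_cases hB2 : B ≤ 2 * A
    · exact block hm hiv hs hsd hA hAB hB2
    · push_neg at hB2
      have hA2 : A ≤ B / 2 := by linarith
      have hmid : 0 < B / 2 := by linarith
      have hB2' : B / 2 ≤ 2 ^ n * A := by
        rw [pow_succ] at hBn; linarith
      have iu1 : IntervalIntegrable (fun u => u * hinv u ^ (-(2 * s))) volume A (B / 2) := by
        simpa using integrable_u hm hiv hs one_pos hA hA2
      have iu2 : IntervalIntegrable (fun u => u * hinv u ^ (-(2 * s))) volume (B / 2) B := by
        simpa using integrable_u hm hiv hs one_pos hmid (by linarith)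
      have hY1 : 0 < hinv A := hinv_pos hm hiv hA
      have hYm : 0 < hinv (B / 2) := hinv_pos hm hiv hmid
      have hY2 : 0 < hinv B := hinv_pos hm hiv (by linarith)
      have iy1 : IntervalIntegrable (fun y => h y ^ 2 * y ^ (-(2 * s + 1))) volume
          (hinv A) (hinv (B / 2)) := integrable_y hm hY1 hYm
      have iy2 : IntervalIntegrable (fun y => h y ^ 2 * y ^ (-(2 * s + 1))) volume
          (hinv (B / 2)) (hinv B) := integrable_y hm hYm hY2
      rw [← integral_add_adjacent_intervals iu1 iu2,
        ← integral_add_adjacent_intervals iy1 iy2, mul_add]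
      exact add_le_add (ih A (B / 2) hA hA2 hB2')
        (block hm hiv hs hsd hmid (by linarith) (by linarith))

lemma key_compare {A B : ℝ} (hA : 0 < A) (hAB : A ≤ B) :
    min 1 (2 * s / d) / (8 * s) * ∫ u in A..B, u * hinv u ^ (-(2 * s)) ≤
      ∫ y in hinv A..hinv B, h y ^ 2 * y ^ (-(2 * s + 1)) := by
  obtain ⟨n, hn⟩ := pow_unbounded_of_one_lt (B / A) (one_lt_two (α := ℝ))
  refine blocks hm hiv hs hsd n A B hA hAB ?_
  rw [div_lt_iff₀ hA] at hn
  linarith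

end Block

section Scale

variable {d : ℕ} {s : ℝ} {h hinv : ℝ → ℝ}
variable (hm : Measuring d h) (hiv : ∀ y : ℝ, 0 ≤ y → 0 ≤ hinv y ∧ h (hinv y) = y)
variable (hs : 0 < s) (hsd : s < d)

include hm hiv hs hsd

lemma fu_scale {μ x : ℝ} (hμ0 : 0 < μ) (hμ1 : μ ≤ 1) (hx : 0 < x) :
    μ ^ (1 - 2 * s / (d:ℝ)) * (x * hinv x ^ (-(2 * s))) ≤
      μ * x * hinv (μ * x) ^ (-(2 * s)) := by
  have hd : 0 < (d:ℝ) := hs.trans hsd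
  have hμx : 0 < μ * x := mul_pos hμ0 hx
  have hx0 : 0 < hinv x := hinv_pos hm hiv hx
  have h1 : hinv (μ * x) ≤ μ ^ ((d:ℝ)⁻¹) * hinv x := hinv_scale hm hiv hd hx hμ0 hμ1
  have h2 : (μ ^ ((d:ℝ)⁻¹) * hinv x) ^ (-(2 * s)) ≤ hinv (μ * x) ^ (-(2 * s)) :=
    Real.rpow_le_rpow_of_nonpos (hinv_pos hm hiv hμx) h1 (by linarith)
  rw [Real.mul_rpow (by positivity) hx0.le, ← Real.rpow_mul hμ0.le] at h2
  have he : (d:ℝ)⁻¹ * -(2 * s) = -(2 * s / (d:ℝ)) := by field_simp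
  rw [he] at h2
  have h3 : μ * x * (μ ^ (-(2 * s / (d:ℝ))) * hinv x ^ (-(2 * s))) ≤
      μ * x * hinv (μ * x) ^ (-(2 * s)) :=
    mul_le_mul_of_nonneg_left h2 hμx.le
  refine le_trans (le_of_eq ?_) h3
  have he2 : μ ^ (1 - 2 * s / (d:ℝ)) = μ * μ ^ (-(2 * s / (d:ℝ))) := by
    rw [sub_eq_add_neg, Real.rpow_add hμ0, Real.rpow_one]
  rw [he2]
  ring

end Scale

end Stmt8Aux

open Stmt8Aux intervalIntegral in
set_option maxHeartbeats 2000000 in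
/-- If `M ≥ c·κ·[∫_{h⁻¹(CM/N)}^{h⁻¹(M)} (h(y)/y^s)² dy/y]^{1/2}` with `N > 2C`, then
`M ≥ c'(c,C,s,d)·𝔐_h(κ,N)`, where `𝔐_h(κ,N)` is the unique solution `M★` of
`κ² ∫_{1/N}^1 [t/h⁻¹(M★t)^s]² dt/t = 1`. -/
theorem stmt8 (d : ℕ) (s : ℝ) (hs : 0 < s) (hsd : s < d)
    (c C : ℝ) (hc0 : 0 < c) (hC : 0 < C) :
    ∃ c' : ℝ, 0 < c' ∧ ∀ h hinv : ℝ → ℝ, Measuring d h →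
      (∀ y : ℝ, 0 ≤ y → 0 ≤ hinv y ∧ h (hinv y) = y) →
      ∀ κ N M Mstar : ℝ, 0 < κ → 2 ≤ N → 2 * C < N → 0 < M → 0 < Mstar →
        κ ^ 2 * ∫ t in Set.Ioc (1 / N) 1, (t / (hinv (Mstar * t)) ^ s) ^ 2 / t = 1 →
        c * κ * Real.sqrt
          (∫ y in Set.Ioc (hinv (C * M / N)) (hinv M), (h y / y ^ s) ^ 2 / y) ≤ M →
        c' * Mstar ≤ M := by
  have hd : 0 < (d : ℝ) := hs.trans hsd
  set θ := 2 * s / (d : ℝ) with hθdef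
  have hθ : 0 < θ := by positivity
  have hθ2 : θ < 2 := by
    rw [hθdef, div_lt_iff₀ hd]; linarith
  set c₀ := min 1 θ / (8 * s) with hc₀def
  have hc₀ : 0 < c₀ := by
    have : 0 < min 1 θ := lt_min one_pos hθ
    positivity
  set C₁ := max C 1 with hC₁def
  have hC₁1 : 1 ≤ C₁ := le_max_right _ _
  have hCC₁ : C ≤ C₁ := le_max_left _ _
  have hC₁pos : 0 < C₁ := lt_of_lt_of_le one_pos hC₁1
  set K₁ := c ^ 2 * c₀ / (1 + 4 * C₁ ^ 2 / 3) with hK₁def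
  have hK₁ : 0 < K₁ := by positivity
  set lam0 := (K₁ * C₁ ^ (2 - θ)) ^ θ⁻¹ with hlam0def
  have hC₁rp : 0 < C₁ ^ (2 - θ) := Real.rpow_pos_of_pos hC₁pos _
  have hlam0 : 0 < lam0 := Real.rpow_pos_of_pos (by positivity) _
  refine ⟨min (1 / C₁) lam0, lt_min (by positivity) hlam0, ?_⟩
  intro h hinv hm hiv κ N M Mstar hκ hN2 hCN hM hMs hEq hIneq
  have hNpos : 0 < N := by linarith
  have h2C₁ : 2 * C₁ ≤ N := by
    rcases le_total C 1 with hx | hx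
    · rw [hC₁def, max_eq_right hx]; linarith
    · rw [hC₁def, max_eq_left hx]; linarith
  have hC₁N : C₁ ≤ N := by linarith
  -- Step A : defining equation gives κ² * J(Mstar/N, Mstar) = Mstar²
  have h1N : 1 / N ≤ (1:ℝ) := by
    rw [div_le_one hNpos]; linarith
  have h1Npos : 0 < 1 / N := by positivity
  have hEqInt : (∫ t in Set.Ioc (1/N) 1, (t / (hinv (Mstar * t)) ^ s) ^ 2 / t)
      = ∫ t in (1/N)..1, Mstar⁻¹ * (Mstar * t * hinv (Mstar * t) ^ (-(2 * s))) := by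
    rw [intervalIntegral.integral_of_le h1N]
    refine setIntegral_congr_fun measurableSet_Ioc (fun t ht => ?_)
    have ht0 : 0 < t := lt_trans h1Npos ht.1
    have hX : 0 < hinv (Mstar * t) := hinv_pos hm hiv (mul_pos hMs ht0)
    rw [pointwise_t ht0 hX]
    field_simp
  have hEq' := hEq
  rw [hEqInt, intervalIntegral.integral_const_mul,
    intervalIntegral.integral_comp_mul_left
      (fun u => u * hinv u ^ (-(2 * s))) hMs.ne', smul_eq_mul] at hEq'
  have hMs' : Mstar ≠ 0 := hMs.ne'
  field_simp at hEq'
  -- hEq' : κ ^ 2 * ∫ x in Mstar / N..Mstar, x * hinv x ^ (-(2 * s)) = Mstar * Mstar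
  have hJcore : κ ^ 2 * ∫ u in (Mstar/N)..Mstar, u * hinv u ^ (-(2 * s)) = Mstar ^ 2 := by
    rw [hEq']
  -- Step B : trimming the top of J(Mstar/N, Mstar)
  set a1 := Mstar / N with ha1def
  set a2 := Mstar / (2 * C₁) with ha2def
  set a3 := Mstar / C₁ with ha3def
  have ha1 : 0 < a1 := by positivity
  have ha2 : 0 < a2 := by positivity
  have ha3 : 0 < a3 := by positivity
  have ha12 : a1 ≤ a2 := by
    rw [ha1def, ha2def]
    apply div_le_div_of_nonneg_left hMs.le (by positivity) h2C₁
  have ha23 : a2 ≤ a3 := by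
    rw [ha2def, ha3def]
    apply div_le_div_of_nonneg_left hMs.le (by positivity) (by linarith)
  have ha3M : a3 ≤ Mstar := by
    rw [ha3def, div_le_iff₀ hC₁pos]
    nlinarith
  set X₃ := hinv a3 ^ (-(2 * s)) with hX₃def
  have hhinva3 : 0 < hinv a3 := hinv_pos hm hiv ha3
  have hX₃ : 0 < X₃ := Real.rpow_pos_of_pos hhinva3 _
  have hU : ∫ u in a3..Mstar, u * hinv u ^ (-(2 * s)) ≤ Mstar ^ 2 / 2 * X₃ := by
    have h1 : ∫ u in a3..Mstar, u * hinv u ^ (-(2 * s)) ≤ ∫ u in a3..Mstar, u * X₃ := by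
      apply intervalIntegral.integral_mono_on ha3M
      · simpa using integrable_u hm hiv hs one_pos ha3 ha3M
      · exact (continuousOn_id.mul continuousOn_const).intervalIntegrable
      · intro u hu
        have hu0 : 0 < u := ha3.trans_le hu.1
        have h2 : hinv a3 ≤ hinv u := hinv_mono hm hiv ha3.le hu.1
        exact mul_le_mul_of_nonneg_left
          (Real.rpow_le_rpow_of_nonpos hhinva3 h2 (by linarith)) hu0.le
    rw [intervalIntegral.integral_mul_const, integral_id] at h1
    refine h1.trans ?_
    apply mul_le_mul_of_nonneg_right _ hX₃.le
    have hsq : 0 ≤ a3 ^ 2 := sq_nonneg a3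
    linarith
  have hLo : 3 * Mstar ^ 2 / (8 * C₁ ^ 2) * X₃ ≤ ∫ u in a2..a3, u * hinv u ^ (-(2 * s)) := by
    have h1 : ∫ u in a2..a3, u * X₃ ≤ ∫ u in a2..a3, u * hinv u ^ (-(2 * s)) := by
      apply intervalIntegral.integral_mono_on ha23
      · exact (continuousOn_id.mul continuousOn_const).intervalIntegrable
      · simpa using integrable_u hm hiv hs one_pos ha2 ha23
      · intro u hu
        have hu0 : 0 < u := ha2.trans_le hu.1
        have h2 : hinv u ≤ hinv a3 := hinv_mono hm hiv hu0.le hu.2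
        exact mul_le_mul_of_nonneg_left
          (Real.rpow_le_rpow_of_nonpos (hinv_pos hm hiv hu0) h2 (by linarith)) hu0.le
    rw [intervalIntegral.integral_mul_const, integral_id] at h1
    refine le_trans (le_of_eq ?_) h1
    rw [ha2def, ha3def]
    field_simp
    ring
  have hJsplit : ∫ u in a1..Mstar, u * hinv u ^ (-(2 * s)) =
      (∫ u in a1..a3, u * hinv u ^ (-(2 * s))) + ∫ u in a3..Mstar, u * hinv u ^ (-(2 * s)) := by
    rw [intervalIntegral.integral_add_adjacent_intervals]
    · simpa using integrable_u hm hiv hs one_pos ha1 (ha12.trans ha23)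
    · simpa using integrable_u hm hiv hs one_pos ha3 ha3M
  have hJmono : ∫ u in a2..a3, u * hinv u ^ (-(2 * s)) ≤
      ∫ u in a1..a3, u * hinv u ^ (-(2 * s)) := by
    rw [← intervalIntegral.integral_add_adjacent_intervals
      (by simpa using integrable_u hm hiv hs one_pos ha1 ha12 :
        IntervalIntegrable (fun u => u * hinv u ^ (-(2 * s))) volume a1 a2)
      (by simpa using integrable_u hm hiv hs one_pos ha2 ha23 :
        IntervalIntegrable (fun u => u * hinv u ^ (-(2 * s))) volume a2 a3)]
    have hnn : 0 ≤ ∫ u in a1..a2, u * hinv u ^ (-(2 * s)) := by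
      apply intervalIntegral.integral_nonneg ha12
      intro u hu
      have hu0 : 0 < u := ha1.trans_le hu.1
      exact mul_nonneg hu0.le (Real.rpow_nonneg (hiv u hu0.le).1 _)
    linarith
  have hTrim : Mstar ^ 2 ≤ (1 + 4 * C₁ ^ 2 / 3) *
      (κ ^ 2 * ∫ u in a1..a3, u * hinv u ^ (-(2 * s))) := by
    have hfrac : Mstar ^ 2 / 2 * X₃ ≤ (4 * C₁ ^ 2 / 3) * (3 * Mstar ^ 2 / (8 * C₁ ^ 2) * X₃) := by
      apply le_of_eq
      field_simp
      ring
    have hUp : ∫ u in a3..Mstar, u * hinv u ^ (-(2 * s)) ≤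
        (4 * C₁ ^ 2 / 3) * ∫ u in a1..a3, u * hinv u ^ (-(2 * s)) := by
      refine hU.trans (hfrac.trans ?_)
      exact mul_le_mul_of_nonneg_left (hLo.trans hJmono) (by positivity)
    have hκ2 : (0:ℝ) < κ ^ 2 := by positivity
    have hJnn : 0 ≤ ∫ u in a1..a3, u * hinv u ^ (-(2 * s)) := by
      apply intervalIntegral.integral_nonneg (ha12.trans ha23)
      intro u hu
      have hu0 : 0 < u := ha1.trans_le hu.1
      exact mul_nonneg hu0.le (Real.rpow_nonneg (hiv u hu0.le).1 _)
    calc Mstar ^ 2 = κ ^ 2 * ∫ u in a1..Mstar, u * hinv u ^ (-(2 * s)) := hJcore.symm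
      _ = κ ^ 2 * ((∫ u in a1..a3, u * hinv u ^ (-(2 * s))) +
            ∫ u in a3..Mstar, u * hinv u ^ (-(2 * s))) := by rw [hJsplit]
      _ ≤ κ ^ 2 * ((∫ u in a1..a3, u * hinv u ^ (-(2 * s))) +
            (4 * C₁ ^ 2 / 3) * ∫ u in a1..a3, u * hinv u ^ (-(2 * s))) := by
          apply mul_le_mul_of_nonneg_left _ hκ2.le
          linarith
      _ = (1 + 4 * C₁ ^ 2 / 3) * (κ ^ 2 * ∫ u in a1..a3, u * hinv u ^ (-(2 * s))) := by ring
  -- Step C : hypothesis squared, key comparison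
  have hCN' : C ≤ N := by linarith
  have hCMN : 0 < C * M / N := by positivity
  have hCMNle : C * M / N ≤ M := by
    rw [div_le_iff₀ hNpos]
    exact (mul_le_mul_of_nonneg_right hCN' hM.le).trans_eq (mul_comm N M)
  have hinvCMN : 0 < hinv (C * M / N) := hinv_pos hm hiv hCMN
  have hinvM : 0 < hinv M := hinv_pos hm hiv hM
  have hinvle : hinv (C * M / N) ≤ hinv M := hinv_mono hm hiv hCMN.le hCMNle
  have hFeq : (∫ y in Set.Ioc (hinv (C * M / N)) (hinv M), (h y / y ^ s) ^ 2 / y)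
      = ∫ y in (hinv (C * M / N))..(hinv M), h y ^ 2 * y ^ (-(2 * s + 1)) := by
    rw [intervalIntegral.integral_of_le hinvle]
    refine setIntegral_congr_fun measurableSet_Ioc (fun y hy => ?_)
    exact pointwise_y (lt_trans hinvCMN hy.1)
  have hFnn : 0 ≤ ∫ y in (hinv (C * M / N))..(hinv M), h y ^ 2 * y ^ (-(2 * s + 1)) := by
    apply intervalIntegral.integral_nonneg hinvle
    intro y hy
    have hy0 : 0 < y := hinvCMN.trans_le hy.1
    positivity
  have hM2 : (c * κ) ^ 2 *
      (∫ y in (hinv (C * M / N))..(hinv M), h y ^ 2 * y ^ (-(2 * s + 1))) ≤ M ^ 2 := by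
    have h1 : (c * κ * Real.sqrt
        (∫ y in Set.Ioc (hinv (C * M / N)) (hinv M), (h y / y ^ s) ^ 2 / y)) ^ 2 ≤ M ^ 2 := by
      apply pow_le_pow_left₀ _ hIneq 2
      positivity
    rw [hFeq] at h1
    rwa [mul_pow, Real.sq_sqrt hFnn] at h1
  have hKey : c₀ * (∫ u in (C * M / N)..M, u * hinv u ^ (-(2 * s))) ≤
      ∫ y in (hinv (C * M / N))..(hinv M), h y ^ 2 * y ^ (-(2 * s + 1)) :=
    key_compare hm hiv hs hsd hCMN hCMNle
  have hstep1 : (c * κ) ^ 2 * (c₀ * ∫ u in (C * M / N)..M, u * hinv u ^ (-(2 * s))) ≤ M ^ 2 :=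
    le_trans (mul_le_mul_of_nonneg_left hKey (by positivity)) hM2
  -- Step D : case split on lam = M / Mstar
  set lam := M / Mstar with hlamdef
  have hlam : 0 < lam := by positivity
  have hMlam : M = lam * Mstar := by
    rw [hlamdef]; field_simp
  rcases le_total (1 / C₁) lam with hcase | hcase
  · calc min (1 / C₁) lam0 * Mstar ≤ 1 / C₁ * Mstar :=
        mul_le_mul_of_nonneg_right (min_le_left _ _) hMs.le
      _ ≤ lam * Mstar := mul_le_mul_of_nonneg_right hcase hMs.le
      _ = M := hMlam.symm
  · -- lam ≤ 1/C₁
    set μ := C₁ * lam with hμdef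
    have hμ0 : 0 < μ := by positivity
    have hμ1 : μ ≤ 1 := by
      have h1 := mul_le_mul_of_nonneg_left hcase hC₁pos.le
      rwa [mul_one_div, div_self hC₁pos.ne'] at h1
    set J13 := ∫ u in a1..a3, u * hinv u ^ (-(2 * s)) with hJ13def
    have hJ13nn : 0 ≤ J13 := by
      rw [hJ13def]
      apply intervalIntegral.integral_nonneg (ha12.trans ha23)
      intro u hu
      have hu0 : 0 < u := ha1.trans_le hu.1
      exact mul_nonneg hu0.le (Real.rpow_nonneg (hiv u hu0.le).1 _)
    have hP : Mstar ^ 2 / (1 + 4 * C₁ ^ 2 / 3) ≤ κ ^ 2 * J13 := by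
      rw [div_le_iff₀ (by positivity)]
      exact hTrim.trans_eq (mul_comm _ _)
    -- interval inclusion
    have hC₁MN : 0 < C₁ * M / N := by positivity
    have hC₁MNle : C₁ * M / N ≤ M := by
      rw [div_le_iff₀ hNpos]
      exact (mul_le_mul_of_nonneg_right hC₁N hM.le).trans_eq (mul_comm N M)
    have hCM1 : C * M / N ≤ C₁ * M / N := by gcongr
    have hJ1 : (∫ u in (C₁ * M / N)..M, u * hinv u ^ (-(2 * s))) ≤
        ∫ u in (C * M / N)..M, u * hinv u ^ (-(2 * s)) := by
      rw [← intervalIntegral.integral_add_adjacent_intervals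
        (by simpa using integrable_u hm hiv hs one_pos hCMN hCM1 :
          IntervalIntegrable (fun u => u * hinv u ^ (-(2 * s))) volume (C * M / N) (C₁ * M / N))
        (by simpa using integrable_u hm hiv hs one_pos hC₁MN hC₁MNle :
          IntervalIntegrable (fun u => u * hinv u ^ (-(2 * s))) volume (C₁ * M / N) M)]
      have hnn : 0 ≤ ∫ u in (C * M / N)..(C₁ * M / N), u * hinv u ^ (-(2 * s)) := by
        apply intervalIntegral.integral_nonneg hCM1
        intro u hu
        have hu0 : 0 < u := hCMN.trans_le hu.1
        exact mul_nonneg hu0.le (Real.rpow_nonneg (hiv u hu0.le).1 _)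
      linarith
    -- scaling step
    have hend1 : μ * a1 = C₁ * M / N := by
      rw [hμdef, ha1def, hlamdef]; field_simp
    have hend2 : μ * a3 = M := by
      rw [hμdef, ha3def, hlamdef]; field_simp
    have hchainEq : (∫ u in (C₁ * M / N)..M, u * hinv u ^ (-(2 * s)))
        = μ * ∫ x in a1..a3, μ * x * hinv (μ * x) ^ (-(2 * s)) := by
      have hco := intervalIntegral.smul_integral_comp_mul_left
        (a := a1) (b := a3) (fun u => u * hinv u ^ (-(2 * s))) μ
      rw [← hend1, ← hend2, ← hco, smul_eq_mul]
    have hptw : μ ^ (1 - θ) * J13 ≤ ∫ x in a1..a3, μ * x * hinv (μ * x) ^ (-(2 * s)) := by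
      rw [hJ13def, ← intervalIntegral.integral_const_mul]
      apply intervalIntegral.integral_mono_on (ha12.trans ha23)
      · exact (by simpa using integrable_u hm hiv hs one_pos ha1 (ha12.trans ha23) :
          IntervalIntegrable (fun u => u * hinv u ^ (-(2 * s))) volume a1 a3).const_mul _
      · exact integrable_u hm hiv hs hμ0 ha1 (ha12.trans ha23)
      · intro x hx
        exact fu_scale hm hiv hs hsd hμ0 hμ1 (ha1.trans_le hx.1)
    have hμpow : μ ^ ((2:ℝ) - θ) = μ * μ ^ (1 - θ) := by
      rw [show (2:ℝ) - θ = 1 + (1 - θ) by ring, Real.rpow_add hμ0, Real.rpow_one]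
    -- main chain
    have hC2 : K₁ * μ ^ ((2:ℝ) - θ) * Mstar ^ 2 ≤ M ^ 2 := by
      calc K₁ * μ ^ ((2:ℝ) - θ) * Mstar ^ 2
          = c ^ 2 * c₀ * μ ^ ((2:ℝ) - θ) * (Mstar ^ 2 / (1 + 4 * C₁ ^ 2 / 3)) := by
            rw [hK₁def]; ring
        _ ≤ c ^ 2 * c₀ * μ ^ ((2:ℝ) - θ) * (κ ^ 2 * J13) := by
            apply mul_le_mul_of_nonneg_left hP
            have := Real.rpow_nonneg hμ0.le ((2:ℝ) - θ)
            positivity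
        _ = (c * κ) ^ 2 * (c₀ * (μ ^ ((2:ℝ) - θ) * J13)) := by ring
        _ = (c * κ) ^ 2 * (c₀ * (μ * (μ ^ (1 - θ) * J13))) := by rw [hμpow]; ring_nf
        _ ≤ (c * κ) ^ 2 * (c₀ * (μ * ∫ x in a1..a3, μ * x * hinv (μ * x) ^ (-(2 * s)))) := by
            apply mul_le_mul_of_nonneg_left _ (by positivity)
            apply mul_le_mul_of_nonneg_left _ hc₀.le
            exact mul_le_mul_of_nonneg_left hptw hμ0.le
        _ = (c * κ) ^ 2 * (c₀ * ∫ u in (C₁ * M / N)..M, u * hinv u ^ (-(2 * s))) := by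
            rw [hchainEq]
        _ ≤ (c * κ) ^ 2 * (c₀ * ∫ u in (C * M / N)..M, u * hinv u ^ (-(2 * s))) := by
            apply mul_le_mul_of_nonneg_left _ (by positivity)
            exact mul_le_mul_of_nonneg_left hJ1 hc₀.le
        _ ≤ M ^ 2 := hstep1
    -- convert and conclude
    have hμexp : μ ^ ((2:ℝ) - θ) = C₁ ^ ((2:ℝ) - θ) * lam ^ ((2:ℝ) - θ) := by
      rw [hμdef, Real.mul_rpow hC₁pos.le hlam.le]
    have hC3 : K₁ * C₁ ^ ((2:ℝ) - θ) * lam ^ ((2:ℝ) - θ) ≤ lam ^ 2 := by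
      have h1 : K₁ * (C₁ ^ ((2:ℝ) - θ) * lam ^ ((2:ℝ) - θ)) * Mstar ^ 2 ≤ (lam * Mstar) ^ 2 := by
        rw [← hμexp, ← hMlam]; exact hC2
      have h2 : K₁ * C₁ ^ ((2:ℝ) - θ) * lam ^ ((2:ℝ) - θ) * Mstar ^ 2 ≤
          lam ^ 2 * Mstar ^ 2 := by
        rw [mul_pow] at h1
        linarith [h1]
      exact le_of_mul_le_mul_right h2 (by positivity)
    have hθsplit : lam ^ θ * lam ^ ((2:ℝ) - θ) = lam ^ 2 := by
      rw [← Real.rpow_add hlam, show θ + ((2:ℝ) - θ) = 2 by ring, Real.rpow_two]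
    have hfinal : K₁ * C₁ ^ ((2:ℝ) - θ) ≤ lam ^ θ := by
      apply le_of_mul_le_mul_right _ (Real.rpow_pos_of_pos hlam ((2:ℝ) - θ))
      calc K₁ * C₁ ^ ((2:ℝ) - θ) * lam ^ ((2:ℝ) - θ) ≤ lam ^ 2 := hC3
        _ = lam ^ θ * lam ^ ((2:ℝ) - θ) := hθsplit.symm
    have hlamge : lam0 ≤ lam := by
      rw [hlam0def]
      calc (K₁ * C₁ ^ (2 - θ)) ^ θ⁻¹ ≤ (lam ^ θ) ^ θ⁻¹ := by
            apply Real.rpow_le_rpow (by positivity) hfinal (by positivity)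
        _ = lam := Real.rpow_rpow_inv hlam.le hθ.ne'
    calc min (1 / C₁) lam0 * Mstar ≤ lam0 * Mstar :=
        mul_le_mul_of_nonneg_right (min_le_right _ _) hMs.le
      _ ≤ lam * Mstar := mul_le_mul_of_nonneg_right hlamge hMs.le
      _ = M := hMlam.symm
end

section
/- Let h be a measuring function, t₁ > 0, and define h̄(t) = t^d·h(t₁)/t₁^d for 0 ≤ t < t₁ and h̄(t) = h(t) for t ≥ t₁. Let α ∈ (0,1), and suppose F, G ⊆ ℝ^d are such that B(x, α t₁) ⊆ G for every x ∈ F. Then M_h(F) ≤ C(α,d) · M_{h̄}(G). -/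
open MeasureTheory Set

/-- The modified gauge `h̄`: equal to `t^d h(t₁)/t₁^d` for `t < t₁` and to `h` afterwards. -/
noncomputable def hbar (d : ℕ) (h : ℝ → ℝ) (t₁ : ℝ) (t : ℝ) : ℝ :=
  if t < t₁ then t ^ d * h t₁ / t₁ ^ d else h t

namespace Stmt9Aux

lemma m_nonneg {d : ℕ} {h : ℝ → ℝ} (hm : Measuring d h) {r : ℝ} (hr : 0 ≤ r) :
    0 ≤ h r := by
  rcases eq_or_lt_of_le hr with rfl | hr'
  · exact le_of_eq hm.zero.symm
  · exact le_of_lt (hm.zero ▸ hm.mono (le_refl (0:ℝ)) (le_of_lt hr') hr')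

lemma m_mono {d : ℕ} {h : ℝ → ℝ} (hm : Measuring d h) {a b : ℝ} (ha : 0 ≤ a)
    (hab : a ≤ b) : h a ≤ h b :=
  hm.mono.monotoneOn ha (le_trans ha hab) hab

lemma m_doubling {d : ℕ} {h : ℝ → ℝ} (hm : Measuring d h) {r : ℝ} (hr : 0 < r) :
    h (2 * r) ≤ 2 ^ d * h r := by
  have key := hm.ratio r (2 * r) hr (by linarith)
  have h1 : (0:ℝ) < r ^ (d : ℝ) := Real.rpow_pos_of_pos hr _
  have h2 : (0:ℝ) < (2 * r) ^ (d : ℝ) := Real.rpow_pos_of_pos (by linarith) _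
  rw [div_le_div_iff₀ h2 h1] at key
  have hmul : (2 * r) ^ (d : ℝ) = 2 ^ (d : ℝ) * r ^ (d : ℝ) :=
    Real.mul_rpow (by norm_num) hr.le
  have h2d : (2:ℝ) ^ (d : ℝ) = 2 ^ d := Real.rpow_natCast 2 d
  rw [hmul, h2d] at key
  exact (mul_le_mul_iff_of_pos_right h1).1 (by linarith [key])

lemma hbar_nonneg {d : ℕ} {h : ℝ → ℝ} (hm : Measuring d h) {t₁ : ℝ} (ht₁ : 0 < t₁) {r : ℝ}
    (hr : 0 ≤ r) : 0 ≤ hbar d h t₁ r := by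
  unfold hbar
  split
  · have := m_nonneg hm ht₁.le
    positivity
  · exact m_nonneg hm hr

lemma big_bound {d : ℕ} {h : ℝ → ℝ} (hm : Measuring d h) {α t₁ : ℝ} (hα0 : 0 < α)
    (hα1 : α < 1) (ht₁ : 0 < t₁) {r : ℝ} (hr : α * t₁ ≤ r) :
    h (r + α * t₁) ≤ (2 / α) ^ d * hbar d h t₁ r := by
  have hε : 0 < α * t₁ := by positivity
  have hr0 : 0 < r := lt_of_lt_of_le hε hr
  have step1 : h (r + α * t₁) ≤ h (2 * r) := m_mono hm (by linarith) (by linarith)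
  by_cases ht : r < t₁
  · rw [hbar, if_pos ht]
    have step2 : h (2 * r) ≤ h (2 * t₁) := m_mono hm (by linarith) (by linarith)
    have step3 : h (2 * t₁) ≤ 2 ^ d * h t₁ := m_doubling hm ht₁
    have e1 : (2 / α) ^ d * ((α * t₁) ^ d * h t₁ / t₁ ^ d) = 2 ^ d * h t₁ := by
      rw [div_pow, mul_pow]
      field_simp
    have e2 : (α * t₁) ^ d ≤ r ^ d := pow_le_pow_left₀ hε.le hr d
    have ht₁d : (0:ℝ) < t₁ ^ d := by positivity
    have hh1 : 0 ≤ h t₁ := m_nonneg hm ht₁.le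
    calc h (r + α * t₁) ≤ 2 ^ d * h t₁ := by linarith
      _ = (2 / α) ^ d * ((α * t₁) ^ d * h t₁ / t₁ ^ d) := e1.symm
      _ ≤ (2 / α) ^ d * (r ^ d * h t₁ / t₁ ^ d) := by gcongr
  · rw [hbar, if_neg ht]
    have step3 : h (2 * r) ≤ 2 ^ d * h r := m_doubling hm hr0
    have h2d : (2:ℝ) ^ d ≤ (2 / α) ^ d := by
      apply pow_le_pow_left₀ (by norm_num)
      rw [le_div_iff₀ hα0]
      linarith
    have hhr : 0 ≤ h r := m_nonneg hm hr0.le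
    calc h (r + α * t₁) ≤ 2 ^ d * h r := by linarith
      _ ≤ (2 / α) ^ d * h r := by gcongr

lemma tsum_sum_type {β γ : Type*} (f : β ⊕ γ → ENNReal) :
    ∑' x, f x = ∑' b, f (Sum.inl b) + ∑' g, f (Sum.inr g) := by
  rw [← tsum_univ f, ← Set.range_inl_union_range_inr,
    ENNReal.summable.tsum_union_disjoint Set.isCompl_range_inl_range_inr.disjoint ENNReal.summable,
    tsum_range f Sum.inl_injective, tsum_range f Sum.inr_injective]

/-- Hausdorff content bound from an arbitrary countable cover. -/
lemma hContent_le_of_cover (d : ℕ) (h : ℝ → ℝ) (h0 : h 0 = 0)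
    {F : Set (EuclideanSpace ℝ (Fin d))} {ι : Type} [Countable ι]
    (c : ι → EuclideanSpace ℝ (Fin d)) (r : ι → ℝ)
    (hcov : F ⊆ ⋃ i, Metric.ball (c i) (r i)) :
    hContent d h F ≤ ∑' i, ENNReal.ofReal (h (r i)) := by
  haveI : Encodable ι := Encodable.ofCountable ι
  set c' : ℕ → EuclideanSpace ℝ (Fin d) :=
    fun n => ((Encodable.decode₂ ι n).map c).getD 0 with hc'
  set r' : ℕ → ℝ := fun n => ((Encodable.decode₂ ι n).map r).getD 0 with hr'
  have hcov' : F ⊆ ⋃ n, Metric.ball (c' n) (r' n) := by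
    intro x hx
    rcases Set.mem_iUnion.1 (hcov hx) with ⟨i, hi⟩
    refine Set.mem_iUnion.2 ⟨Encodable.encode i, ?_⟩
    simp only [hc', hr', Encodable.decode₂_encode, Option.map_some, Option.getD_some]
    exact hi
  have hsum : ∑' n, ENNReal.ofReal (h (r' n)) = ∑' i, ENNReal.ofReal (h (r i)) := by
    have hinj : Function.Injective (Encodable.encode : ι → ℕ) := Encodable.encode_injective
    have hsupp : Function.support (fun n => ENNReal.ofReal (h (r' n))) ⊆
        Set.range (Encodable.encode : ι → ℕ) := by
      intro n hn
      by_contra hrange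
      apply hn
      have hdec : Encodable.decode₂ ι n = none := by
        rcases Option.eq_none_or_eq_some (Encodable.decode₂ ι n) with h' | ⟨i, h'⟩
        · exact h'
        · exact absurd ⟨i, (Encodable.mem_decode₂.1 h')⟩ hrange
      simp only [hr', hdec, Option.map_none, Option.getD_none, h0, ENNReal.ofReal_zero]
    have := Function.Injective.tsum_eq hinj hsupp
      (f := fun n => ENNReal.ofReal (h (r' n)))
    rw [← this]
    refine tsum_congr fun i => ?_
    simp only [hr', Encodable.decode₂_encode, Option.map_some, Option.getD_some]
  calc hContent d h F ≤ ∑' n, ENNReal.ofReal (h (r' n)) :=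
        iInf_le_of_le c' (iInf_le_of_le r' (iInf_le_of_le hcov' le_rfl))
    _ = _ := hsum

lemma exists_net {X : Type*} [MetricSpace X] {ε : ℝ} (hε : 0 < ε) (A : Set X) :
    ∃ T : Set X, T ⊆ A ∧ (∀ x ∈ T, ∀ y ∈ T, x ≠ y → ε ≤ dist x y) ∧
      A ⊆ ⋃ t ∈ T, Metric.ball t ε := by
  have hchain : ∀ ch ⊆ {T : Set X | T ⊆ A ∧ ∀ x ∈ T, ∀ y ∈ T, x ≠ y → ε ≤ dist x y},
      IsChain (· ⊆ ·) ch → ∃ ub ∈ {T : Set X | T ⊆ A ∧ ∀ x ∈ T, ∀ y ∈ T, x ≠ y → ε ≤ dist x y},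
        ∀ s ∈ ch, s ⊆ ub := by
    intro ch hchS hch
    refine ⟨⋃₀ ch, ⟨?_, ?_⟩, fun s hs => Set.subset_sUnion_of_mem hs⟩
    · exact Set.sUnion_subset fun s hs => (hchS hs).1
    · intro x hx y hy hxy
      obtain ⟨s, hs, hxs⟩ := hx
      obtain ⟨t, ht, hyt⟩ := hy
      rcases hch.total hs ht with hst | hts
      · exact (hchS ht).2 x (hst hxs) y hyt hxy
      · exact (hchS hs).2 x hxs y (hts hyt) hxy
  obtain ⟨T, hTmax⟩ := zorn_subset
      {T : Set X | T ⊆ A ∧ ∀ x ∈ T, ∀ y ∈ T, x ≠ y → ε ≤ dist x y} hchain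
  obtain ⟨hTA, hTsep⟩ := hTmax.prop
  refine ⟨T, hTA, hTsep, ?_⟩
  intro x hx
  by_contra hxmem
  simp only [Set.mem_iUnion, Metric.mem_ball, not_exists, not_lt] at hxmem
  have hxT : x ∉ T := fun hxT => absurd (by simpa using hε) (not_lt.2 (by simpa using hxmem x hxT))
  have hmem : insert x T ∈ {T : Set X | T ⊆ A ∧ ∀ x ∈ T, ∀ y ∈ T, x ≠ y → ε ≤ dist x y} := by
    constructor
    · exact Set.insert_subset hx hTA
    · intro a ha b hb hab
      rcases ha with rfl | ha
      · rcases hb with rfl | hb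
        · exact absurd rfl hab
        · exact hxmem b hb
      · rcases hb with rfl | hb
        · rw [dist_comm]; exact hxmem a ha
        · exact hTsep a ha b hb hab
  have heq : T = insert x T := hTmax.eq_of_subset hmem (Set.subset_insert x T)
  have : x ∈ T := by rw [heq]; exact Set.mem_insert x T
  exact hxT this

end Stmt9Aux

open Stmt9Aux in
/-- If every point of `F` has its ball of radius `α·t₁` contained in `G`, then
`M_h(F) ≤ C(α,d)·M_{h̄}(G)`. -/
theorem stmt9 (d : ℕ) (hd : 0 < d) (α : ℝ) (hα0 : 0 < α) (hα1 : α < 1) :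
    ∃ C : ℝ, 0 < C ∧ ∀ h : ℝ → ℝ, Measuring d h → ∀ t₁ : ℝ, 0 < t₁ →
      ∀ F G : Set (EuclideanSpace ℝ (Fin d)),
        (∀ x ∈ F, Metric.ball x (α * t₁) ⊆ G) →
        hContent d h F ≤ ENNReal.ofReal C * hContent d (hbar d h t₁) G := by
  refine ⟨2 * (2 / α) ^ d, by positivity, ?_⟩
  intro h hm t₁ ht₁ F G hFG
  haveI : Nontrivial (EuclideanSpace ℝ (Fin d)) :=
    Module.nontrivial_of_finrank_pos (R := ℝ) (by rw [finrank_euclideanSpace_fin]; exact hd)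
  have hε : 0 < α * t₁ := by positivity
  set K : ENNReal := ENNReal.ofReal ((2 / α) ^ d) with hK
  have hC2K : ENNReal.ofReal (2 * (2 / α) ^ d) = 2 * K := by
    rw [ENNReal.ofReal_mul (by norm_num), ENNReal.ofReal_ofNat]
  have hC0 : ENNReal.ofReal (2 * (2 / α) ^ d) ≠ 0 := by
    rw [ne_eq, ENNReal.ofReal_eq_zero, not_le]
    positivity
  have hCtop : ENNReal.ofReal (2 * (2 / α) ^ d) ≠ ⊤ := ENNReal.ofReal_ne_top
  -- the key estimate for an arbitrary cover of G
  have key : ∀ (c : ℕ → EuclideanSpace ℝ (Fin d)) (r : ℕ → ℝ), G ⊆ ⋃ n, Metric.ball (c n) (r n) →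
      hContent d h F ≤ ENNReal.ofReal (2 * (2 / α) ^ d) *
        ∑' n, ENNReal.ofReal (hbar d h t₁ (r n)) := by
    intro c r hcov
    set Sfull : ENNReal := ∑' n, ENNReal.ofReal (hbar d h t₁ (r n)) with hSfull
    -- the set of points of F far from all enlarged big balls
    set F₁ : Set (EuclideanSpace ℝ (Fin d)) := {x | x ∈ F ∧ ∀ n, α * t₁ ≤ r n → x ∉ Metric.ball (c n) (r n + α * t₁)}
      with hF₁
    have claim1 : ∀ x ∈ F₁, Metric.ball x (α * t₁) ⊆
        ⋃ (m : {n : ℕ // r n < α * t₁}), Metric.ball (c m.1) (r m.1) := by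
      intro x hx y hy
      have hyG : y ∈ G := hFG x hx.1 hy
      obtain ⟨n, hn⟩ := Set.mem_iUnion.1 (hcov hyG)
      by_cases hbig : α * t₁ ≤ r n
      · exfalso
        apply hx.2 n hbig
        have h1 : dist x y < α * t₁ := by rw [dist_comm]; exact Metric.mem_ball.1 hy
        have h2 : dist y (c n) < r n := Metric.mem_ball.1 hn
        have := dist_triangle x y (c n)
        exact Metric.mem_ball.2 (by linarith)
      · exact Set.mem_iUnion.2 ⟨⟨n, lt_of_not_ge hbig⟩, hn⟩
    -- choose a maximal (α t₁)-separated subset of F₁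
    obtain ⟨T, hTF₁, hTsep, hTcov⟩ := exists_net hε F₁
    have hTc : T.Countable := by
      apply Set.PairwiseDisjoint.countable_of_isOpen
        (s := fun x : EuclideanSpace ℝ (Fin d) => Metric.ball x (α * t₁ / 2))
      · intro x hx y hy hxy
        exact Metric.ball_disjoint_ball (by have := hTsep x hx y hy hxy; linarith)
      · exact fun _ _ => Metric.isOpen_ball
      · exact fun x _ => Metric.nonempty_ball.2 (by linarith)
    haveI : Countable ↥T := hTc.to_subtype
    -- volume counting
    set B : ENNReal := volume (Metric.ball (0 : EuclideanSpace ℝ (Fin d)) 1) with hB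
    have hB0 : B ≠ 0 := (Metric.measure_ball_pos volume 0 one_pos).ne'
    have hBtop : B ≠ ⊤ := measure_ball_lt_top.ne
    have hvol : ∀ (x : EuclideanSpace ℝ (Fin d)) (ρ : ℝ), 0 ≤ ρ →
        volume (Metric.ball x ρ) = ENNReal.ofReal (ρ ^ d) * B := by
      intro x ρ hρ
      rw [hB, Measure.addHaar_ball volume x hρ, finrank_euclideanSpace_fin]
    have count : ∑' (_ : T), ENNReal.ofReal ((α * t₁ / 2) ^ d) ≤
        ∑' (m : {n : ℕ // r n < α * t₁}), ENNReal.ofReal (r m.1 ^ d) := by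
      have hdisj : Pairwise (Function.onFun Disjoint
          fun t : T => Metric.ball (t : EuclideanSpace ℝ (Fin d)) (α * t₁ / 2)) := by
        intro t s hts
        refine Metric.ball_disjoint_ball ?_
        have := hTsep t t.2 s s.2 (fun hh => hts (Subtype.ext hh))
        linarith
      have hsum1 : ∑' (t : T), volume (Metric.ball (t : EuclideanSpace ℝ (Fin d)) (α * t₁ / 2)) =
          volume (⋃ t : T, Metric.ball (t : EuclideanSpace ℝ (Fin d)) (α * t₁ / 2)) :=
        (measure_iUnion hdisj fun t => measurableSet_ball).symm
      have hincl : (⋃ t : T, Metric.ball (t : EuclideanSpace ℝ (Fin d)) (α * t₁ / 2)) ⊆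
          ⋃ (m : {n : ℕ // r n < α * t₁}), Metric.ball (c m.1) (r m.1) := by
        refine Set.iUnion_subset fun t => ?_
        exact subset_trans (Metric.ball_subset_ball (by linarith)) (claim1 t (hTF₁ t.2))
      have hsum2 : volume (⋃ (m : {n : ℕ // r n < α * t₁}), Metric.ball (c m.1) (r m.1)) ≤
          ∑' (m : {n : ℕ // r n < α * t₁}), volume (Metric.ball (c m.1) (r m.1)) :=
        measure_iUnion_le _
      have hvol2 : ∀ (m : {n : ℕ // r n < α * t₁}),
          volume (Metric.ball (c m.1) (r m.1)) ≤ ENNReal.ofReal (r m.1 ^ d) * B := by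
        intro m
        rcases le_or_gt 0 (r m.1) with hρ | hρ
        · exact le_of_eq (hvol _ _ hρ)
        · rw [Metric.ball_eq_empty.2 hρ.le, measure_empty]
          exact zero_le
      have main : (∑' (_ : T), ENNReal.ofReal ((α * t₁ / 2) ^ d)) * B ≤
          (∑' (m : {n : ℕ // r n < α * t₁}), ENNReal.ofReal (r m.1 ^ d)) * B := by
        rw [← ENNReal.tsum_mul_right, ← ENNReal.tsum_mul_right]
        calc ∑' (t : T), ENNReal.ofReal ((α * t₁ / 2) ^ d) * B
            = ∑' (t : T), volume (Metric.ball (t : EuclideanSpace ℝ (Fin d)) (α * t₁ / 2)) := by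
              refine tsum_congr fun t => (hvol _ _ (by positivity)).symm
          _ = volume (⋃ t : T, Metric.ball (t : EuclideanSpace ℝ (Fin d)) (α * t₁ / 2)) := hsum1
          _ ≤ volume (⋃ (m : {n : ℕ // r n < α * t₁}), Metric.ball (c m.1) (r m.1)) :=
              measure_mono hincl
          _ ≤ ∑' (m : {n : ℕ // r n < α * t₁}), volume (Metric.ball (c m.1) (r m.1)) := hsum2
          _ ≤ ∑' (m : {n : ℕ // r n < α * t₁}), ENNReal.ofReal (r m.1 ^ d) * B :=
              ENNReal.tsum_le_tsum hvol2
      exact (ENNReal.mul_le_mul_iff_left hB0 hBtop).1 main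
    -- cost of the net part
    have costT : ∑' (_ : T), ENNReal.ofReal (h (α * t₁)) ≤ K * Sfull := by
      have hht₁ : 0 ≤ h t₁ := m_nonneg hm ht₁.le
      have ht₁d : (0:ℝ) < t₁ ^ d := by positivity
      have hle : ENNReal.ofReal (h (α * t₁)) ≤
          K * ENNReal.ofReal (h t₁ / t₁ ^ d) * ENNReal.ofReal ((α * t₁ / 2) ^ d) := by
        rw [hK, ← ENNReal.ofReal_mul (by positivity), ← ENNReal.ofReal_mul (by positivity)]
        apply ENNReal.ofReal_le_ofReal
        have hid : (2 / α) ^ d * (h t₁ / t₁ ^ d) * (α * t₁ / 2) ^ d = h t₁ := by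
          rw [div_pow, div_pow, mul_pow]
          field_simp
        rw [hid]
        exact m_mono hm hε.le (by nlinarith)
      calc ∑' (_ : T), ENNReal.ofReal (h (α * t₁))
          ≤ ∑' (_ : T), (K * ENNReal.ofReal (h t₁ / t₁ ^ d) *
              ENNReal.ofReal ((α * t₁ / 2) ^ d)) := ENNReal.tsum_le_tsum fun _ => hle
        _ = K * ENNReal.ofReal (h t₁ / t₁ ^ d) *
              ∑' (_ : T), ENNReal.ofReal ((α * t₁ / 2) ^ d) := ENNReal.tsum_mul_left
        _ ≤ K * ENNReal.ofReal (h t₁ / t₁ ^ d) *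
              ∑' (m : {n : ℕ // r n < α * t₁}), ENNReal.ofReal (r m.1 ^ d) :=
            mul_le_mul_right count _
        _ = K * ∑' (m : {n : ℕ // r n < α * t₁}),
              ENNReal.ofReal (h t₁ / t₁ ^ d) * ENNReal.ofReal (r m.1 ^ d) := by
            rw [ENNReal.tsum_mul_left (a := ENNReal.ofReal (h t₁ / t₁ ^ d)), mul_assoc]
        _ = K * ∑' (m : {n : ℕ // r n < α * t₁}), ENNReal.ofReal (hbar d h t₁ (r m.1)) := by
            congr 1
            refine tsum_congr fun m => ?_
            rw [← ENNReal.ofReal_mul (by positivity)]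
            congr 1
            rw [hbar, if_pos (lt_trans m.2 (by nlinarith))]
            ring
        _ ≤ K * Sfull := by
            refine mul_le_mul_right ?_ _
            exact ENNReal.tsum_comp_le_tsum_of_injective Subtype.val_injective
              (fun n => ENNReal.ofReal (hbar d h t₁ (r n)))
    -- cost of the enlarged big balls
    have costBig : ∑' n, ENNReal.ofReal (h (if α * t₁ ≤ r n then r n + α * t₁ else 0)) ≤
        K * Sfull := by
      rw [hSfull, ← ENNReal.tsum_mul_left]
      refine ENNReal.tsum_le_tsum fun n => ?_
      by_cases hbig : α * t₁ ≤ r n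
      · rw [if_pos hbig]
        calc ENNReal.ofReal (h (r n + α * t₁))
            ≤ ENNReal.ofReal ((2 / α) ^ d * hbar d h t₁ (r n)) :=
              ENNReal.ofReal_le_ofReal (big_bound hm hα0 hα1 ht₁ hbig)
          _ = K * ENNReal.ofReal (hbar d h t₁ (r n)) := ENNReal.ofReal_mul (by positivity)
      · rw [if_neg hbig, hm.zero, ENNReal.ofReal_zero]
        exact zero_le
    -- the combined cover of F
    let cc : ↥T ⊕ ℕ → EuclideanSpace ℝ (Fin d) := Sum.elim (fun t => (t : EuclideanSpace ℝ (Fin d))) c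
    let rr : ↥T ⊕ ℕ → ℝ := Sum.elim (fun _ => α * t₁)
      (fun n => if α * t₁ ≤ r n then r n + α * t₁ else 0)
    have hccov : F ⊆ ⋃ i, Metric.ball (cc i) (rr i) := by
      intro x hx
      by_cases h1 : ∀ n, α * t₁ ≤ r n → x ∉ Metric.ball (c n) (r n + α * t₁)
      · have hx1 : x ∈ F₁ := ⟨hx, h1⟩
        obtain ⟨t, ht, hxt⟩ := Set.mem_iUnion₂.1 (hTcov hx1)
        exact Set.mem_iUnion.2 ⟨Sum.inl ⟨t, ht⟩, hxt⟩
      · push_neg at h1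
        obtain ⟨n, hn1, hn2⟩ := h1
        refine Set.mem_iUnion.2 ⟨Sum.inr n, ?_⟩
        simpa only [cc, rr, Sum.elim_inr, if_pos hn1] using hn2
    have total := hContent_le_of_cover d h hm.zero cc rr hccov
    rw [tsum_sum_type] at total
    calc hContent d h F ≤ _ := total
      _ ≤ K * Sfull + K * Sfull := add_le_add costT costBig
      _ = ENNReal.ofReal (2 * (2 / α) ^ d) * Sfull := by rw [hC2K, two_mul, add_mul]
  -- conclude by taking the infimum over covers of G
  have hrw : ENNReal.ofReal (2 * (2 / α) ^ d) * hContent d (hbar d h t₁) G =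
      ⨅ (c : ℕ → EuclideanSpace ℝ (Fin d)) (r : ℕ → ℝ) (_ : G ⊆ ⋃ n, Metric.ball (c n) (r n)),
        ENNReal.ofReal (2 * (2 / α) ^ d) * ∑' n, ENNReal.ofReal (hbar d h t₁ (r n)) := by
    rw [hContent]
    rw [ENNReal.mul_iInf_of_ne hC0 hCtop]
    refine iInf_congr fun c => ?_
    rw [ENNReal.mul_iInf_of_ne hC0 hCtop]
    refine iInf_congr fun r => ?_
    rw [ENNReal.mul_iInf_of_ne hC0 hCtop]
  rw [hrw]
  exact le_iInf fun c => le_iInf fun r => le_iInf fun hcov => key c r hcov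
end

section
/- Let ν be a finite positive Borel measure on ℝ^d, 0 < s < d, and C₂ > 10·2^s. Suppose x₀ ∈ ℝ^d satisfies |ν|(B(x₀, r)) < C₂^{−1} P r^s for all r > 0 and |ν|(B(x₀, t₁)) = 0 for some t₁ > 0, and that |R^s_{ν,ε}(x₀)| > P for some ε > 0.9·t₁, where R^s_{ν,ε}(x) = ∫_{|y−x|>ε} (y−x)/|y−x|^{s+1} dν(y). Then for C₂ large enough (depending only on s), every x with |x − x₀| < 0.4·t₁ satisfies sup_{δ>0} |R^s_{ν,δ}(x)| > 0.8·P. -/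
set_option maxHeartbeats 1000000
open MeasureTheory Set

-- MVT lemma
lemma rpow_lip {q A B : ℝ} (hq : 1 ≤ q) (h0 : 0 < A) (hAB : A ≤ B) :
    B ^ q - A ^ q ≤ q * B ^ (q - 1) * (B - A) := by
  rcases eq_or_lt_of_le hAB with rfl | hlt
  · simp
  obtain ⟨c, hc, hceq⟩ := exists_hasDerivAt_eq_slope (fun x => x ^ q)
      (fun x => q * x ^ (q - 1)) hlt
      (by
        apply ContinuousOn.rpow_const continuousOn_id
        intro x hx
        exact Or.inl (ne_of_gt (h0.trans_le hx.1)))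
      (fun x hx => Real.hasDerivAt_rpow_const (Or.inr hq))
  have hc0 : 0 < c := h0.trans hc.1
  have : B ^ q - A ^ q = q * c ^ (q - 1) * (B - A) := by
    rw [eq_div_iff (by linarith : B - A ≠ 0)] at hceq
    linarith
  rw [this]
  have hcB : c ^ (q - 1) ≤ B ^ (q - 1) :=
    Real.rpow_le_rpow hc0.le hc.2.le (by linarith)
  have hq0 : 0 < q := by linarith
  nlinarith [Real.rpow_nonneg hc0.le (q-1), mul_le_mul_of_nonneg_left hcB hq0.le]

variable {X : Type*} [NormedAddCommGroup X] [NormedSpace ℝ X]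

lemma knorm {s : ℝ} (v : X) (hv : 0 < ‖v‖) :
    ‖(‖v‖ ^ (s + 1))⁻¹ • v‖ = ‖v‖ ^ (-s) := by
  rw [norm_smul, norm_inv, Real.norm_rpow_of_nonneg (norm_nonneg v), Real.norm_eq_abs,
    abs_of_nonneg (norm_nonneg v), ← Real.rpow_neg (norm_nonneg v)]
  nth_rewrite 2 [← Real.rpow_one ‖v‖]
  rw [← Real.rpow_add hv]
  ring_nf

lemma kdiff {s : ℝ} (hs : 0 < s) (u v : X) (hv : 0 < ‖v‖) (h : ‖u - v‖ ≤ ‖v‖ / 2) :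
    ‖(‖u‖ ^ (s + 1))⁻¹ • u - (‖v‖ ^ (s + 1))⁻¹ • v‖ ≤
      ((2:ℝ) ^ (s+1) + (s+1) * 4 ^ (s+1)) * ‖u - v‖ / ‖v‖ ^ (s+1) := by
  set q := s + 1 with hqdef
  have hq : 1 ≤ q := by rw [hqdef]; linarith
  have hq0 : 0 < q := by linarith
  set A := ‖u‖ with hA'
  set B := ‖v‖ with hB'
  set N := ‖u - v‖ with hN'
  have hN0 : 0 ≤ N := norm_nonneg _
  have hA : B / 2 ≤ A := by
    have := norm_sub_norm_le v u
    rw [norm_sub_rev] at this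
    simp only [← hA', ← hB', ← hN'] at this ⊢
    linarith
  have hA0 : 0 < A := lt_of_lt_of_le (by linarith) hA
  have hAB2 : A ≤ 2 * B := by
    have := norm_le_norm_add_norm_sub' u v
    simp only [← hA', ← hB', ← hN'] at this ⊢
    linarith
  have ha : 0 < A ^ q := Real.rpow_pos_of_pos hA0 q
  have hb : 0 < B ^ q := Real.rpow_pos_of_pos hv q
  have hc : (0:ℝ) < 2 ^ q := Real.rpow_pos_of_pos two_pos q
  have he : (0:ℝ) < (2*B) ^ (q-1) := Real.rpow_pos_of_pos (by linarith) _
  have h1 : (A ^ q)⁻¹ ≤ 2 ^ q / B ^ q := by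
    have f2 : (B/2) ^ q ≤ A ^ q := Real.rpow_le_rpow (by positivity) hA hq0.le
    have f1 : (B/2) ^ q = B ^ q / 2 ^ q :=
      Real.div_rpow hv.le (by norm_num : (0:ℝ) ≤ 2) q
    calc (A ^ q)⁻¹ ≤ ((B/2) ^ q)⁻¹ := by
          apply inv_anti₀ (by positivity) f2
      _ = 2 ^ q / B ^ q := by rw [f1, inv_div]
  have h2 : |B ^ q - A ^ q| ≤ q * (2*B) ^ (q-1) * N := by
    have hdist : |B - A| ≤ N := by
      have := abs_norm_sub_norm_le v u
      rw [norm_sub_rev] at this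
      simpa only [← hA', ← hB', ← hN'] using this
    rcases le_total A B with hle | hle
    · have hlip := rpow_lip hq hA0 hle
      have hm : B ^ (q-1) ≤ (2*B) ^ (q-1) :=
        Real.rpow_le_rpow hv.le (by linarith) (by linarith)
      rw [abs_of_nonneg (by nlinarith [Real.rpow_le_rpow hA0.le hle hq0.le])]
      have habs : B - A ≤ N := by rw [abs_le] at hdist; linarith [hdist.2]
      calc B ^ q - A ^ q ≤ q * B ^ (q-1) * (B - A) := hlip
        _ ≤ q * (2*B) ^ (q-1) * N := by
            apply mul_le_mul (by nlinarith) habs (by linarith) (by positivity)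
    · have hlip := rpow_lip hq hv hle
      have hm : A ^ (q-1) ≤ (2*B) ^ (q-1) :=
        Real.rpow_le_rpow hA0.le hAB2 (by linarith)
      rw [abs_sub_comm, abs_of_nonneg (by nlinarith [Real.rpow_le_rpow hv.le hle hq0.le])]
      have habs : A - B ≤ N := by rw [abs_le] at hdist; linarith [hdist.1]
      calc A ^ q - B ^ q ≤ q * A ^ (q-1) * (A - B) := hlip
        _ ≤ q * (2*B) ^ (q-1) * N := by
            apply mul_le_mul (by nlinarith) habs (by linarith) (by positivity)
  have h3 : (2*B) ^ (q-1) * B = 2 ^ (q-1) * B ^ q := by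
    rw [Real.mul_rpow (by norm_num) hv.le]
    have hB1 : B ^ (q-1) * B = B ^ q := by
      nth_rewrite 2 [← Real.rpow_one B]
      rw [← Real.rpow_add hv]
      ring_nf
    rw [mul_assoc, hB1]
  have h4 : (2:ℝ) ^ (q-1) * 2 ^ q ≤ 4 ^ q := by
    rw [← Real.rpow_add two_pos]
    have h44 : (4:ℝ) ^ q = (2:ℝ) ^ (2*q) := by
      rw [Real.rpow_mul (by norm_num : (0:ℝ) ≤ 2), show ((2:ℝ) ^ (2:ℝ)) = 4 by
        rw [show (2:ℝ) = ((2:ℕ):ℝ) by norm_num, Real.rpow_natCast]; norm_num]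
    rw [h44]
    exact Real.rpow_le_rpow_of_exponent_le one_le_two (by linarith)
  have decomp : (A ^ q)⁻¹ • u - (B ^ q)⁻¹ • v
      = (A ^ q)⁻¹ • (u - v) + ((A ^ q)⁻¹ - (B ^ q)⁻¹) • v := by
    rw [smul_sub, sub_smul]; abel
  rw [decomp]
  have h5 : |(A ^ q)⁻¹ - (B ^ q)⁻¹| = |B ^ q - A ^ q| / (A ^ q * B ^ q) := by
    rw [inv_sub_inv ha.ne' hb.ne', abs_div, abs_of_pos (by positivity : (0:ℝ) < A ^ q * B ^ q)]
  have t2a : (q * (2*B) ^ (q-1) * N) / (A ^ q * B ^ q) * B = q * N * 2 ^ (q-1) / A ^ q := by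
    rw [div_mul_eq_mul_div, div_eq_div_iff (by positivity) (by positivity)]
    linear_combination q * N * A ^ q * h3
  have t2b : q * N * 2 ^ (q-1) / A ^ q ≤ q * N * 2 ^ (q-1) * (2 ^ q / B ^ q) := by
    rw [div_eq_mul_inv]
    exact mul_le_mul_of_nonneg_left h1 (by positivity)
  have t2c : q * N * 2 ^ (q-1) * (2 ^ q / B ^ q) ≤ q * 4 ^ q * N / B ^ q := by
    rw [show q * N * 2 ^ (q-1) * (2 ^ q / B ^ q) = q * N * ((2:ℝ) ^ (q-1) * 2 ^ q) / B ^ q by ring,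
      show q * 4 ^ q * N / B ^ q = q * N * ((4:ℝ) ^ q) / B ^ q by ring]
    gcongr
  calc ‖(A ^ q)⁻¹ • (u - v) + ((A ^ q)⁻¹ - (B ^ q)⁻¹) • v‖
      ≤ (A ^ q)⁻¹ * N + |(A ^ q)⁻¹ - (B ^ q)⁻¹| * B := by
        refine (norm_add_le _ _).trans ?_
        rw [norm_smul, norm_smul, Real.norm_eq_abs, Real.norm_eq_abs,
          abs_of_pos (by positivity : (0:ℝ) < (A ^ q)⁻¹)]
    _ ≤ (2 ^ q / B ^ q) * N + (q * (2*B) ^ (q-1) * N) / (A ^ q * B ^ q) * B := by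
        rw [h5]
        gcongr
    _ ≤ (2 ^ q / B ^ q) * N + q * 4 ^ q * N / B ^ q := by
        rw [t2a]
        exact add_le_add le_rfl (t2b.trans t2c)
    _ ≤ ((2:ℝ) ^ q + q * 4 ^ q) * N / B ^ q := le_of_eq (by ring)

lemma powid {s ε P C₂ : ℝ} (hs : 0 < s) (hε : 0 < ε) (k : ℕ) :
    ((2:ℝ)^k * ε) ^ (-(s+1)) * (P * ((2:ℝ)^(k+2) * ε) ^ s / C₂)
      = 4 ^ s * P / (C₂ * ε) * (1/2:ℝ)^k := by
  have two0 : (0:ℝ) ≤ 2 := by norm_num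
  have l1 : ((2:ℝ)^k * ε) ^ (-(s+1)) = 2 ^ ((k:ℝ) * (-(s+1))) * ε ^ (-(s+1)) := by
    rw [Real.mul_rpow (by positivity) hε.le, ← Real.rpow_natCast (2:ℝ) k,
      ← Real.rpow_mul two0]
  have l2 : ((2:ℝ)^(k+2) * ε) ^ s = 2 ^ (((k:ℝ)+2) * s) * ε ^ s := by
    rw [Real.mul_rpow (by positivity) hε.le, ← Real.rpow_natCast (2:ℝ) (k+2),
      ← Real.rpow_mul two0]
    push_cast
    ring_nf
  have l3 : (2:ℝ) ^ ((k:ℝ) * (-(s+1))) * 2 ^ (((k:ℝ)+2) * s) = 2 ^ (2*s) * 2 ^ (-(k:ℝ)) := by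
    rw [← Real.rpow_add two_pos, ← Real.rpow_add two_pos]
    ring_nf
  have l4 : ε ^ (-(s+1)) * ε ^ s = ε⁻¹ := by
    rw [← Real.rpow_add hε, show -(s+1) + s = -1 by ring, Real.rpow_neg_one]
  have l5 : (4:ℝ) ^ s = 2 ^ (2*s) := by
    rw [Real.rpow_mul two0, show ((2:ℝ) ^ (2:ℝ)) = 4 by
      rw [show (2:ℝ) = ((2:ℕ):ℝ) by norm_num, Real.rpow_natCast]; norm_num]
  have l6 : (2:ℝ) ^ (-(k:ℝ)) = (1/2:ℝ)^k := by
    rw [Real.rpow_neg two0, Real.rpow_natCast, one_div, inv_pow]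
  rw [l1, l2, l5, ← l6,
    show (2:ℝ) ^ ((k:ℝ) * (-(s+1))) * ε ^ (-(s+1)) * (P * (2 ^ (((k:ℝ)+2) * s) * ε ^ s) / C₂)
      = ((2:ℝ) ^ ((k:ℝ) * (-(s+1))) * 2 ^ (((k:ℝ)+2) * s)) * (ε ^ (-(s+1)) * ε ^ s) * P / C₂
      by ring, l3, l4]
  ring

lemma tailL {d : ℕ} (ν : Measure (EuclideanSpace ℝ (Fin d))) [IsFiniteMeasure ν]
    {s P C₂ ε : ℝ} (x₀ : EuclideanSpace ℝ (Fin d))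
    (hs : 0 < s) (hε : 0 < ε) (hP : 0 < P) (hC : 0 < C₂)
    (growth : ∀ r : ℝ, 0 < r → (ν (Metric.ball x₀ r)).toReal < P * r ^ s / C₂) :
    ∫⁻ y in {y | ε < dist y x₀}, ENNReal.ofReal ((dist y x₀) ^ (-(s+1))) ∂ν
      ≤ ENNReal.ofReal (2 * (4 ^ s * P / (C₂ * ε))) := by
  set A : ℕ → Set (EuclideanSpace ℝ (Fin d)) :=
    fun k => {y | (2:ℝ)^k * ε < dist y x₀ ∧ dist y x₀ ≤ (2:ℝ)^(k+1) * ε} with hA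
  have hmd : Measurable fun y : EuclideanSpace ℝ (Fin d) => dist y x₀ :=
    (continuous_id.dist continuous_const).measurable
  have hAm : ∀ k, MeasurableSet (A k) := by
    intro k
    exact (measurableSet_lt measurable_const hmd).inter (measurableSet_le hmd measurable_const)
  have cover : {y | ε < dist y x₀} ⊆ ⋃ k, A k := by
    intro y hy
    simp only [mem_setOf_eq] at hy
    set t := dist y x₀ with ht'
    have ht : 0 < t := lt_trans hε hy
    have hex : ∃ n : ℕ, t ≤ (2:ℝ)^(n+1) * ε := by
      obtain ⟨n, hn⟩ := pow_unbounded_of_one_lt (t / ε) (one_lt_two (α := ℝ))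
      refine ⟨n, ?_⟩
      rw [div_lt_iff₀ hε] at hn
      rw [pow_succ]
      nlinarith [pow_pos (zero_lt_two (α := ℝ)) n]
    classical
    refine mem_iUnion.mpr ⟨Nat.find hex, ?_, Nat.find_spec hex⟩
    rcases Nat.eq_zero_or_pos (Nat.find hex) with h0 | h0
    · rw [h0]; simpa using hy
    · have hmin := Nat.find_min hex (Nat.sub_lt h0 one_pos)
      push_neg at hmin
      have heq : Nat.find hex - 1 + 1 = Nat.find hex := by omega
      rw [heq] at hmin
      simpa using hmin
  calc ∫⁻ y in {y | ε < dist y x₀}, ENNReal.ofReal ((dist y x₀) ^ (-(s+1))) ∂ν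
      ≤ ∫⁻ y in ⋃ k, A k, ENNReal.ofReal ((dist y x₀) ^ (-(s+1))) ∂ν :=
        lintegral_mono_set cover
    _ ≤ ∑' k, ∫⁻ y in A k, ENNReal.ofReal ((dist y x₀) ^ (-(s+1))) ∂ν :=
        lintegral_iUnion_le _ _
    _ ≤ ∑' k, ENNReal.ofReal (4 ^ s * P / (C₂ * ε) * (1/2:ℝ)^k) := by
        refine ENNReal.tsum_le_tsum fun k => ?_
        have hb : (0:ℝ) < (2:ℝ)^k * ε := by positivity
        calc ∫⁻ y in A k, ENNReal.ofReal ((dist y x₀) ^ (-(s+1))) ∂ν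
            ≤ ∫⁻ _ in A k, ENNReal.ofReal (((2:ℝ)^k * ε) ^ (-(s+1))) ∂ν := by
              refine setLIntegral_mono measurable_const fun y hy => ?_
              refine ENNReal.ofReal_le_ofReal ?_
              rw [Real.rpow_neg dist_nonneg, Real.rpow_neg hb.le]
              exact inv_anti₀ (by positivity)
                (Real.rpow_le_rpow hb.le hy.1.le (by linarith))
          _ = ENNReal.ofReal (((2:ℝ)^k * ε) ^ (-(s+1))) * ν (A k) :=
              setLIntegral_const _ _
          _ ≤ ENNReal.ofReal (((2:ℝ)^k * ε) ^ (-(s+1)))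
                * ENNReal.ofReal (P * ((2:ℝ)^(k+2) * ε) ^ s / C₂) := by
              have hνA : ν (A k) ≤ ENNReal.ofReal (P * ((2:ℝ)^(k+2) * ε) ^ s / C₂) := by
                refine le_trans
                  (measure_mono (?_ : A k ⊆ Metric.ball x₀ ((2:ℝ)^(k+2) * ε))) ?_
                · intro y hy
                  have h1 : (2:ℝ)^(k+1) < (2:ℝ)^(k+2) :=
                    pow_lt_pow_right₀ (one_lt_two (α := ℝ)) (by omega)
                  have h2 := hy.2
                  show y ∈ Metric.ball x₀ ((2:ℝ)^(k+2) * ε)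
                  simp only [Metric.mem_ball]
                  nlinarith
                · rw [ENNReal.le_ofReal_iff_toReal_le (measure_ne_top ν _) (by positivity)]
                  exact (growth _ (by positivity)).le
              exact mul_le_mul_right hνA _
          _ = ENNReal.ofReal (((2:ℝ)^k * ε) ^ (-(s+1)) * (P * ((2:ℝ)^(k+2) * ε) ^ s / C₂)) :=
              (ENNReal.ofReal_mul (by positivity)).symm
          _ = ENNReal.ofReal (4 ^ s * P / (C₂ * ε) * (1/2:ℝ)^k) := by
              rw [powid hs hε]
    _ = ENNReal.ofReal (4 ^ s * P / (C₂ * ε)) * ∑' k : ℕ, (ENNReal.ofReal (1/2:ℝ))^k := by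
        rw [← ENNReal.tsum_mul_left]
        congr 1 with k
        rw [← ENNReal.ofReal_pow (by norm_num), ← ENNReal.ofReal_mul (by positivity)]
    _ = ENNReal.ofReal (4 ^ s * P / (C₂ * ε)) * 2 := by
        congr 1
        rw [ENNReal.tsum_geometric]
        rw [show ENNReal.ofReal (1/2:ℝ) = 2⁻¹ by
          rw [one_div, ENNReal.ofReal_inv_of_pos two_pos, ENNReal.ofReal_ofNat],
          ENNReal.one_sub_inv_two, inv_inv]
    _ = ENNReal.ofReal (2 * (4 ^ s * P / (C₂ * ε))) := by
        rw [ENNReal.ofReal_mul (by norm_num : (0:ℝ) ≤ 2)]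
        rw [ENNReal.ofReal_ofNat]
        ring

lemma rpow_neg_anti {s ρ t : ℝ} (hs : 0 < s) (hρ : 0 < ρ) (h : ρ ≤ t) :
    t ^ (-s) ≤ ρ ^ (-s) := by
  rw [Real.rpow_neg (by linarith), Real.rpow_neg hρ.le]
  exact inv_anti₀ (Real.rpow_pos_of_pos hρ s) (Real.rpow_le_rpow hρ.le h hs.le)

lemma kmeas {d : ℕ} {s : ℝ} (hs : 0 < s) (z : EuclideanSpace ℝ (Fin d)) :
    Measurable (fun y : EuclideanSpace ℝ (Fin d) => (‖y - z‖ ^ (s+1))⁻¹ • (y - z)) := by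
  have h1 : Measurable fun y : EuclideanSpace ℝ (Fin d) => y - z :=
    measurable_id.sub measurable_const
  have h2 : Continuous fun t : ℝ => t ^ (s+1) :=
    Real.continuous_rpow_const (by linarith)
  exact (((h2.measurable.comp h1.norm)).inv).smul h1

/-- The `ε`-truncated vector-valued `s`-Riesz transform of a (positive) measure `ν`. -/
noncomputable def rieszT (d : ℕ) (s : ℝ) (ν : Measure (EuclideanSpace ℝ (Fin d)))
    (ε : ℝ) (x : EuclideanSpace ℝ (Fin d)) : EuclideanSpace ℝ (Fin d) :=
  ∫ y in {y | ε < dist y x}, (‖y - x‖ ^ (s + 1))⁻¹ • (y - x) ∂ν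

/-- If `ν(B(x₀,r)) < C₂⁻¹ P r^s` for all `r>0`, `ν(B(x₀,t₁)) = 0`, and
`|R_{ν,ε}(x₀)| > P` for some `ε > 0.9 t₁`, then for `C₂` large enough (depending
only on `s`), every `x` with `|x−x₀| < 0.4 t₁` satisfies `sup_δ |R_{ν,δ}(x)| > 0.8P`. -/
theorem stmt10 (d : ℕ) (s : ℝ) (hs : 0 < s) (hsd : s < d) :
    ∃ C₀ : ℝ, 0 < C₀ ∧ ∀ C₂ : ℝ, C₀ ≤ C₂ → 10 * 2 ^ s < C₂ →
      ∀ ν : Measure (EuclideanSpace ℝ (Fin d)), IsFiniteMeasure ν →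
      ∀ (P t₁ ε : ℝ) (x₀ : EuclideanSpace ℝ (Fin d)), 0 < P → 0 < t₁ →
        (∀ r : ℝ, 0 < r → (ν (Metric.ball x₀ r)).toReal < P * r ^ s / C₂) →
        ν (Metric.ball x₀ t₁) = 0 →
        0.9 * t₁ < ε →
        P < ‖rieszT d s ν ε x₀‖ →
        ∀ x : EuclideanSpace ℝ (Fin d), dist x x₀ < 0.4 * t₁ →
          ∃ δ : ℝ, 0 < δ ∧ 0.8 * P < ‖rieszT d s ν δ x‖ := by
  set Cs : ℝ := (2:ℝ)^(s+1) + (s+1) * 4^(s+1) with hCs'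
  have hCs0 : 0 < Cs := by
    have := Real.rpow_pos_of_pos (show (0:ℝ) < 2 by norm_num) (s+1)
    have := Real.rpow_pos_of_pos (show (0:ℝ) < 4 by norm_num) (s+1)
    rw [hCs']; nlinarith
  have h4s : (0:ℝ) < (4:ℝ)^s := Real.rpow_pos_of_pos (by norm_num) s
  have h185 : (0:ℝ) < (18/5:ℝ)^s := Real.rpow_pos_of_pos (by norm_num) s
  refine ⟨10 * Cs * 4 ^ s + 10 * (18/5:ℝ) ^ s, by positivity, ?_⟩
  intro C₂ hC₀ hC2big ν hν P t₁ ε x₀ hP ht₁ growth hball hε hR x hx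
  have hC2 : 0 < C₂ := lt_of_lt_of_le (by positivity) hC₀
  have hεpos : 0 < ε := lt_trans (by nlinarith) hε
  set a := dist x x₀ with ha'
  have ha0 : 0 ≤ a := dist_nonneg
  have haε : a < (4/9) * ε := by nlinarith
  set δ := ε - a with hδ'
  have hδpos : 0 < δ := by rw [hδ']; nlinarith
  have hδ59 : (5/9)*ε ≤ δ := by rw [hδ']; nlinarith
  clear_value Cs
  clear_value a
  clear_value δ
  refine ⟨δ, hδpos, ?_⟩
  set E := {y : EuclideanSpace ℝ (Fin d) | ε < dist y x₀} with hE'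
  set F := {y : EuclideanSpace ℝ (Fin d) | δ < dist y x} with hF'
  have hmd0 : Measurable fun y : EuclideanSpace ℝ (Fin d) => dist y x₀ :=
    (continuous_id.dist continuous_const).measurable
  have hmdx : Measurable fun y : EuclideanSpace ℝ (Fin d) => dist y x :=
    (continuous_id.dist continuous_const).measurable
  have hEm : MeasurableSet E := measurableSet_lt measurable_const hmd0
  have hFm : MeasurableSet F := measurableSet_lt measurable_const hmdx
  have hEF : E ⊆ F := by
    intro y hy
    have hy' : ε < dist y x₀ := hy
    have htri := dist_triangle y x x₀
    show δ < dist y x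
    linarith [hδ'.le, hδ'.ge, ha'.le, ha'.ge]
  set Kx : EuclideanSpace ℝ (Fin d) → EuclideanSpace ℝ (Fin d) :=
    fun y => (‖y - x‖ ^ (s+1))⁻¹ • (y - x) with hKx'
  set K0 : EuclideanSpace ℝ (Fin d) → EuclideanSpace ℝ (Fin d) :=
    fun y => (‖y - x₀‖ ^ (s+1))⁻¹ • (y - x₀) with hK0'
  have hKxm : Measurable Kx := kmeas hs x
  have hK0m : Measurable K0 := kmeas hs x₀
  have hKxb : ∀ y ∈ F, ‖Kx y‖ ≤ δ ^ (-s) := by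
    intro y hy
    have hd : δ < dist y x := hy
    have h1 : 0 < ‖y - x‖ := by rw [← dist_eq_norm]; linarith
    rw [hKx', knorm _ h1]
    refine rpow_neg_anti hs hδpos ?_
    rw [← dist_eq_norm]; linarith
  have hK0b : ∀ y ∈ E, ‖K0 y‖ ≤ ε ^ (-s) := by
    intro y hy
    have hd : ε < dist y x₀ := hy
    have h1 : 0 < ‖y - x₀‖ := by rw [← dist_eq_norm]; linarith
    rw [hK0', knorm _ h1]
    refine rpow_neg_anti hs hεpos ?_
    rw [← dist_eq_norm]; linarith
  have hIKxF : IntegrableOn Kx F ν :=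
    Measure.integrableOn_of_bounded (measure_ne_top ν F) hKxm.aestronglyMeasurable
      ((ae_restrict_iff' hFm).mpr (ae_of_all _ hKxb))
  have hIKxE : IntegrableOn Kx E ν := hIKxF.mono_set hEF
  have hIK0E : IntegrableOn K0 E ν :=
    Measure.integrableOn_of_bounded (measure_ne_top ν E) hK0m.aestronglyMeasurable
      ((ae_restrict_iff' hEm).mpr (ae_of_all _ hK0b))
  have hsplit : ∫ y in F, Kx y ∂ν = (∫ y in E, Kx y ∂ν) + ∫ y in F \ E, Kx y ∂ν := by
    rw [← setIntegral_union disjoint_sdiff_right (hFm.diff hEm) hIKxE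
      (hIKxF.mono_set diff_subset), union_diff_cancel hEF]
  set D1 := ∫ y in E, (Kx y - K0 y) ∂ν with hD1'
  set D2 := ∫ y in F \ E, Kx y ∂ν with hD2'
  -- error 2
  have err2 : ‖D2‖ ≤ P / 10 := by
    have hb1 : ‖D2‖ ≤ δ ^ (-s) * (ν (F \ E)).toReal := by
      rw [hD2']
      exact norm_setIntegral_le_of_norm_le_const (measure_lt_top ν (F \ E))
        (fun y hy => hKxb y hy.1)
    have hsub : F \ E ⊆ Metric.ball x₀ (2*ε) := by
      intro y hy
      have h2 : ¬ (ε < dist y x₀) := hy.2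
      push_neg at h2
      simp only [Metric.mem_ball]
      linarith
    have hb2 : (ν (F \ E)).toReal ≤ (ν (Metric.ball x₀ (2*ε))).toReal :=
      ENNReal.toReal_mono (measure_ne_top ν _) (measure_mono hsub)
    have hb3 : (ν (Metric.ball x₀ (2*ε))).toReal < P * (2*ε)^s / C₂ :=
      growth _ (by positivity)
    have hδs : δ ^ (-s) ≤ ((5/9:ℝ)*ε) ^ (-s) := rpow_neg_anti hs (by positivity) hδ59
    have hkey : ((5/9:ℝ)*ε) ^ (-s) * (P * (2*ε)^s / C₂) = (18/5:ℝ)^s * P / C₂ := by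
      have hq : ((5/9:ℝ)*ε) ^ (-s) * ((2:ℝ)*ε)^s = (18/5:ℝ)^s := by
        rw [Real.rpow_neg (by positivity), inv_mul_eq_div,
          ← Real.div_rpow (by positivity) (by positivity),
          show ((2:ℝ)*ε)/((5/9:ℝ)*ε) = 18/5 by
            rw [mul_comm (2:ℝ) ε, mul_comm ((5/9:ℝ)) ε, mul_div_mul_left _ _ hεpos.ne']
            norm_num]
      calc ((5/9:ℝ)*ε) ^ (-s) * (P * (2*ε)^s / C₂)
          = (((5/9:ℝ)*ε) ^ (-s) * ((2:ℝ)*ε)^s) * P / C₂ := by ring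
        _ = (18/5:ℝ)^s * P / C₂ := by rw [hq]
    have hb4 : δ ^ (-s) * (ν (F \ E)).toReal ≤ ((5/9:ℝ)*ε) ^ (-s) * (P * (2*ε)^s / C₂) := by
      apply mul_le_mul hδs (hb2.trans hb3.le) ENNReal.toReal_nonneg
      positivity
    have hb5 : (18/5:ℝ)^s * P / C₂ ≤ P / 10 := by
      rw [div_le_div_iff₀ hC2 (by norm_num)]
      nlinarith [mul_le_mul_of_nonneg_left hC₀ hP.le,
        mul_pos hP (mul_pos (mul_pos (show (0:ℝ) < 10 by norm_num) hCs0) h4s)]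
    linarith [hb1, hb4, hkey, hb5]
  -- error 1
  have hpt : ∀ y ∈ E, ‖Kx y - K0 y‖ ≤ Cs * a * (dist y x₀) ^ (-(s+1)) := by
    intro y hy
    have hd : ε < dist y x₀ := hy
    have hv : 0 < ‖y - x₀‖ := by rw [← dist_eq_norm]; linarith
    have hdiffuv : (y - x) - (y - x₀) = x₀ - x := by abel
    have hnuv : ‖(y - x) - (y - x₀)‖ = a := by
      rw [hdiffuv, ← dist_eq_norm, dist_comm]
      exact ha'.symm
    have hsmall : ‖(y - x) - (y - x₀)‖ ≤ ‖y - x₀‖ / 2 := by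
      rw [hnuv, ← dist_eq_norm]
      linarith
    have hk := kdiff hs (y - x) (y - x₀) hv hsmall
    rw [hKx', hK0']
    refine hk.trans ?_
    rw [hnuv, ← dist_eq_norm, Real.rpow_neg dist_nonneg]
    rw [div_eq_mul_inv, ← hCs']
  have hgm : Measurable fun y : EuclideanSpace ℝ (Fin d) => (dist y x₀) ^ (-(s+1)) := by
    have heq : (fun y : EuclideanSpace ℝ (Fin d) => (dist y x₀) ^ (-(s+1)))
        = fun y => ((dist y x₀) ^ (s+1))⁻¹ := by
      funext y
      rw [Real.rpow_neg dist_nonneg]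
    rw [heq]
    exact ((Real.continuous_rpow_const (by linarith)).measurable.comp hmd0).inv
  have hgint : IntegrableOn (fun y => Cs * a * (dist y x₀) ^ (-(s+1))) E ν := by
    refine Measure.integrableOn_of_bounded (M := Cs * a * ε ^ (-(s+1)))
      (measure_ne_top ν E) ((measurable_const.mul hgm).aestronglyMeasurable) ?_
    refine (ae_restrict_iff' hEm).mpr (ae_of_all _ fun y hy => ?_)
    have hd : ε < dist y x₀ := hy
    rw [Real.norm_eq_abs, abs_of_nonneg (by positivity)]
    have := rpow_neg_anti (show (0:ℝ) < s + 1 by linarith) hεpos hd.le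
    exact mul_le_mul_of_nonneg_left this (by positivity)
  have hlint : ∫ y in E, (dist y x₀) ^ (-(s+1)) ∂ν ≤ 2 * (4^s * P / (C₂ * ε)) := by
    rw [integral_eq_lintegral_of_nonneg_ae
      (ae_of_all _ fun y => Real.rpow_nonneg dist_nonneg _)
      hgm.aestronglyMeasurable]
    calc (∫⁻ y in E, ENNReal.ofReal ((dist y x₀) ^ (-(s+1))) ∂ν).toReal
        ≤ (ENNReal.ofReal (2 * (4^s * P / (C₂ * ε)))).toReal := by
          apply ENNReal.toReal_mono ENNReal.ofReal_ne_top
          exact tailL ν x₀ hs hεpos hP hC2 growth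
      _ = 2 * (4^s * P / (C₂ * ε)) := ENNReal.toReal_ofReal (by positivity)
  have err1 : ‖D1‖ ≤ P / 10 := by
    have hn1 : ‖D1‖ ≤ ∫ y in E, Cs * a * (dist y x₀) ^ (-(s+1)) ∂ν := by
      refine (norm_integral_le_integral_norm _).trans ?_
      exact setIntegral_mono_on ((hIKxE.sub hIK0E).norm) hgint hEm hpt
    have hn2 : ∫ y in E, Cs * a * (dist y x₀) ^ (-(s+1)) ∂ν
        = Cs * a * ∫ y in E, (dist y x₀) ^ (-(s+1)) ∂ν := integral_const_mul _ _
    have hn3 : Cs * a * ∫ y in E, (dist y x₀) ^ (-(s+1)) ∂ν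
        ≤ Cs * a * (2 * (4^s * P / (C₂ * ε))) := by
      apply mul_le_mul_of_nonneg_left hlint (by positivity)
    have e2 : Cs * a * (2 * (4^s * P / (C₂ * ε)))
        ≤ Cs * ((4/9)*ε) * (2 * (4^s * P / (C₂ * ε))) := by
      apply mul_le_mul_of_nonneg_right
        (mul_le_mul_of_nonneg_left haε.le hCs0.le) (by positivity)
    have e1 : Cs * ((4/9)*ε) * (2 * (4^s * P / (C₂ * ε))) = (8/9) * (Cs * 4^s * P / C₂) := by
      field_simp
      ring
    have e3 : Cs * 4^s * P / C₂ ≤ P / 10 := by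
      rw [div_le_div_iff₀ hC2 (by norm_num)]
      nlinarith [mul_le_mul_of_nonneg_left hC₀ hP.le,
        mul_pos hP (mul_pos (show (0:ℝ) < 10 by norm_num) h185)]
    have e4 : (0:ℝ) ≤ Cs * 4^s * P / C₂ := by positivity
    calc ‖D1‖ ≤ ∫ y in E, Cs * a * (dist y x₀) ^ (-(s+1)) ∂ν := hn1
      _ = Cs * a * ∫ y in E, (dist y x₀) ^ (-(s+1)) ∂ν := hn2
      _ ≤ Cs * a * (2 * (4^s * P / (C₂ * ε))) := hn3
      _ ≤ Cs * ((4/9)*ε) * (2 * (4^s * P / (C₂ * ε))) := e2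
      _ = (8/9) * (Cs * 4^s * P / C₂) := e1
      _ ≤ P / 10 := by linarith
  -- assembling
  have hRδ : rieszT d s ν δ x = rieszT d s ν ε x₀ + D1 + D2 := by
    have hEint : ∫ y in E, Kx y ∂ν = (∫ y in E, K0 y ∂ν) + D1 := by
      rw [hD1', integral_sub hIKxE hIK0E]
      abel
    show ∫ y in F, Kx y ∂ν = (∫ y in E, K0 y ∂ν) + D1 + D2
    rw [hsplit, hEint]
  have hfin : ‖rieszT d s ν ε x₀‖ ≤ ‖rieszT d s ν δ x‖ + ‖D1‖ + ‖D2‖ := by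
    calc ‖rieszT d s ν ε x₀‖
        = ‖(rieszT d s ν ε x₀ + D1 + D2) + (-D1) + (-D2)‖ := by congr 1; abel
      _ ≤ ‖rieszT d s ν ε x₀ + D1 + D2‖ + ‖-D1‖ + ‖-D2‖ := norm_add₃_le
      _ = ‖rieszT d s ν δ x‖ + ‖D1‖ + ‖D2‖ := by rw [← hRδ, norm_neg, norm_neg]
  have h08 : (0.8:ℝ) * P = P - P/10 - P/10 := by ring
  linarith
end

section
/- Let d ≥ 1, s > 0, let ν be a positive finite measure supported in the cube Q of edge length ℓ centered at the origin, let x ∈ [5ℓ/4, 11ℓ/4]^d, and let v be a random vector uniformly distributed over the cube of edge length ℓ/2 centered at the origin. Then the random variable ξ = R^s_ν(x+v) = ∫ (x+v−y)/|x+v−y|^{s+1} dν(y) satisfies |ξ| ≤ C·θ and Var ξ ≥ c·θ², where θ = ‖ν‖/ℓ^s and C, c > 0 depend only on d and s. -/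
set_option maxHeartbeats 1000000
open MeasureTheory Set

namespace Stmt12

lemma abs_coord_le_norm {d : ℕ} (t : EuclideanSpace ℝ (Fin d)) (i : Fin d) : |t i| ≤ ‖t‖ := by
  rw [EuclideanSpace.norm_eq, ← Real.sqrt_sq_eq_abs]
  apply Real.sqrt_le_sqrt
  have : t i ^ 2 = ‖t i‖ ^ 2 := by rw [Real.norm_eq_abs, sq_abs]
  rw [this]
  exact Finset.single_le_sum (f := fun j => ‖t j‖ ^ 2) (fun j _ => by positivity) (Finset.mem_univ i)

lemma norm_le_of_coords {d : ℕ} {t : EuclideanSpace ℝ (Fin d)} {M : ℝ} (hM : 0 ≤ M)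
    (h : ∀ i, |t i| ≤ M) : ‖t‖ ≤ Real.sqrt d * M := by
  rw [EuclideanSpace.norm_eq]
  have : ∑ j, ‖t j‖ ^ 2 ≤ ∑ _j : Fin d, M ^ 2 := by
    apply Finset.sum_le_sum
    intro j _
    rw [Real.norm_eq_abs]
    exact pow_le_pow_left₀ (abs_nonneg _) (h j) 2
  calc Real.sqrt (∑ j, ‖t j‖ ^ 2) ≤ Real.sqrt (∑ _j : Fin d, M ^ 2) := Real.sqrt_le_sqrt this
    _ = Real.sqrt (d * M ^ 2) := by rw [Finset.sum_const, Finset.card_univ, Fintype.card_fin,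
        nsmul_eq_mul]
    _ = Real.sqrt d * M := by rw [Real.sqrt_mul (by positivity), Real.sqrt_sq hM]

lemma coord_le_norm {d : ℕ} (t : EuclideanSpace ℝ (Fin d)) (i : Fin d) : t i ≤ ‖t‖ :=
  (le_abs_self _).trans (abs_coord_le_norm t i)

lemma sq_norm_eq {d : ℕ} (t : EuclideanSpace ℝ (Fin d)) : ‖t‖ ^ 2 = ∑ j, (t j) ^ 2 := by
  rw [EuclideanSpace.norm_eq, Real.sq_sqrt (by positivity)]
  simp [Real.norm_eq_abs, sq_abs]

lemma rpow_inv_mul {s : ℝ} (c : ℝ) (hc : 0 < c) : (c ^ (s + 1))⁻¹ * c = c ^ (-s) := by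
  have h1 : c ^ (s + 1) = c ^ s * c := by rw [Real.rpow_add hc, Real.rpow_one]
  have h2 : c ^ (-s) = (c ^ s)⁻¹ := by rw [Real.rpow_neg hc.le]
  rw [h1, h2, mul_inv, mul_assoc, inv_mul_cancel₀ hc.ne']
  ring

lemma key_gap {d : ℕ} (hd : 0 < d) {s : ℝ} (hs : 0 < s) (i₀ k : Fin d)
    (hik : d ≠ 1 → i₀ ≠ k) :
    ∃ a : ℝ, 0 < a ∧ ∀ ℓ : ℝ, 0 < ℓ → ∀ t t' : EuclideanSpace ℝ (Fin d),
      (∀ i, t' i = t i + if i = k then 3 * ℓ / 8 else 0) →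
      (∀ i, ℓ / 2 ≤ t i ∧ t i ≤ 7 * ℓ / 2) →
      (∀ i, ℓ / 2 ≤ t' i ∧ t' i ≤ 7 * ℓ / 2) →
      a / ℓ ^ s ≤ (‖t‖ ^ (s + 1))⁻¹ * t i₀ - (‖t'‖ ^ (s + 1))⁻¹ * t' i₀ := by
  by_cases hd1 : d = 1
  · -- one-dimensional case
    subst hd1
    have hβ : (31/28 : ℝ) ^ (-s) < 1 :=
      Real.rpow_lt_one_of_one_lt_of_neg (by norm_num) (by linarith)
    have hβ0 : (0:ℝ) < (31/28 : ℝ) ^ (-s) := Real.rpow_pos_of_pos (by norm_num) _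
    refine ⟨(7/2 : ℝ) ^ (-s) * (1 - (31/28 : ℝ) ^ (-s)), by
      have : (0:ℝ) < (7/2 : ℝ) ^ (-s) := Real.rpow_pos_of_pos (by norm_num) _
      nlinarith, ?_⟩
    intro ℓ hℓ t t' ht' h1 h2
    have hik' : i₀ = k := Subsingleton.elim _ _
    have hnt : ‖t‖ = t i₀ := by
      rw [EuclideanSpace.norm_eq]
      rw [show ∑ i : Fin 1, ‖t i‖ ^ 2 = ‖t i₀‖ ^ 2 by
        rw [Fin.sum_univ_one, Subsingleton.elim (0 : Fin 1) i₀]]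
      rw [Real.sqrt_sq_eq_abs, Real.norm_eq_abs, abs_abs, abs_of_nonneg (by linarith [(h1 i₀).1])]
    have hnt' : ‖t'‖ = t' i₀ := by
      rw [EuclideanSpace.norm_eq]
      rw [show ∑ i : Fin 1, ‖t' i‖ ^ 2 = ‖t' i₀‖ ^ 2 by
        rw [Fin.sum_univ_one, Subsingleton.elim (0 : Fin 1) i₀]]
      rw [Real.sqrt_sq_eq_abs, Real.norm_eq_abs, abs_abs, abs_of_nonneg (by linarith [(h2 i₀).1])]
    have h0 : 0 < t i₀ := by linarith [(h1 i₀).1]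
    have h0' : 0 < t' i₀ := by linarith [(h2 i₀).1]
    rw [hnt, hnt', rpow_inv_mul _ h0, rpow_inv_mul _ h0']
    have hti' : t' i₀ = t i₀ + 3 * ℓ / 8 := by rw [ht' i₀, if_pos hik']
    -- t' i₀ ≥ (31/28) t i₀
    have hstep : (31/28 : ℝ) * t i₀ ≤ t' i₀ := by
      rw [hti']; nlinarith [(h1 i₀).2]
    have hmono : t' i₀ ^ (-s) ≤ ((31/28 : ℝ) * t i₀) ^ (-s) :=
      Real.rpow_le_rpow_of_nonpos (by positivity) hstep (by linarith)
    have hmul : ((31/28 : ℝ) * t i₀) ^ (-s) = (31/28 : ℝ) ^ (-s) * t i₀ ^ (-s) :=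
      Real.mul_rpow (by norm_num) h0.le
    have hlow : (7 * ℓ / 2 : ℝ) ^ (-s) ≤ t i₀ ^ (-s) :=
      Real.rpow_le_rpow_of_nonpos h0 (h1 i₀).2 (by linarith)
    have hfac : (7 * ℓ / 2 : ℝ) ^ (-s) = (7/2 : ℝ) ^ (-s) * ℓ ^ (-s) := by
      rw [show (7 * ℓ / 2 : ℝ) = (7/2) * ℓ by ring, Real.mul_rpow (by norm_num) hℓ.le]
    have hts : 0 < t i₀ ^ (-s) := Real.rpow_pos_of_pos h0 _
    have hl : ℓ ^ (-s) = (ℓ ^ s)⁻¹ := by rw [Real.rpow_neg hℓ.le]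
    rw [div_eq_mul_inv, ← hl]
    have h72 : (0:ℝ) < (7/2 : ℝ) ^ (-s) := Real.rpow_pos_of_pos (by norm_num) _
    have hls : (0:ℝ) < ℓ ^ (-s) := Real.rpow_pos_of_pos hℓ _
    nlinarith [hlow, hfac, hmono, hmul]
  · -- higher-dimensional case
    have hd2 : 2 ≤ d := by omega
    have hik2 : i₀ ≠ k := hik hd1
    set B : ℝ := Real.sqrt d * (7/2) with hB
    have hB1 : (1:ℝ) ≤ B := by
      have h1 : (1:ℝ) ≤ Real.sqrt d := by
        rw [show (1:ℝ) = Real.sqrt 1 by simp]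
        exact Real.sqrt_le_sqrt (by exact_mod_cast hd)
      nlinarith
    have hBpos : (0:ℝ) < B := by linarith
    set ε : ℝ := 3 / (98 * (d:ℝ)) with hε
    have hdR : (0:ℝ) < (d:ℝ) := by exact_mod_cast hd
    have hεpos : 0 < ε := by positivity
    set ρ : ℝ := Real.sqrt (1 + ε) with hρ
    have hρ1 : 1 < ρ := by
      rw [hρ]
      have : (1:ℝ) = Real.sqrt 1 := by simp
      rw [this]
      exact Real.sqrt_lt_sqrt (by norm_num) (by linarith)
    have hδpos : 0 < 1 - ρ ^ (-(s+1)) := by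
      have : ρ ^ (-(s+1)) < 1 := Real.rpow_lt_one_of_one_lt_of_neg hρ1 (by linarith)
      linarith
    have hBs : (0:ℝ) < B ^ (-(s+1)) := Real.rpow_pos_of_pos hBpos _
    refine ⟨(1/2) * B ^ (-(s+1)) * (1 - ρ ^ (-(s+1))), by positivity, ?_⟩
    intro ℓ hℓ t t' ht' h1 h2
    have hti' : t' i₀ = t i₀ := by rw [ht' i₀, if_neg hik2]; ring
    have hNlow : ℓ / 2 ≤ ‖t‖ := le_trans (h1 i₀).1 (coord_le_norm t i₀)
    have hN'low : ℓ / 2 ≤ ‖t'‖ := le_trans (h2 i₀).1 (coord_le_norm t' i₀)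
    have hNpos : 0 < ‖t‖ := by linarith
    have hN'pos : 0 < ‖t'‖ := by linarith
    have hNup : ‖t‖ ≤ B * ℓ := by
      have := norm_le_of_coords (t := t) (M := 7 * ℓ / 2) (by linarith) (fun i => by
        rw [abs_of_nonneg (by linarith [(h1 i).1])]; exact (h1 i).2)
      calc ‖t‖ ≤ Real.sqrt d * (7 * ℓ / 2) := this
        _ = B * ℓ := by rw [hB]; ring
    have hN'up : ‖t'‖ ≤ B * ℓ := by
      have := norm_le_of_coords (t := t') (M := 7 * ℓ / 2) (by linarith) (fun i => by
        rw [abs_of_nonneg (by linarith [(h2 i).1])]; exact (h2 i).2)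
      calc ‖t'‖ ≤ Real.sqrt d * (7 * ℓ / 2) := this
        _ = B * ℓ := by rw [hB]; ring
    -- squared norm identity
    have hsq : ‖t'‖ ^ 2 = ‖t‖ ^ 2 + (3 * ℓ / 8) * (2 * t k + 3 * ℓ / 8) := by
      set c : ℝ := (3 * ℓ / 8) * (2 * t k + 3 * ℓ / 8) with hc
      rw [sq_norm_eq, sq_norm_eq]
      have heach : ∀ j : Fin d, (t' j : ℝ) ^ 2 = (t j) ^ 2 + (if j = k then c else 0) := by
        intro j
        by_cases hj : j = k
        · rw [ht' j, if_pos hj, if_pos hj, hc, hj]; ring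
        · rw [ht' j, if_neg hj, if_neg hj]; ring
      have h1' : ∑ j, (t' j : ℝ) ^ 2 = ∑ j, ((t j) ^ 2 + (if j = k then c else 0)) :=
        Finset.sum_congr rfl (fun j _ => heach j)
      rw [h1', Finset.sum_add_distrib, Finset.sum_ite_eq' Finset.univ k (fun _ => c),
        if_pos (Finset.mem_univ k)]
    -- quantitative increase of the squared norm
    have hsqd : Real.sqrt d ^ 2 = (d:ℝ) := Real.sq_sqrt (by positivity)
    have hB2 : B ^ 2 = (49/4) * (d:ℝ) := by rw [hB]; nlinarith [hsqd]
    have hN2up : ‖t‖ ^ 2 ≤ (49/4) * (d:ℝ) * ℓ ^ 2 := by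
      have h' : ‖t‖ ^ 2 ≤ (B * ℓ) ^ 2 := pow_le_pow_left₀ (norm_nonneg t) hNup 2
      calc ‖t‖ ^ 2 ≤ (B * ℓ) ^ 2 := h'
        _ = B ^ 2 * ℓ ^ 2 := by ring
        _ = (49/4) * (d:ℝ) * ℓ ^ 2 := by rw [hB2]
    have hgrow : (1 + ε) * ‖t‖ ^ 2 ≤ ‖t'‖ ^ 2 := by
      have htk : ℓ / 2 ≤ t k := (h1 k).1
      have hε' : ε * ‖t‖ ^ 2 ≤ (3/8) * ℓ ^ 2 := by
        rw [hε]
        rw [div_mul_eq_mul_div, div_le_iff₀ (by positivity)]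
        nlinarith [hN2up]
      have hlow2 : (3/8) * ℓ ^ 2 ≤ (3 * ℓ / 8) * (2 * t k + 3 * ℓ / 8) := by
        nlinarith [htk, hℓ, sq_nonneg ℓ]
      linarith [hsq, hε', hlow2]
    -- norm growth
    have hρN : ρ * ‖t‖ ≤ ‖t'‖ := by
      have h1' : ρ * ‖t‖ = Real.sqrt ((1 + ε) * ‖t‖ ^ 2) := by
        rw [Real.sqrt_mul (by linarith), Real.sqrt_sq hNpos.le, hρ]
      rw [h1']
      calc Real.sqrt ((1 + ε) * ‖t‖ ^ 2) ≤ Real.sqrt (‖t'‖ ^ 2) := Real.sqrt_le_sqrt hgrow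
        _ = ‖t'‖ := Real.sqrt_sq hN'pos.le
    -- rpow comparisons
    have hrN : ρ ^ (s+1) * ‖t‖ ^ (s+1) ≤ ‖t'‖ ^ (s+1) := by
      have h1' : (ρ * ‖t‖) ^ (s+1) ≤ ‖t'‖ ^ (s+1) :=
        Real.rpow_le_rpow (by positivity) hρN (by linarith)
      rwa [Real.mul_rpow (by positivity) hNpos.le] at h1'
    have hNs : 0 < ‖t‖ ^ (s+1) := Real.rpow_pos_of_pos hNpos _
    have hN's : 0 < ‖t'‖ ^ (s+1) := Real.rpow_pos_of_pos hN'pos _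
    have hρs : 0 < ρ ^ (s+1) := Real.rpow_pos_of_pos (by linarith) _
    have hinv : (‖t'‖ ^ (s+1))⁻¹ ≤ ρ ^ (-(s+1)) * (‖t‖ ^ (s+1))⁻¹ := by
      have hρneg : ρ ^ (-(s+1)) = (ρ ^ (s+1))⁻¹ := by rw [Real.rpow_neg (by linarith)]
      rw [hρneg, ← mul_inv]
      exact inv_anti₀ (by positivity) hrN
    -- lower bound on (‖t‖^(s+1))⁻¹
    have hNB : (‖t‖ ^ (s+1)) ≤ (B * ℓ) ^ (s+1) :=
      Real.rpow_le_rpow hNpos.le hNup (by linarith)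
    have hBl : ((B * ℓ) ^ (s+1) : ℝ) = B ^ (s+1) * (ℓ ^ s * ℓ) := by
      rw [Real.mul_rpow hBpos.le hℓ.le, Real.rpow_add hℓ, Real.rpow_one]
    have hBinv : ((B * ℓ) ^ (s+1))⁻¹ ≤ (‖t‖ ^ (s+1))⁻¹ :=
      inv_anti₀ hNs hNB
    have hBs1 : (0:ℝ) < B ^ (s+1) := Real.rpow_pos_of_pos hBpos _
    have hBneg : B ^ (-(s+1)) = (B ^ (s+1))⁻¹ := by rw [Real.rpow_neg hBpos.le]
    -- final computation
    rw [hti']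
    have hti0 : ℓ / 2 ≤ t i₀ := (h1 i₀).1
    have hdiff : (‖t‖ ^ (s+1))⁻¹ * (1 - ρ ^ (-(s+1))) ≤
        (‖t‖ ^ (s+1))⁻¹ - (‖t'‖ ^ (s+1))⁻¹ := by
      have hexp : (‖t‖ ^ (s+1))⁻¹ * (1 - ρ ^ (-(s+1))) =
          (‖t‖ ^ (s+1))⁻¹ - ρ ^ (-(s+1)) * (‖t‖ ^ (s+1))⁻¹ := by ring
      rw [hexp]
      linarith [hinv]
    have hls : (0:ℝ) < ℓ ^ s := Real.rpow_pos_of_pos hℓ _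
    have hfin : ((B * ℓ) ^ (s+1))⁻¹ = B ^ (-(s+1)) * (ℓ ^ s)⁻¹ * ℓ⁻¹ := by
      rw [hBl, hBneg]
      field_simp
    rw [div_eq_mul_inv]
    have hinvN : (0:ℝ) < (‖t‖ ^ (s+1))⁻¹ := by positivity
    have hinvN' : (0:ℝ) < (‖t'‖ ^ (s+1))⁻¹ := by positivity
    have key : (ℓ / 2) * (((B * ℓ) ^ (s+1))⁻¹ * (1 - ρ ^ (-(s+1)))) ≤
        t i₀ * ((‖t‖ ^ (s+1))⁻¹ - (‖t'‖ ^ (s+1))⁻¹) := by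
      have hXD : ((B * ℓ) ^ (s+1))⁻¹ * (1 - ρ ^ (-(s+1))) ≤
          (‖t‖ ^ (s+1))⁻¹ - (‖t'‖ ^ (s+1))⁻¹ :=
        le_trans (mul_le_mul_of_nonneg_right hBinv hδpos.le) hdiff
      have hX0 : 0 ≤ ((B * ℓ) ^ (s+1))⁻¹ * (1 - ρ ^ (-(s+1))) := by positivity
      have hD0 : 0 ≤ (‖t‖ ^ (s+1))⁻¹ - (‖t'‖ ^ (s+1))⁻¹ := le_trans hX0 hXD
      calc (ℓ / 2) * (((B * ℓ) ^ (s+1))⁻¹ * (1 - ρ ^ (-(s+1))))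
          ≤ (ℓ / 2) * ((‖t‖ ^ (s+1))⁻¹ - (‖t'‖ ^ (s+1))⁻¹) :=
            mul_le_mul_of_nonneg_left hXD (by linarith)
        _ ≤ t i₀ * ((‖t‖ ^ (s+1))⁻¹ - (‖t'‖ ^ (s+1))⁻¹) :=
            mul_le_mul_of_nonneg_right hti0 hD0
    calc (1/2) * B ^ (-(s+1)) * (1 - ρ ^ (-(s+1))) * (ℓ ^ s)⁻¹
        = (ℓ / 2) * (((B * ℓ) ^ (s+1))⁻¹ * (1 - ρ ^ (-(s+1)))) := by
          rw [hfin]; field_simp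
      _ ≤ t i₀ * ((‖t‖ ^ (s+1))⁻¹ - (‖t'‖ ^ (s+1))⁻¹) := key
      _ = (‖t‖ ^ (s+1))⁻¹ * t i₀ - (‖t'‖ ^ (s+1))⁻¹ * t i₀ := by ring

lemma volume_box {d : ℕ} (S : Fin d → Set ℝ) (hS : ∀ i, MeasurableSet (S i)) :
    volume {v : EuclideanSpace ℝ (Fin d) | ∀ i, v i ∈ S i} = ∏ i, volume (S i) := by
  have h1 : {v : EuclideanSpace ℝ (Fin d) | ∀ i, v i ∈ S i} =
      (MeasurableEquiv.toLp 2 (Fin d → ℝ)).symm ⁻¹' (Set.univ.pi S) := by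
    ext v
    simp [MeasurableEquiv.coe_toLp_symm, Set.mem_pi]
  rw [h1, (EuclideanSpace.volume_preserving_symm_measurableEquiv_toLp (Fin d)).measure_preimage
    (MeasurableSet.univ_pi hS).nullMeasurableSet, volume_pi_pi]

end Stmt12


open Stmt12 in
/-- Variance bound for the Riesz transform at a randomly shifted point: for `ν`
supported in the cube `Q` of edge `ℓ` centered at the origin, `x ∈ [5ℓ/4, 11ℓ/4]^d`,
and `v` uniform on the cube of edge `ℓ/2` centered at the origin, the random
variable `ξ = R^s_ν(x+v)` satisfies `|ξ| ≤ Cθ` and `Var ξ ≥ cθ²`, `θ = ‖ν‖/ℓ^s`. -/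
theorem stmt12 (d : ℕ) (hd : 0 < d) (s : ℝ) (hs : 0 < s) :
    ∃ C c : ℝ, 0 < C ∧ 0 < c ∧
      ∀ ℓ : ℝ, 0 < ℓ →
      ∀ ν : Measure (EuclideanSpace ℝ (Fin d)), IsFiniteMeasure ν →
        ν {y | ∀ i, |y i| ≤ ℓ / 2}ᶜ = 0 →
        ∀ x : EuclideanSpace ℝ (Fin d), (∀ i, 5 * ℓ / 4 ≤ x i ∧ x i ≤ 11 * ℓ / 4) →
        let V : Set (EuclideanSpace ℝ (Fin d)) := {v | ∀ i, |v i| ≤ ℓ / 4}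
        let Pv : Measure (EuclideanSpace ℝ (Fin d)) := (volume V)⁻¹ • volume.restrict V
        let ξ : EuclideanSpace ℝ (Fin d) → EuclideanSpace ℝ (Fin d) :=
          fun v => ∫ y, (‖x + v - y‖ ^ (s + 1))⁻¹ • (x + v - y) ∂ν
        let θ : ℝ := (ν Set.univ).toReal / ℓ ^ s
        (∀ v ∈ V, ‖ξ v‖ ≤ C * θ) ∧
          c * θ ^ 2 ≤ ∫ v, ‖ξ v - ∫ v', ξ v' ∂Pv‖ ^ 2 ∂Pv := by
  classical
  set i₀ : Fin d := ⟨0, hd⟩ with hi₀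
  set k : Fin d := ⟨min 1 (d - 1), by omega⟩ with hk
  have hik : d ≠ 1 → i₀ ≠ k := by
    intro h1 hc
    have h2 : (0 : ℕ) = min 1 (d - 1) := congrArg Fin.val hc
    omega
  obtain ⟨a, hapos, hgap⟩ := Stmt12.key_gap hd hs i₀ k hik
  refine ⟨2 ^ s, a ^ 2 / 8, Real.rpow_pos_of_pos two_pos s, by positivity, ?_⟩
  intro ℓ hℓ ν hνfin hνsupp x hx
  haveI := hνfin
  intro V Pv ξ θ
  have hls : (0:ℝ) < ℓ ^ s := Real.rpow_pos_of_pos hℓ s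
  have hθdef : θ = (ν Set.univ).toReal / ℓ ^ s := rfl
  have hθ0 : 0 ≤ θ := by rw [hθdef]; positivity
  have hQae : ∀ᵐ y ∂ν, ∀ i, |y i| ≤ ℓ / 2 := mem_ae_iff.mpr hνsupp
  have happly : ∀ (v y : EuclideanSpace ℝ (Fin d)) (i : Fin d),
      (x + v - y) i = x i + v i - y i := fun v y i => rfl
  have hcoord : ∀ v ∈ V, ∀ y : EuclideanSpace ℝ (Fin d), (∀ i, |y i| ≤ ℓ / 2) →
      ∀ i, ℓ / 2 ≤ (x + v - y) i ∧ (x + v - y) i ≤ 7 * ℓ / 2 := by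
    intro v hv y hy i
    have h1 := hx i
    have h2 := abs_le.mp (hv i)
    have h3 := abs_le.mp (hy i)
    rw [happly]
    constructor <;> linarith [h1.1, h1.2, h2.1, h2.2, h3.1, h3.2]
  have hnormlow : ∀ v ∈ V, ∀ y : EuclideanSpace ℝ (Fin d), (∀ i, |y i| ≤ ℓ / 2) →
      ℓ / 2 ≤ ‖x + v - y‖ :=
    fun v hv y hy => le_trans (hcoord v hv y hy i₀).1 (Stmt12.coord_le_norm _ i₀)
  -- measurability of the kernel
  have hker_meas : Measurable
      (fun t : EuclideanSpace ℝ (Fin d) => (‖t‖ ^ (s + 1))⁻¹ • t) := by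
    have h1 : Continuous fun t : EuclideanSpace ℝ (Fin d) => ‖t‖ ^ (s + 1) :=
      (Real.continuous_rpow_const (by linarith)).comp continuous_norm
    exact h1.measurable.inv.smul measurable_id
  have hFmeas : ∀ w : EuclideanSpace ℝ (Fin d),
      Measurable (fun y => (‖w - y‖ ^ (s + 1))⁻¹ • (w - y)) := fun w =>
    hker_meas.comp (continuous_const.sub continuous_id).measurable
  have hker_bound : ∀ t : EuclideanSpace ℝ (Fin d), ℓ / 2 ≤ ‖t‖ →
      ‖(‖t‖ ^ (s + 1))⁻¹ • t‖ ≤ 2 ^ s / ℓ ^ s := by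
    intro t ht
    have ht0 : 0 < ‖t‖ := lt_of_lt_of_le (by linarith) ht
    have heq : ‖(‖t‖ ^ (s + 1))⁻¹ • t‖ = ‖t‖ ^ (-s) := by
      rw [norm_smul, Real.norm_eq_abs, abs_of_nonneg (by positivity),
        ← Stmt12.rpow_inv_mul _ ht0]
    rw [heq]
    have h1 : ‖t‖ ^ (-s) ≤ (ℓ / 2) ^ (-s) :=
      Real.rpow_le_rpow_of_nonpos (by linarith) ht (by linarith)
    have h2 : ((ℓ / 2 : ℝ)) ^ (-s) = 2 ^ s / ℓ ^ s := by
      rw [Real.rpow_neg (by linarith), Real.div_rpow hℓ.le (by norm_num), inv_div]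
    rw [h2] at h1
    exact h1
  have hInt : ∀ v ∈ V,
      Integrable (fun y => (‖x + v - y‖ ^ (s + 1))⁻¹ • (x + v - y)) ν := by
    intro v hv
    refine Integrable.mono' (integrable_const (2 ^ s / ℓ ^ s))
      ((hFmeas (x + v)).aestronglyMeasurable) ?_
    filter_upwards [hQae] with y hy
    exact hker_bound _ (hnormlow v hv y hy)
  -- upper bound
  have hub : ∀ v ∈ V, ‖ξ v‖ ≤ 2 ^ s * θ := by
    intro v hv
    have h1 : ‖ξ v‖ ≤ ∫ y, ‖(‖x + v - y‖ ^ (s + 1))⁻¹ • (x + v - y)‖ ∂ν :=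
      norm_integral_le_integral_norm _
    have h2 : ∫ y, ‖(‖x + v - y‖ ^ (s + 1))⁻¹ • (x + v - y)‖ ∂ν ≤
        ∫ _y, (2 ^ s / ℓ ^ s : ℝ) ∂ν := by
      refine integral_mono_ae (hInt v hv).norm (integrable_const _) ?_
      filter_upwards [hQae] with y hy
      exact hker_bound _ (hnormlow v hv y hy)
    have h3 : ∫ _y, (2 ^ s / ℓ ^ s : ℝ) ∂ν = (ν Set.univ).toReal * (2 ^ s / ℓ ^ s) := by
      rw [integral_const, smul_eq_mul, measureReal_def]
    have h4 : (ν Set.univ).toReal * (2 ^ s / ℓ ^ s) = 2 ^ s * θ := by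
      rw [hθdef]; ring
    linarith [h1, h2]
  refine ⟨hub, ?_⟩
  -- variance lower bound
  set m : EuclideanSpace ℝ (Fin d) := ∫ v', ξ v' ∂Pv with hm
  set f : EuclideanSpace ℝ (Fin d) → ℝ := fun v => ξ v i₀ with hfdef
  set ψ : EuclideanSpace ℝ (Fin d) → ℝ := fun v => (f v - m i₀) ^ 2 with hψdef
  set φ : EuclideanSpace ℝ (Fin d) → ℝ := fun v => ‖ξ v - m‖ ^ 2 with hφdef
  -- projection formula
  have hproj : ∀ v ∈ V, f v = ∫ y, (‖x + v - y‖ ^ (s + 1))⁻¹ * ((x + v - y) i₀) ∂ν := by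
    intro v hv
    have h1 := (EuclideanSpace.proj (𝕜 := ℝ) i₀).integral_comp_comm (hInt v hv)
    have h2 : (fun y => (EuclideanSpace.proj (𝕜 := ℝ) i₀)
        ((‖x + v - y‖ ^ (s + 1))⁻¹ • (x + v - y)))
        = fun y => (‖x + v - y‖ ^ (s + 1))⁻¹ * ((x + v - y) i₀) := by
      funext y; rfl
    rw [h2] at h1
    exact h1.symm
  -- the shift
  set u : EuclideanSpace ℝ (Fin d) := (3 * ℓ / 8) • EuclideanSpace.single k (1:ℝ) with hu
  have hu_apply : ∀ i, u i = if i = k then 3 * ℓ / 8 else 0 := by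
    intro i
    have : u i = (3 * ℓ / 8) * (EuclideanSpace.single k (1:ℝ)) i := rfl
    rw [this, EuclideanSpace.single_apply]
    split <;> ring
  have hTmem : ∀ v ∈ V, v k ≤ -ℓ / 8 → v + u ∈ V := by
    intro v hv hvk i
    have h2 := abs_le.mp (hv i)
    have h3 : (v + u) i = v i + u i := rfl
    rw [h3, hu_apply]
    by_cases hik' : i = k
    · rw [if_pos hik']
      subst hik'
      rw [abs_le]
      constructor <;> linarith [h2.1, h2.2]
    · rw [if_neg hik']
      rw [add_zero]
      exact hv i
  -- the gap at the level of f
  have hgapf : ∀ v ∈ V, v k ≤ -ℓ / 8 → a * θ ≤ f v - f (v + u) := by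
    intro v hv hvk
    have hvu := hTmem v hv hvk
    have hIa : Integrable (fun y => (‖x + v - y‖ ^ (s + 1))⁻¹ * ((x + v - y) i₀)) ν := by
      have h1 := (EuclideanSpace.proj (𝕜 := ℝ) i₀).integrable_comp (hInt v hv)
      exact h1
    have hIb : Integrable
        (fun y => (‖x + (v + u) - y‖ ^ (s + 1))⁻¹ * ((x + (v + u) - y) i₀)) ν := by
      have h1 := (EuclideanSpace.proj (𝕜 := ℝ) i₀).integrable_comp (hInt _ hvu)
      exact h1
    rw [hproj v hv, hproj _ hvu, ← integral_sub hIa hIb]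
    have hae : ∀ᵐ y ∂ν, a / ℓ ^ s ≤
        (‖x + v - y‖ ^ (s + 1))⁻¹ * ((x + v - y) i₀)
        - (‖x + (v + u) - y‖ ^ (s + 1))⁻¹ * ((x + (v + u) - y) i₀) := by
      filter_upwards [hQae] with y hy
      have h1 := hcoord v hv y hy
      have h2 := hcoord _ hvu y hy
      have ht' : ∀ i, (x + (v + u) - y) i = (x + v - y) i +
          if i = k then 3 * ℓ / 8 else 0 := by
        intro i
        have e1 : (x + (v + u) - y) i = x i + (v i + u i) - y i := rfl
        rw [e1, hu_apply, happly]
        split <;> ring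
      exact hgap ℓ hℓ (x + v - y) (x + (v + u) - y) ht' h1 h2
    have h5 : a * θ = ∫ _y, (a / ℓ ^ s : ℝ) ∂ν := by
      rw [integral_const, smul_eq_mul, hθdef, measureReal_def]; ring
    rw [h5]
    exact integral_mono_ae (integrable_const _) (hIa.sub hIb) hae
  -- global measurability
  have hξsm : StronglyMeasurable ξ := by
    have hj : Measurable (fun p : EuclideanSpace ℝ (Fin d) × EuclideanSpace ℝ (Fin d) =>
        (‖x + p.1 - p.2‖ ^ (s + 1))⁻¹ • (x + p.1 - p.2)) :=
      hker_meas.comp ((continuous_const.add continuous_fst).sub continuous_snd).measurable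
    exact hj.stronglyMeasurable.integral_prod_right'
  have hfm : Measurable f :=
    ((EuclideanSpace.proj (𝕜 := ℝ) i₀).continuous.measurable).comp hξsm.measurable
  have hVmeas : MeasurableSet V := by
    have h1 : V = ⋂ i, (fun v : EuclideanSpace ℝ (Fin d) => v i) ⁻¹'
        (Icc (-(ℓ / 4)) (ℓ / 4)) := by
      ext v
      simp only [Set.mem_iInter, Set.mem_preimage, Set.mem_Icc]
      constructor
      · intro h i; exact abs_le.mp (h i)
      · intro h i; exact abs_le.mpr (h i)
    rw [h1]
    exact MeasurableSet.iInter fun i =>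
      (EuclideanSpace.proj (𝕜 := ℝ) i).continuous.measurable measurableSet_Icc
  set A : Set (EuclideanSpace ℝ (Fin d)) :=
    {v | (∀ i, |v i| ≤ ℓ / 4) ∧ v k ≤ -ℓ / 8} with hA
  have hAsubV : A ⊆ V := fun v hv => hv.1
  have hAmeas : MeasurableSet A := by
    have h1 : A = V ∩ ((fun v : EuclideanSpace ℝ (Fin d) => v k) ⁻¹' Iic (-ℓ / 8)) := rfl
    rw [h1]
    exact hVmeas.inter ((EuclideanSpace.proj (𝕜 := ℝ) k).continuous.measurable measurableSet_Iic)
  have hemb : MeasurableEmbedding (fun v : EuclideanSpace ℝ (Fin d) => v + u) :=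
    (MeasurableEquiv.addRight u).measurableEmbedding
  set A' : Set (EuclideanSpace ℝ (Fin d)) := (fun v => v + u) '' A with hA'
  have hA'meas : MeasurableSet A' := hemb.measurableSet_image' hAmeas
  have hA'subV : A' ⊆ V := by
    rintro w ⟨v, hv, rfl⟩
    exact hTmem v hv.1 hv.2
  have hdisj : Disjoint A A' := by
    rw [Set.disjoint_left]
    rintro w hwA ⟨v, hv, rfl⟩
    have h2 : u k = 3 * ℓ / 8 := by rw [hu_apply, if_pos rfl]
    have h3 := (abs_le.mp (hv.1 k)).1
    have h4 : v k + u k ≤ -ℓ / 8 := hwA.2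
    rw [h2] at h4
    linarith
  -- pointwise comparison ψ ≤ φ
  have hψφ : ∀ v, ψ v ≤ φ v := by
    intro v
    have h1 : |(ξ v - m) i₀| ≤ ‖ξ v - m‖ := Stmt12.abs_coord_le_norm _ i₀
    have h2 : (ξ v - m) i₀ = f v - m i₀ := rfl
    calc ψ v = |(ξ v - m) i₀| ^ 2 := by rw [hψdef]; rw [h2, sq_abs]
      _ ≤ ‖ξ v - m‖ ^ 2 := pow_le_pow_left₀ (abs_nonneg _) h1 2
      _ = φ v := rfl
  -- bounds
  set KB : ℝ := (2 ^ s * θ + ‖m‖) ^ 2 with hKB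
  have hKB0 : 0 ≤ KB := sq_nonneg _
  have hφb : ∀ v ∈ V, φ v ≤ KB := by
    intro v hv
    have h1 : ‖ξ v - m‖ ≤ 2 ^ s * θ + ‖m‖ :=
      le_trans (norm_sub_le _ _) (add_le_add_left (hub v hv) _)
    exact pow_le_pow_left₀ (norm_nonneg _) h1 2
  have hψb : ∀ v ∈ V, ψ v ≤ KB := fun v hv => le_trans (hψφ v) (hφb v hv)
  -- volume computations
  have hIccMeas : ∀ p q : ℝ, MeasurableSet (Icc p q) := fun p q => measurableSet_Icc
  have hvolV : volume V = (ENNReal.ofReal (ℓ / 2)) ^ d := by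
    have h1 : V = {v : EuclideanSpace ℝ (Fin d) | ∀ i,
        v i ∈ Icc (-(ℓ / 4)) (ℓ / 4)} := by
      ext v
      simp only [mem_setOf_eq, Set.mem_Icc]
      constructor
      · intro h i; exact abs_le.mp (h i)
      · intro h i; exact abs_le.mpr (h i)
    rw [h1, Stmt12.volume_box _ (fun i => measurableSet_Icc)]
    rw [Finset.prod_const, Finset.card_univ, Fintype.card_fin]
    congr 1
    rw [Real.volume_Icc]
    congr 1
    ring
  have hvolA : volume A = ENNReal.ofReal (ℓ / 8) * (ENNReal.ofReal (ℓ / 2)) ^ (d - 1) := by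
    have h1 : A = {v : EuclideanSpace ℝ (Fin d) | ∀ i,
        v i ∈ (if i = k then Icc (-(ℓ / 4)) (-ℓ / 8) else Icc (-(ℓ / 4)) (ℓ / 4))} := by
      ext v
      simp only [hA, mem_setOf_eq]
      constructor
      · rintro ⟨h1, h2⟩ i
        by_cases hik' : i = k
        · rw [if_pos hik']
          refine Set.mem_Icc.mpr ⟨(abs_le.mp (h1 i)).1, ?_⟩
          rw [hik']
          exact h2
        · rw [if_neg hik']
          exact Set.mem_Icc.mpr (abs_le.mp (h1 i))
      · intro h
        constructor
        · intro i
          have := h i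
          by_cases hik' : i = k
          · rw [if_pos hik'] at this
            have h2 := Set.mem_Icc.mp this
            rw [abs_le]
            constructor <;> linarith [h2.1, h2.2]
          · rw [if_neg hik'] at this
            exact abs_le.mpr (Set.mem_Icc.mp this)
        · have := h k
          rw [if_pos rfl] at this
          exact (Set.mem_Icc.mp this).2
    rw [h1, Stmt12.volume_box _ (fun i => by split <;> exact measurableSet_Icc)]
    rw [← Finset.mul_prod_erase Finset.univ _ (Finset.mem_univ k)]
    rw [if_pos rfl]
    have h2 : ∀ i ∈ Finset.univ.erase k,
        volume (if i = k then Icc (-(ℓ / 4)) (-ℓ / 8) else Icc (-(ℓ / 4)) (ℓ / 4))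
        = ENNReal.ofReal (ℓ / 2) := by
      intro i hi
      rw [if_neg (Finset.ne_of_mem_erase hi), Real.volume_Icc]
      congr 1
      ring
    rw [Finset.prod_congr rfl h2, Finset.prod_const, Finset.card_erase_of_mem (Finset.mem_univ k),
      Finset.card_univ, Fintype.card_fin]
    congr 1
    rw [Real.volume_Icc]
    congr 1
    ring
  have hofR : (0:ENNReal) < ENNReal.ofReal (ℓ / 2) := ENNReal.ofReal_pos.mpr (by linarith)
  have hvolVne0 : volume V ≠ 0 := by
    rw [hvolV]
    exact pow_ne_zero d hofR.ne'
  have hvolVfin : volume V ≠ ⊤ := by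
    rw [hvolV]
    exact ENNReal.pow_ne_top ENNReal.ofReal_ne_top
  have hvolAfin : volume A ≠ ⊤ := by
    rw [hvolA]
    exact ENNReal.mul_ne_top ENNReal.ofReal_ne_top (ENNReal.pow_ne_top ENNReal.ofReal_ne_top)
  -- integrability
  have hφm : Measurable φ := ((hξsm.measurable.sub measurable_const).norm.pow_const 2)
  have hψm : Measurable ψ := ((hfm.sub measurable_const).pow_const 2)
  have hψTm : Measurable (fun v => ψ (v + u)) := hψm.comp (measurable_add_const u)
  have hconstIntV : IntegrableOn (fun _ => KB) V volume :=
    (integrableOn_const_iff).mpr (Or.inr (lt_of_le_of_ne le_top hvolVfin))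
  have hφIntV : IntegrableOn φ V volume := by
    refine Integrable.mono' hconstIntV hφm.aestronglyMeasurable ?_
    rw [ae_restrict_iff' hVmeas]
    refine ae_of_all _ (fun v hv => ?_)
    rw [Real.norm_eq_abs, abs_of_nonneg (by rw [hφdef]; positivity)]
    exact hφb v hv
  have hψIntV : IntegrableOn ψ V volume := by
    refine Integrable.mono' hconstIntV hψm.aestronglyMeasurable ?_
    rw [ae_restrict_iff' hVmeas]
    refine ae_of_all _ (fun v hv => ?_)
    rw [Real.norm_eq_abs, abs_of_nonneg (by rw [hψdef]; positivity)]
    exact hψb v hv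
  have hψIntA : IntegrableOn ψ A volume := hψIntV.mono_set hAsubV
  have hψIntA' : IntegrableOn ψ A' volume := hψIntV.mono_set hA'subV
  have hconstIntA : IntegrableOn (fun _ => KB) A volume :=
    (integrableOn_const_iff).mpr (Or.inr (lt_of_le_of_ne le_top hvolAfin))
  have hψTIntA : IntegrableOn (fun v => ψ (v + u)) A volume := by
    refine Integrable.mono' hconstIntA hψTm.aestronglyMeasurable ?_
    rw [ae_restrict_iff' hAmeas]
    refine ae_of_all _ (fun v hv => ?_)
    rw [Real.norm_eq_abs, abs_of_nonneg (by rw [hψdef]; positivity)]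
    exact hψb _ (hTmem v hv.1 hv.2)
  -- the chain of inequalities
  have hPvint : ∫ v, φ v ∂Pv = ((volume V)⁻¹).toReal * ∫ v in V, φ v ∂volume := by
    have h1 : Pv = (volume V)⁻¹ • volume.restrict V := rfl
    rw [h1, integral_smul_measure, smul_eq_mul]
  have step1 : ∫ v in V, ψ v ∂volume ≤ ∫ v in V, φ v ∂volume :=
    integral_mono hψIntV hφIntV hψφ
  have step2 : ∫ v in A ∪ A', ψ v ∂volume ≤ ∫ v in V, ψ v ∂volume := by
    refine setIntegral_mono_set hψIntV ?_ (HasSubset.Subset.eventuallyLE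
      (Set.union_subset hAsubV hA'subV))
    refine ae_of_all _ (fun v => ?_)
    rw [hψdef]
    positivity
  have step3 : ∫ v in A ∪ A', ψ v ∂volume
      = (∫ v in A, ψ v ∂volume) + ∫ v in A', ψ v ∂volume :=
    setIntegral_union hdisj hA'meas hψIntA hψIntA'
  have step4 : ∫ v in A', ψ v ∂volume = ∫ v in A, ψ (v + u) ∂volume :=
    (measurePreserving_add_right volume u).setIntegral_image_emb hemb ψ A
  have step5 : (∫ v in A, ψ v ∂volume) + ∫ v in A, ψ (v + u) ∂volume
      = ∫ v in A, (ψ v + ψ (v + u)) ∂volume := (integral_add hψIntA hψTIntA).symm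
  have step6 : (volume A).toReal * (a ^ 2 * θ ^ 2 / 2) ≤
      ∫ v in A, (ψ v + ψ (v + u)) ∂volume := by
    have hpt : ∀ v ∈ A, a ^ 2 * θ ^ 2 / 2 ≤ ψ v + ψ (v + u) := by
      intro v hv
      have hgap' := hgapf v hv.1 hv.2
      have haθ : 0 ≤ a * θ := mul_nonneg hapos.le hθ0
      have hψv : ψ v = (f v - m i₀) ^ 2 := rfl
      have hψvu : ψ (v + u) = (f (v + u) - m i₀) ^ 2 := rfl
      rw [hψv, hψvu]
      nlinarith [sq_nonneg (f v - m i₀ + (f (v + u) - m i₀)), hgap', haθ]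
    have h1 : ∫ _v in A, (a ^ 2 * θ ^ 2 / 2 : ℝ) ∂volume
        = (volume A).toReal * (a ^ 2 * θ ^ 2 / 2) := by
      rw [setIntegral_const, smul_eq_mul, measureReal_def]
    rw [← h1]
    exact integral_mono_ae ((integrableOn_const_iff).mpr
      (Or.inr (lt_of_le_of_ne le_top hvolAfin))) (hψIntA.add hψTIntA)
      ((ae_restrict_iff' hAmeas).mpr (ae_of_all _ hpt))
  -- ratio of volumes
  have hratio : ((volume V)⁻¹).toReal * (volume A).toReal = 4⁻¹ := by
    rw [ENNReal.toReal_inv, hvolV, hvolA]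
    rw [ENNReal.toReal_pow, ENNReal.toReal_mul, ENNReal.toReal_pow,
      ENNReal.toReal_ofReal (by linarith), ENNReal.toReal_ofReal (by linarith)]
    have hd' : d = (d - 1) + 1 := by omega
    rw [hd', pow_succ]
    have h2 : ((ℓ / 2 : ℝ)) ^ (d - 1 + 1 - 1) = (ℓ / 2) ^ (d - 1) := by norm_num
    rw [h2]
    have hpow : (0:ℝ) < (ℓ / 2) ^ (d - 1) := by positivity
    field_simp
    ring
  -- put everything together
  have htr : 0 ≤ ((volume V)⁻¹).toReal := ENNReal.toReal_nonneg
  have hfinal : ((volume V)⁻¹).toReal * ((volume A).toReal * (a ^ 2 * θ ^ 2 / 2))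
      ≤ ∫ v, φ v ∂Pv := by
    rw [hPvint]
    have h1 : (volume A).toReal * (a ^ 2 * θ ^ 2 / 2) ≤ ∫ v in V, φ v ∂volume := by
      calc (volume A).toReal * (a ^ 2 * θ ^ 2 / 2)
          ≤ ∫ v in A, (ψ v + ψ (v + u)) ∂volume := step6
        _ = (∫ v in A, ψ v ∂volume) + ∫ v in A', ψ v ∂volume := by rw [← step5, step4]
        _ = ∫ v in A ∪ A', ψ v ∂volume := step3.symm
        _ ≤ ∫ v in V, ψ v ∂volume := step2
        _ ≤ ∫ v in V, φ v ∂volume := step1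
    exact mul_le_mul_of_nonneg_left h1 htr
  have hgoal : a ^ 2 / 8 * θ ^ 2 ≤ ∫ v, φ v ∂Pv := by
    calc a ^ 2 / 8 * θ ^ 2
        = ((volume V)⁻¹).toReal * (volume A).toReal * (a ^ 2 * θ ^ 2 / 2) := by
          rw [hratio]; ring
      _ = ((volume V)⁻¹).toReal * ((volume A).toReal * (a ^ 2 * θ ^ 2 / 2)) := by ring
      _ ≤ ∫ v, φ v ∂Pv := hfinal
  exact hgoal
end
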